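/- arXiv:2211.02338 — 6 statements merged into one kernel-verified Lean document; each statement's English description precedes it below -/
import Mathlib

section
/- For every odd integer n ≥ 1, the Ramsey number R(K_{1,n}, F_n) equals 3n; that is, every red-blue edge-coloring of the complete graph on 3n vertices contains a red copy of the star K_{1,n} or a blue copy of the fan F_n, and 3n is the smallest integer with this property. -/
/-- The fan `F n = K₁ + n·K₂`: vertex 0 is the center, and vertices
`2k+1, 2k+2` form the `k`-th edge of the matching, for `k < n`. -/
def fanGraph (n : ℕ) : SimpleGraph (Fin (2 * n + 1)) where
  Adj v w := v ≠ w ∧ (v = 0 ∨ w = 0 ∨ (v.val - 1) / 2 = (w.val - 1) / 2)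
  symm := by
    constructor
    intro v w h
    obtain ⟨h1, h2⟩ := h
    refine ⟨h1.symm, ?_⟩
    tauto
  loopless := by constructor; intro v h; exact h.1 rfl

/-- `ContainsCopy G H` : `G` contains a subgraph isomorphic to `H`
(an injective map of vertices sending edges of `H` to edges of `G`). -/
def ContainsCopy {α β : Type*} (G : SimpleGraph α) (H : SimpleGraph β) : Prop :=
  ∃ f : β ↪ α, ∀ ⦃a b : β⦄, H.Adj a b → G.Adj (f a) (f b)

/-- The star `K_{1,n}`: vertex 0 is the center. -/
def starGraph (n : ℕ) : SimpleGraph (Fin (n + 1)) where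
  Adj v w := v ≠ w ∧ (v = 0 ∨ w = 0)
  symm := by constructor; intro v w h; exact ⟨h.1.symm, h.2.symm⟩
  loopless := by constructor; intro v h; exact h.1 rfl



lemma fin_eq_succ {k : ℕ} (a : Fin (k + 1)) (ha : a ≠ 0) : ∃ j : Fin k, a = j.succ := by
  have hv : a.val ≠ 0 := fun h => ha (Fin.ext h)
  have hlt := a.isLt
  exact ⟨⟨a.val - 1, by omega⟩, Fin.ext (by simp [Fin.val_succ]; omega)⟩

lemma cons_inj {V : Type*} {k : ℕ} (v : V) (q : Fin k → V)
    (hq : Function.Injective q) (hv : ∀ j, q j ≠ v) :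
    Function.Injective (Fin.cases v q : Fin (k + 1) → V) := by
  intro a b h
  cases a using Fin.cases with
  | zero =>
    cases b using Fin.cases with
    | zero => rfl
    | succ j =>
      simp only [Fin.cases_zero, Fin.cases_succ] at h
      exact absurd h.symm (hv j)
  | succ i =>
    cases b using Fin.cases with
    | zero =>
      simp only [Fin.cases_succ, Fin.cases_zero] at h
      exact absurd h (hv i)
    | succ j =>
      simp only [Fin.cases_succ] at h
      exact congrArg Fin.succ (hq h)

def pairSeq {V : Type*} {n : ℕ} (p : Fin n → V × V) (i : Fin (2 * n)) : V :=
  if _h : i.val % 2 = 0 then (p ⟨i.val / 2, by have := i.isLt; omega⟩).1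
  else (p ⟨i.val / 2, by have := i.isLt; omega⟩).2

lemma pairSeq_even {V : Type*} {n : ℕ} (p : Fin n → V × V) (i : Fin (2 * n))
    (h : i.val % 2 = 0) (hv : i.val / 2 < n) :
    pairSeq p i = (p ⟨i.val / 2, hv⟩).1 := by
  unfold pairSeq; rw [dif_pos h]

lemma pairSeq_odd {V : Type*} {n : ℕ} (p : Fin n → V × V) (i : Fin (2 * n))
    (h : ¬ i.val % 2 = 0) (hv : i.val / 2 < n) :
    pairSeq p i = (p ⟨i.val / 2, hv⟩).2 := by
  unfold pairSeq; rw [dif_neg h]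

lemma pairSeq_inj {V : Type*} {n : ℕ} (p : Fin n → V × V)
    (hne : ∀ j, (p j).1 ≠ (p j).2)
    (hdisj : ∀ j j', j ≠ j' → (p j).1 ≠ (p j').1 ∧ (p j).1 ≠ (p j').2 ∧
      (p j).2 ≠ (p j').1 ∧ (p j).2 ≠ (p j').2) :
    Function.Injective (pairSeq p) := by
  intro i i' h
  have hpi : i.val / 2 < n := by have := i.isLt; omega
  have hpi' : i'.val / 2 < n := by have := i'.isLt; omega
  by_cases h1 : i.val % 2 = 0 <;> by_cases h2 : i'.val % 2 = 0
  · rw [pairSeq_even p i h1 hpi, pairSeq_even p i' h2 hpi'] at h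
    by_cases hk : (⟨i.val / 2, hpi⟩ : Fin n) = ⟨i'.val / 2, hpi'⟩
    · have hkk : i.val / 2 = i'.val / 2 := congrArg Fin.val hk
      exact Fin.ext (by omega)
    · exact absurd h (hdisj _ _ hk).1
  · rw [pairSeq_even p i h1 hpi, pairSeq_odd p i' h2 hpi'] at h
    by_cases hk : (⟨i.val / 2, hpi⟩ : Fin n) = ⟨i'.val / 2, hpi'⟩
    · exfalso; rw [hk] at h; exact hne _ h
    · exact absurd h (hdisj _ _ hk).2.1
  · rw [pairSeq_odd p i h1 hpi, pairSeq_even p i' h2 hpi'] at h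
    by_cases hk : (⟨i.val / 2, hpi⟩ : Fin n) = ⟨i'.val / 2, hpi'⟩
    · exfalso; rw [hk] at h; exact hne _ h.symm
    · exact absurd h (hdisj _ _ hk).2.2.1
  · rw [pairSeq_odd p i h1 hpi, pairSeq_odd p i' h2 hpi'] at h
    by_cases hk : (⟨i.val / 2, hpi⟩ : Fin n) = ⟨i'.val / 2, hpi'⟩
    · have hkk : i.val / 2 = i'.val / 2 := congrArg Fin.val hk
      exact Fin.ext (by omega)
    · exact absurd h (hdisj _ _ hk).2.2.2


open Finset

variable {V : Type*} [DecidableEq V]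

/-- A "good" partial matching: a finset of pairs, each a blue edge inside `T`,
with all components pairwise distinct. -/
def GoodM (G : SimpleGraph V) (T : Finset V) (M : Finset (V × V)) : Prop :=
  (∀ e ∈ M, e.1 ∈ T ∧ e.2 ∈ T ∧ G.Adj e.1 e.2) ∧
  (∀ e ∈ M, ∀ e' ∈ M,
    (e.1 = e'.1 ∨ e.1 = e'.2 ∨ e.2 = e'.1 ∨ e.2 = e'.2) → e = e')

lemma goodM_disj {G : SimpleGraph V} {T : Finset V} {M : Finset (V × V)}
    (hM : GoodM G T M) :
    ∀ e ∈ M, ∀ e' ∈ M, e ≠ e' →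
      Disjoint ({e.1, e.2} : Finset V) {e'.1, e'.2} := by
  intro e he e' he' hne
  rw [Finset.disjoint_left]
  intro a ha ha'
  simp only [Finset.mem_insert, Finset.mem_singleton] at ha ha'
  exact hne (hM.2 e he e' he' (by
      rcases ha with h|h <;> rcases ha' with h'|h' <;> rw [h] at h' <;> tauto))

lemma goodM_support_card {G : SimpleGraph V} {T : Finset V} {M : Finset (V × V)}
    (hM : GoodM G T M) :
    (M.biUnion (fun e => {e.1, e.2})).card = 2 * M.card := by
  rw [Finset.card_biUnion]
  · rw [Finset.sum_congr rfl (g := fun _ => 2), Finset.sum_const, smul_eq_mul, mul_comm]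
    intro e he
    have hne : e.1 ≠ e.2 := (hM.1 e he).2.2.ne
    rw [Finset.card_insert_of_notMem (by simp [hne]), Finset.card_singleton]
  · exact goodM_disj hM

lemma goodM_augment {n : ℕ} (hn : 1 ≤ n) (G : SimpleGraph V) [DecidableRel G.Adj]
    (T : Finset V) (hT : 2 * n ≤ T.card)
    (hdeg : ∀ u ∈ T, (T.filter (fun y => y ≠ u ∧ ¬ G.Adj u y)).card ≤ n - 1)
    (M : Finset (V × V)) (hM : GoodM G T M) (hs : M.card < n) :
    ∃ M', GoodM G T M' ∧ M'.card = M.card + 1 := by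
  classical
  set VM := M.biUnion (fun e => {e.1, e.2}) with hVMdef
  have hVMmem : ∀ x, x ∈ VM ↔ ∃ e ∈ M, x = e.1 ∨ x = e.2 := by
    intro x
    simp [hVMdef, Finset.mem_biUnion, eq_comm]
  have hVMT : VM ⊆ T := by
    intro x hx
    rw [hVMmem] at hx
    obtain ⟨e, he, h⟩ := hx
    rcases h with h|h <;> subst h
    exacts [(hM.1 e he).1, (hM.1 e he).2.1]
  have hVMcard : VM.card = 2 * M.card := goodM_support_card hM
  set U := T \ VM with hUdef
  have hUcard : U.card = T.card - 2 * M.card := by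
    rw [hUdef, Finset.card_sdiff_of_subset hVMT, hVMcard]
  have hU2 : 2 ≤ U.card := by omega
  have hUVM : ∀ x ∈ U, x ∉ VM := fun x hx => (Finset.mem_sdiff.mp hx).2
  have hUT : U ⊆ T := Finset.sdiff_subset
  have aux : ∀ u ∈ U, ∀ w ∈ U, u ≠ w → ∀ e ∈ M, G.Adj u e.1 → G.Adj w e.2 →
      ∃ M', GoodM G T M' ∧ M'.card = M.card + 1 := by
    intro u hu w hw huw e he hu1 hw2
    have hu_not : u ∉ VM := hUVM u hu
    have hw_not : w ∉ VM := hUVM w hw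
    have he1 : e.1 ∈ VM := (hVMmem _).2 ⟨e, he, Or.inl rfl⟩
    have he2 : e.2 ∈ VM := (hVMmem _).2 ⟨e, he, Or.inr rfl⟩
    have h12 : e.1 ≠ e.2 := (hM.1 e he).2.2.ne
    have hue1' : u ≠ e.1 := fun h => hu_not (h ▸ he1)
    have hue2 : u ≠ e.2 := fun h => hu_not (h ▸ he2)
    have hwe1 : w ≠ e.1 := fun h => hw_not (h ▸ he1)
    have hwe2' : w ≠ e.2 := fun h => hw_not (h ▸ he2)
    have hcompM : ∀ f ∈ M.erase e, u ≠ f.1 ∧ u ≠ f.2 ∧ w ≠ f.1 ∧ w ≠ f.2 ∧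
        e.1 ≠ f.1 ∧ e.1 ≠ f.2 ∧ e.2 ≠ f.1 ∧ e.2 ≠ f.2 := by
      intro f hf
      have hfM := Finset.mem_of_mem_erase hf
      have hfe : e ≠ f := (Finset.ne_of_mem_erase hf).symm
      have hf1 : f.1 ∈ VM := (hVMmem _).2 ⟨f, hfM, Or.inl rfl⟩
      have hf2 : f.2 ∈ VM := (hVMmem _).2 ⟨f, hfM, Or.inr rfl⟩
      exact ⟨fun h => hu_not (h ▸ hf1), fun h => hu_not (h ▸ hf2),
        fun h => hw_not (h ▸ hf1), fun h => hw_not (h ▸ hf2),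
        fun h => hfe (hM.2 e he f hfM (by tauto)),
        fun h => hfe (hM.2 e he f hfM (by tauto)),
        fun h => hfe (hM.2 e he f hfM (by tauto)),
        fun h => hfe (hM.2 e he f hfM (by tauto))⟩
    have hwe2m : (w, e.2) ∉ M.erase e := fun h =>
      hw_not ((hVMmem w).2 ⟨(w, e.2), Finset.mem_of_mem_erase h, Or.inl rfl⟩)
    have hue1m : (u, e.1) ∉ insert (w, e.2) (M.erase e) := by
      simp only [Finset.mem_insert]
      rintro (h | h)
      · exact huw (congrArg Prod.fst h)
      · exact hu_not ((hVMmem u).2 ⟨(u, e.1), Finset.mem_of_mem_erase h, Or.inl rfl⟩)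
    refine ⟨insert (u, e.1) (insert (w, e.2) (M.erase e)), ⟨?_, ?_⟩, ?_⟩
    · intro f hf
      simp only [Finset.mem_insert] at hf
      rcases hf with rfl | rfl | hf
      · exact ⟨hUT hu, hVMT he1, hu1⟩
      · exact ⟨hUT hw, hVMT he2, hw2⟩
      · exact hM.1 f (Finset.mem_of_mem_erase hf)
    · intro f hf f' hf' hcomp
      simp only [Finset.mem_insert] at hf hf'
      rcases hf with rfl | rfl | hf
      · rcases hf' with rfl | rfl | hf'
        · rfl
        · exfalso
          rcases hcomp with h|h|h|h
          exacts [huw h, hue2 h, hwe1 h.symm, h12 h]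
        · exfalso
          obtain ⟨a1, a2, _, _, b1, b2, _, _⟩ := hcompM f' hf'
          rcases hcomp with h|h|h|h
          exacts [a1 h, a2 h, b1 h, b2 h]
      · rcases hf' with rfl | rfl | hf'
        · exfalso
          rcases hcomp with h|h|h|h
          exacts [huw h.symm, hwe1 h, hue2 h.symm, h12 h.symm]
        · rfl
        · exfalso
          obtain ⟨_, _, a3, a4, _, _, c1, c2⟩ := hcompM f' hf'
          rcases hcomp with h|h|h|h
          exacts [a3 h, a4 h, c1 h, c2 h]
      · rcases hf' with rfl | rfl | hf'
        · exfalso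
          obtain ⟨a1, a2, _, _, b1, b2, _, _⟩ := hcompM f hf
          rcases hcomp with h|h|h|h
          exacts [a1 h.symm, b1 h.symm, a2 h.symm, b2 h.symm]
        · exfalso
          obtain ⟨_, _, a3, a4, _, _, c1, c2⟩ := hcompM f hf
          rcases hcomp with h|h|h|h
          exacts [a3 h.symm, c1 h.symm, a4 h.symm, c2 h.symm]
        · exact hM.2 f (Finset.mem_of_mem_erase hf) f' (Finset.mem_of_mem_erase hf') hcomp
    · rw [Finset.card_insert_of_notMem hue1m, Finset.card_insert_of_notMem hwe2m,
        Finset.card_erase_of_mem he]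
      have : 1 ≤ M.card := Finset.card_pos.mpr ⟨e, he⟩
      omega
  by_cases hA : ∃ a ∈ U, ∃ b ∈ U, G.Adj a b
  · obtain ⟨a, ha, b, hb, hab⟩ := hA
    have hanot : a ∉ VM := hUVM a ha
    have hbnot : b ∉ VM := hUVM b hb
    have hnotmem : (a, b) ∉ M := fun h => hanot ((hVMmem a).2 ⟨_, h, Or.inl rfl⟩)
    refine ⟨insert (a, b) M, ⟨?_, ?_⟩, by rw [Finset.card_insert_of_notMem hnotmem]⟩
    · intro f hf
      rcases Finset.mem_insert.mp hf with rfl | hf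
      · exact ⟨hUT ha, hUT hb, hab⟩
      · exact hM.1 f hf
    · intro f hf f' hf' hcomp
      rcases Finset.mem_insert.mp hf with rfl | hf <;>
        rcases Finset.mem_insert.mp hf' with rfl | hf'
      · rfl
      · exfalso
        have hf1 : f'.1 ∈ VM := (hVMmem _).2 ⟨f', hf', Or.inl rfl⟩
        have hf2 : f'.2 ∈ VM := (hVMmem _).2 ⟨f', hf', Or.inr rfl⟩
        rcases hcomp with h|h|h|h
        · exact hanot (by rw [show a = f'.1 from h]; exact hf1)
        · exact hanot (by rw [show a = f'.2 from h]; exact hf2)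
        · exact hbnot (by rw [show b = f'.1 from h]; exact hf1)
        · exact hbnot (by rw [show b = f'.2 from h]; exact hf2)
      · exfalso
        have hf1 : f.1 ∈ VM := (hVMmem _).2 ⟨f, hf, Or.inl rfl⟩
        have hf2 : f.2 ∈ VM := (hVMmem _).2 ⟨f, hf, Or.inr rfl⟩
        rcases hcomp with h|h|h|h
        · exact hanot (by rw [show a = f.1 from h.symm]; exact hf1)
        · exact hbnot (by rw [show b = f.1 from h.symm]; exact hf1)
        · exact hanot (by rw [show a = f.2 from h.symm]; exact hf2)
        · exact hbnot (by rw [show b = f.2 from h.symm]; exact hf2)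
      · exact hM.2 f hf f' hf' hcomp
  · push_neg at hA
    obtain ⟨u, hu, w, hw, huw⟩ := Finset.one_lt_card.mp hU2
    have hkey : ∀ x ∈ U, 2 * M.card + U.card ≤
        (VM.filter (fun y => G.Adj x y)).card + n := by
      intro x hx
      have hxT := hUT hx
      have hsplit := Finset.card_filter_add_card_filter_not
        (s := VM) (p := fun y => G.Adj x y)
      have hsub : (U.erase x) ∪ (VM.filter (fun y => ¬ G.Adj x y)) ⊆
          T.filter (fun y => y ≠ x ∧ ¬ G.Adj x y) := by
        intro y hy
        rcases Finset.mem_union.mp hy with hy | hy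
        · have hyU := Finset.mem_of_mem_erase hy
          refine Finset.mem_filter.mpr ⟨hUT hyU, Finset.ne_of_mem_erase hy, ?_⟩
          intro hadj
          exact hA x hx y hyU hadj
        · obtain ⟨hyVM, hyadj⟩ := Finset.mem_filter.mp hy
          exact Finset.mem_filter.mpr ⟨hVMT hyVM,
            fun h => (hUVM x hx) (h ▸ hyVM), hyadj⟩
      have hdisj : Disjoint (U.erase x) (VM.filter (fun y => ¬ G.Adj x y)) := by
        rw [Finset.disjoint_left]
        intro y hy hy'
        exact hUVM y (Finset.mem_of_mem_erase hy) (Finset.mem_filter.mp hy').1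
      have hc := Finset.card_le_card hsub
      rw [Finset.card_union_of_disjoint hdisj, Finset.card_erase_of_mem hx] at hc
      have hD := hdeg x hxT
      omega
    have hsum : ∀ x ∈ U, (VM.filter (fun y => G.Adj x y)).card =
        ∑ e ∈ M, (({e.1, e.2} : Finset V).filter (fun y => G.Adj x y)).card := by
      intro x hx
      rw [hVMdef, Finset.filter_biUnion, Finset.card_biUnion]
      intro e he e' he' hne
      exact Finset.disjoint_filter_filter (goodM_disj hM e he e' he' hne)
    have hge : 2 * n ≤ ∑ e ∈ M,
        ((({e.1, e.2} : Finset V).filter (fun y => G.Adj u y)).card +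
         (({e.1, e.2} : Finset V).filter (fun y => G.Adj w y)).card) := by
      rw [Finset.sum_add_distrib, ← hsum u hu, ← hsum w hw]
      have h1 := hkey u hu
      have h2 := hkey w hw
      omega
    have hex : ∃ e ∈ M, 3 ≤
        (({e.1, e.2} : Finset V).filter (fun y => G.Adj u y)).card +
        (({e.1, e.2} : Finset V).filter (fun y => G.Adj w y)).card := by
      by_contra hc
      push_neg at hc
      have hle : ∑ e ∈ M,
          ((({e.1, e.2} : Finset V).filter (fun y => G.Adj u y)).card +
           (({e.1, e.2} : Finset V).filter (fun y => G.Adj w y)).card) ≤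
          ∑ _e ∈ M, 2 :=
        Finset.sum_le_sum (fun e he => by have := hc e he; omega)
      rw [Finset.sum_const, smul_eq_mul] at hle
      omega
    obtain ⟨e, he, hce⟩ := hex
    have h12 : e.1 ≠ e.2 := (hM.1 e he).2.2.ne
    have hcard_pair : ∀ x : V, (({e.1, e.2} : Finset V).filter (fun y => G.Adj x y)).card =
        (if G.Adj x e.1 then 1 else 0) + (if G.Adj x e.2 then 1 else 0) := by
      intro x
      by_cases p1 : G.Adj x e.1 <;> by_cases p2 : G.Adj x e.2 <;>
        simp [Finset.filter_insert, Finset.filter_singleton, p1, p2, h12]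
    rw [hcard_pair u, hcard_pair w] at hce
    have hcases : (G.Adj u e.1 ∧ G.Adj w e.2) ∨ (G.Adj u e.2 ∧ G.Adj w e.1) := by
      by_cases q1 : G.Adj u e.1 <;> by_cases q2 : G.Adj u e.2 <;>
        by_cases q3 : G.Adj w e.1 <;> by_cases q4 : G.Adj w e.2 <;>
        simp only [q1, q2, q3, q4, if_true, if_false] at hce ⊢ <;>
        first | tauto | omega
    rcases hcases with ⟨h1, h2⟩ | ⟨h1, h2⟩
    · exact aux u hu w hw huw e he h1 h2
    · exact aux w hw u hu huw.symm e he h2 h1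

lemma matching_exists {n : ℕ} (hn : 1 ≤ n) (G : SimpleGraph V) [DecidableRel G.Adj]
    (T : Finset V) (hT : 2 * n ≤ T.card)
    (hdeg : ∀ u ∈ T, (T.filter (fun y => y ≠ u ∧ ¬ G.Adj u y)).card ≤ n - 1) :
    ∃ p : Fin n → V × V,
      (∀ j, (p j).1 ∈ T ∧ (p j).2 ∈ T ∧ G.Adj (p j).1 (p j).2) ∧
      (∀ j j', j ≠ j' → (p j).1 ≠ (p j').1 ∧ (p j).1 ≠ (p j').2 ∧
        (p j).2 ≠ (p j').1 ∧ (p j).2 ≠ (p j').2) := by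
  have step : ∀ k, k ≤ n → ∃ M, GoodM G T M ∧ M.card = k := by
    intro k
    induction k with
    | zero => exact fun _ => ⟨∅, ⟨by simp, by simp⟩, Finset.card_empty⟩
    | succ k ih =>
      intro hk
      obtain ⟨M, hM, hMc⟩ := ih (Nat.le_of_succ_le hk)
      obtain ⟨M', hM', hMc'⟩ := goodM_augment hn G T hT hdeg M hM (by omega)
      exact ⟨M', hM', by omega⟩
  obtain ⟨M, hM, hMc⟩ := step n le_rfl
  have hcard : Fintype.card ↥M = n := by rw [Fintype.card_coe]; exact hMc
  let eqv := (Fintype.equivFinOfCardEq hcard).symm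
  refine ⟨fun j => (eqv j : V × V), fun j => hM.1 _ (eqv j).2, ?_⟩
  intro j j' hne
  have hpne : ((eqv j : V × V)) ≠ ((eqv j' : V × V)) := by
    intro h
    exact hne (eqv.injective (Subtype.ext h))
  have key := hM.2 (eqv j) (eqv j).2 (eqv j') (eqv j').2
  exact ⟨fun h => hpne (key (by tauto)), fun h => hpne (key (by tauto)),
    fun h => hpne (key (by tauto)), fun h => hpne (key (by tauto))⟩


lemma ramsey_upper (n : ℕ) (hn : 1 ≤ n) (R : SimpleGraph (Fin (3 * n))) :
    ContainsCopy R (starGraph n) ∨ ContainsCopy Rᶜ (fanGraph n) := by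
  classical
  by_cases hbig : ∃ v, n ≤ (R.neighborFinset v).card
  · left
    obtain ⟨v, hv⟩ := hbig
    obtain ⟨s, hsub, hscard⟩ := Finset.exists_subset_card_eq hv
    have hcard : Fintype.card ↥s = n := by rw [Fintype.card_coe]; exact hscard
    let g := (Fintype.equivFinOfCardEq hcard).symm
    have hadj : ∀ j : Fin n, R.Adj v ((g j : Fin (3 * n))) := fun j =>
      (SimpleGraph.mem_neighborFinset _ _ _).mp (hsub (g j).2)
    have hqinj : Function.Injective (fun j : Fin n => (g j : Fin (3 * n))) :=
      fun j j' h => g.injective (Subtype.ext h)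
    have hqv : ∀ j : Fin n, (g j : Fin (3 * n)) ≠ v := fun j => (hadj j).ne'
    refine ⟨⟨Fin.cases v (fun j => (g j : Fin (3 * n))), cons_inj v _ hqinj hqv⟩, ?_⟩
    intro a b hab
    have hab' : a ≠ b ∧ (a = 0 ∨ b = 0) := hab
    obtain ⟨hne, h0⟩ := hab'
    rcases h0 with rfl | rfl
    · obtain ⟨j, rfl⟩ := fin_eq_succ b (Ne.symm hne)
      simpa using hadj j
    · obtain ⟨j, rfl⟩ := fin_eq_succ a hne
      simpa using (hadj j).symm
  · right
    push_neg at hbig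
    have h3n : 0 < 3 * n := by omega
    set v : Fin (3 * n) := ⟨0, h3n⟩ with hvdef
    set T := Rᶜ.neighborFinset v with hTdef
    have hTmem : ∀ x, x ∈ T ↔ Rᶜ.Adj v x := fun x => SimpleGraph.mem_neighborFinset _ _ _
    have hTcard : 2 * n ≤ T.card := by
      have hsub : Finset.univ \ insert v (R.neighborFinset v) ⊆ T := by
        intro x hx
        rw [Finset.mem_sdiff, Finset.mem_insert] at hx
        push_neg at hx
        obtain ⟨-, hxv, hxR⟩ := hx
        rw [hTmem, SimpleGraph.compl_adj]
        exact ⟨Ne.symm hxv, fun h => hxR ((SimpleGraph.mem_neighborFinset _ _ _).mpr h)⟩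
      have hc := Finset.card_le_card hsub
      rw [Finset.card_sdiff_of_subset (Finset.subset_univ _)] at hc
      have h1 := Finset.card_insert_le v (R.neighborFinset v)
      have h2 := hbig v
      have huniv : (Finset.univ : Finset (Fin (3 * n))).card = 3 * n := by simp
      omega
    have hdeg : ∀ u ∈ T, (T.filter (fun y => y ≠ u ∧ ¬ Rᶜ.Adj u y)).card ≤ n - 1 := by
      intro u hu
      have hsub : T.filter (fun y => y ≠ u ∧ ¬ Rᶜ.Adj u y) ⊆ R.neighborFinset u := by
        intro y hy
        obtain ⟨hyT, hyne, hyadj⟩ := Finset.mem_filter.mp hy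
        rw [SimpleGraph.mem_neighborFinset]
        by_contra hR
        exact hyadj ((SimpleGraph.compl_adj _ _ _).mpr ⟨Ne.symm hyne, hR⟩)
      have hc := Finset.card_le_card hsub
      have h2 := hbig u
      omega
    obtain ⟨p, hp1, hp2⟩ := matching_exists hn Rᶜ T hTcard hdeg
    have hpne : ∀ j, (p j).1 ≠ (p j).2 := fun j => (hp1 j).2.2.ne
    have hqinj := pairSeq_inj p hpne hp2
    have hqT : ∀ i, pairSeq p i ∈ T := by
      intro i
      have hpi : i.val / 2 < n := by have := i.isLt; omega
      by_cases h1 : i.val % 2 = 0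
      · rw [pairSeq_even p i h1 hpi]; exact (hp1 _).1
      · rw [pairSeq_odd p i h1 hpi]; exact (hp1 _).2.1
    have hqadj : ∀ i, Rᶜ.Adj v (pairSeq p i) := fun i => (hTmem _).mp (hqT i)
    have hqv : ∀ i, pairSeq p i ≠ v := fun i => (hqadj i).ne'
    refine ⟨⟨Fin.cases v (pairSeq p), cons_inj v _ hqinj hqv⟩, ?_⟩
    intro a b hab
    have hab' : a ≠ b ∧ (a = 0 ∨ b = 0 ∨ (a.val - 1) / 2 = (b.val - 1) / 2) := hab
    obtain ⟨hne, h0⟩ := hab'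
    by_cases ha0 : a = 0
    · subst ha0
      obtain ⟨j, rfl⟩ := fin_eq_succ b (Ne.symm hne)
      simpa using hqadj j
    by_cases hb0 : b = 0
    · subst hb0
      obtain ⟨j, rfl⟩ := fin_eq_succ a ha0
      simpa using (hqadj j).symm
    have hmid : (a.val - 1) / 2 = (b.val - 1) / 2 := by tauto
    obtain ⟨i, rfl⟩ := fin_eq_succ a ha0
    obtain ⟨i', rfl⟩ := fin_eq_succ b hb0
    have h1 : (Fin.succ i : Fin (2 * n + 1)).val = i.val + 1 := Fin.val_succ i
    have h2 : (Fin.succ i' : Fin (2 * n + 1)).val = i'.val + 1 := Fin.val_succ i'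
    rw [h1, h2] at hmid
    have hBij : i.val / 2 = i'.val / 2 := by omega
    have hvv : i.val ≠ i'.val := fun h => hne (by rw [Fin.ext h])
    simp only [Function.Embedding.coeFn_mk, Fin.cases_succ]
    have hpi : i.val / 2 < n := by have := i.isLt; omega
    have hpi' : i'.val / 2 < n := by have := i'.isLt; omega
    have hkk : (⟨i.val / 2, hpi⟩ : Fin n) = ⟨i'.val / 2, hpi'⟩ := Fin.ext hBij
    by_cases hpar : i.val % 2 = 0
    · have hpar' : ¬ i'.val % 2 = 0 := by omega
      rw [pairSeq_even p i hpar hpi, pairSeq_odd p i' hpar' hpi', ← hkk]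
      exact (hp1 _).2.2
    · have hpar' : i'.val % 2 = 0 := by omega
      rw [pairSeq_odd p i hpar hpi, pairSeq_even p i' hpar' hpi', ← hkk]
      exact ((hp1 _).2.2).symm


lemma ramsey_lower_small (n N : ℕ) (hn : 1 ≤ n) (hN : N ≤ 2 * n)
    (hmem : ∀ R : SimpleGraph (Fin N),
      ContainsCopy R (starGraph n) ∨ ContainsCopy Rᶜ (fanGraph n)) : False := by
  rcases hmem ⊥ with ⟨f, hf⟩ | ⟨f, hf⟩
  · obtain ⟨m, rfl⟩ : ∃ m, n = m + 1 := ⟨n - 1, by omega⟩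
    have h01 : (starGraph (m + 1)).Adj 0 1 := ⟨by
      intro h
      have := congrArg Fin.val h
      simp [Fin.val_one] at this, Or.inl rfl⟩
    exact hf h01
  · have hle := Fintype.card_le_of_embedding f
    simp only [Fintype.card_fin] at hle
    omega

open Fin.NatCast in
lemma ramsey_lower_big (n m N : ℕ) (hn : n = 2 * m + 1) (hN1 : 2 * n + 1 ≤ N)
    (hN2 : N ≤ 3 * n - 1)
    (hmem : ∀ R : SimpleGraph (Fin N),
      ContainsCopy R (starGraph n) ∨ ContainsCopy Rᶜ (fanGraph n)) : False := by
  classical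
  haveI : NeZero N := ⟨by omega⟩
  set R : SimpleGraph (Fin N) :=
    { Adj := fun a b => a ≠ b ∧ ∃ k : ℕ, 1 ≤ k ∧ k ≤ m ∧
        (b = a + (k : Fin N) ∨ a = b + (k : Fin N))
      symm := by
        constructor
        intro a b ⟨h1, k, hk1, hkm, hor⟩
        exact ⟨h1.symm, k, hk1, hkm, hor.symm⟩
      loopless := by constructor; intro a h; exact h.1 rfl } with hRdef
  have hRadj : ∀ a b : Fin N, R.Adj a b ↔ (a ≠ b ∧ ∃ k : ℕ, 1 ≤ k ∧ k ≤ m ∧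
      (b = a + (k : Fin N) ∨ a = b + (k : Fin N))) := fun a b => Iff.rfl
  have hval : ∀ k : ℕ, k < N → ((k : Fin N)).val = k := fun k h => by
    rw [Fin.val_natCast]; exact Nat.mod_eq_of_lt h
  have hcast_ne : ∀ k : ℕ, 1 ≤ k → k ≤ m → (k : Fin N) ≠ 0 := by
    intro k h1 h2 h
    have := congrArg Fin.val h
    rw [hval k (by omega)] at this
    simp at this
    omega
  have hcast_inj : ∀ k k' : ℕ, k ≤ m → k' ≤ m → (k : Fin N) = (k' : Fin N) → k = k' := by
    intro k k' h1 h2 h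
    have := congrArg Fin.val h
    rwa [hval k (by omega), hval k' (by omega)] at this
  have hcast_neg : ∀ k k' : ℕ, 1 ≤ k → k ≤ m → 1 ≤ k' → k' ≤ m →
      (k : Fin N) ≠ -(k' : Fin N) := by
    intro k k' h1 h2 h3 h4 h
    have hsum : ((k + k' : ℕ) : Fin N) = 0 := by
      push_cast
      rw [h]
      exact neg_add_cancel _
    have := congrArg Fin.val hsum
    rw [hval (k + k') (by omega)] at this
    simp at this
    omega
  -- the potential red neighborhood of a vertex
  set A : Fin N → Finset (Fin N) := fun c =>
    (Finset.Icc 1 m).biUnion (fun k => {c + (k : Fin N), c - (k : Fin N)}) with hAdef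
  have hAmem' : ∀ c x, x ∈ A c ↔ ∃ k : ℕ, 1 ≤ k ∧ k ≤ m ∧
      (x = c + (k : Fin N) ∨ x = c - (k : Fin N)) := by
    intro c x
    simp [hAdef, Finset.mem_biUnion, Finset.mem_Icc, and_assoc]
  have hAnbr : ∀ c x, R.Adj c x → x ∈ A c := by
    intro c x hadj
    obtain ⟨hne, k, hk1, hkm, hor⟩ := hadj
    rw [hAmem']
    refine ⟨k, hk1, hkm, ?_⟩
    rcases hor with h | h
    · exact Or.inl h
    · exact Or.inr ((eq_sub_of_add_eq h.symm).symm : c - (k : Fin N) = x).symm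
  have hAadj : ∀ c x, x ∈ A c → R.Adj c x := by
    intro c x hx
    rw [hAmem'] at hx
    obtain ⟨k, hk1, hkm, hor⟩ := hx
    rcases hor with rfl | rfl
    · exact ⟨fun h => hcast_ne k hk1 hkm (left_eq_add.mp h), k, hk1, hkm, Or.inl rfl⟩
    · exact ⟨fun h => hcast_ne k hk1 hkm (sub_eq_self.mp h.symm), k, hk1, hkm,
        Or.inr (by abel)⟩
  have hcnotA : ∀ c, c ∉ A c := by
    intro c hc
    exact (hAadj c c hc).ne rfl
  have hAcard : ∀ c, (A c).card = 2 * m := by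
    intro c
    rw [hAdef]
    rw [Finset.card_biUnion]
    · rw [Finset.sum_congr rfl (g := fun _ => 2), Finset.sum_const, smul_eq_mul,
        Nat.card_Icc]
      · omega
      · intro k hk
        rw [Finset.mem_Icc] at hk
        rw [Finset.card_insert_of_notMem, Finset.card_singleton]
        simp only [Finset.mem_singleton]
        intro h
        rw [sub_eq_add_neg] at h
        exact hcast_neg k k hk.1 hk.2 hk.1 hk.2 (add_left_cancel h)
    · intro k hk k' hk' hne
      rw [Finset.mem_coe, Finset.mem_Icc] at hk hk'
      rw [Function.onFun, Finset.disjoint_left]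
      intro x hx hx'
      simp only [Finset.mem_insert, Finset.mem_singleton] at hx hx'
      have key : ∀ d d' : Fin N, c + d = c + d' → d = d' := fun d d' h => by
        exact add_left_cancel h
      rcases hx with rfl | rfl <;> rcases hx' with h | h
      · exact hne (hcast_inj k k' hk.2 hk'.2 (key _ _ h))
      · rw [sub_eq_add_neg] at h
        exact hcast_neg k k' hk.1 hk.2 hk'.1 hk'.2 (key _ _ h)
      · rw [sub_eq_add_neg] at h
        exact hcast_neg k' k hk'.1 hk'.2 hk.1 hk.2 (key _ _ h.symm)
      · rw [sub_eq_add_neg, sub_eq_add_neg] at h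
        have := key _ _ h
        exact hne (hcast_inj k k' hk.2 hk'.2 (by
          have := neg_injective this
          exact this))
  rcases hmem R with ⟨f, hf⟩ | ⟨f, hf⟩
  · -- red star: n distinct neighbors of f 0, but only 2m = n - 1 available
    set c := f 0 with hcdef
    set B := Finset.image (fun j : Fin n => f j.succ) Finset.univ with hBdef
    have hBcard : B.card = n := by
      rw [hBdef, Finset.card_image_of_injective _ (fun j j' h =>
        Fin.succ_injective n (f.injective h)), Finset.card_univ, Fintype.card_fin]
    have hBsub : B ⊆ A c := by
      intro x hx
      rw [hBdef, Finset.mem_image] at hx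
      obtain ⟨j, -, rfl⟩ := hx
      have hadj : (starGraph n).Adj 0 j.succ := ⟨(Fin.succ_ne_zero j).symm, Or.inl rfl⟩
      exact hAnbr c _ (hf hadj)
    have := Finset.card_le_card hBsub
    rw [hBcard, hAcard] at this
    omega
  · -- blue fan: 2n distinct non-neighbors of c, plus 2m neighbors, plus c itself
    set c := f 0 with hcdef
    set B := Finset.image (fun j : Fin (2 * n) => f j.succ) Finset.univ with hBdef
    have hBcard : B.card = 2 * n := by
      rw [hBdef, Finset.card_image_of_injective _ (fun j j' h =>
        Fin.succ_injective (2 * n) (f.injective h)), Finset.card_univ, Fintype.card_fin]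
    have hBprop : ∀ x ∈ B, x ≠ c ∧ ¬ R.Adj c x := by
      intro x hx
      rw [hBdef, Finset.mem_image] at hx
      obtain ⟨j, -, rfl⟩ := hx
      have hadj : (fanGraph n).Adj 0 j.succ := ⟨(Fin.succ_ne_zero j).symm, Or.inl rfl⟩
      have hcompl := hf hadj
      rw [SimpleGraph.compl_adj] at hcompl
      exact ⟨hcompl.1.symm, fun h => hcompl.2 h⟩
    have hdisj : Disjoint (A c) B := by
      rw [Finset.disjoint_left]
      intro x hx hx'
      exact (hBprop x hx').2 (hAadj c x hx)
    have hcAB : c ∉ A c ∪ B := by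
      rw [Finset.mem_union]
      rintro (h | h)
      · exact hcnotA c h
      · exact (hBprop c h).1 rfl
    have hle : (insert c (A c ∪ B)).card ≤ N := by
      have := Finset.card_le_univ (insert c (A c ∪ B))
      rwa [Fintype.card_fin] at this
    rw [Finset.card_insert_of_notMem hcAB, Finset.card_union_of_disjoint hdisj,
      hAcard, hBcard] at hle
    omega

/-- For every odd `n ≥ 1`, the Ramsey number `R(K_{1,n}, F_n)` equals `3n`:
`3n` is the least `N` such that every red-blue coloring of `K_N` (here, `R` is
the red graph and `Rᶜ` the blue graph) contains a red `K_{1,n}` or a blue `F_n`. -/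
theorem ramsey_star_fan_odd (n : ℕ) (hn : 1 ≤ n) (hodd : Odd n) :
    IsLeast {N : ℕ | ∀ R : SimpleGraph (Fin N),
      ContainsCopy R (starGraph n) ∨ ContainsCopy Rᶜ (fanGraph n)} (3 * n) := by
  obtain ⟨m, hm⟩ := hodd
  have hm' : n = 2 * m + 1 := by omega
  constructor
  · intro R
    exact ramsey_upper n hn R
  · intro N hN
    by_contra hlt
    push_neg at hlt
    rcases le_or_gt N (2 * n) with h | h
    · exact ramsey_lower_small n N hn h hN
    · exact ramsey_lower_big n m N hm' (by omega) (by omega) hN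
end

section
/- For every even integer n ≥ 2, the Ramsey number R(K_{1,n}, F_n) equals 3n − 1; that is, every red-blue edge-coloring of the complete graph on 3n − 1 vertices contains a red copy of the star K_{1,n} or a blue copy of the fan F_n, and 3n − 1 is the smallest integer with this property. -/
section RamseyStarFanAux

open Finset SimpleGraph

lemma star_of_degree {n N : ℕ} (R : SimpleGraph (Fin N)) [DecidableRel R.Adj] {v : Fin N}
    (h : n ≤ R.degree v) : ContainsCopy R (_root_.starGraph n) := by
  obtain ⟨t, ht, htc⟩ := Finset.exists_subset_card_eq (h : n ≤ #(R.neighborFinset v))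
  set g : Fin n → Fin N := fun i => t.orderEmbOfFin htc i with hg
  have hadjv : ∀ i, R.Adj v (g i) := fun i =>
    (R.mem_neighborFinset v _).mp (ht (t.orderEmbOfFin_mem htc i))
  have hginj : Function.Injective g := fun a b hab => (t.orderEmbOfFin htc).injective hab
  set f : Fin (n + 1) → Fin N := Fin.cases v g with hf
  have hf0 : f 0 = v := rfl
  have hfs : ∀ i, f i.succ = g i := fun i => rfl
  have hinj : Function.Injective f := by
    intro a b hab
    induction a using Fin.cases <;> induction b using Fin.cases
    · rfl
    · rw [hf0, hfs] at hab; exact absurd hab (hadjv _).ne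
    · rw [hf0, hfs] at hab; exact absurd hab.symm (hadjv _).ne
    · rw [hfs, hfs] at hab; rw [hginj hab]
  refine ⟨⟨f, hinj⟩, ?_⟩
  intro a b hab
  obtain ⟨hne, h0⟩ := hab
  rcases h0 with h0 | h0
  · subst h0
    obtain ⟨j, rfl⟩ := Fin.eq_succ_of_ne_zero (Ne.symm hne)
    simpa [hf0, hfs] using hadjv j
  · subst h0
    obtain ⟨j, rfl⟩ := Fin.eq_succ_of_ne_zero hne
    simpa [hf0, hfs] using (hadjv j).symm

lemma matching_exists_s1 {n N : ℕ} (R : SimpleGraph (Fin N)) [DecidableRel R.Adj]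
    (hdeg : ∀ v, R.degree v ≤ n - 1) (B : Finset (Fin N)) (hB : 2 * n ≤ B.card) :
    ∀ k, k ≤ n → ∃ x y : Fin k → Fin N,
      (∀ i, x i ∈ B) ∧ (∀ i, y i ∈ B) ∧ Function.Injective x ∧ Function.Injective y ∧
      (∀ i j, x i ≠ y j) ∧ (∀ i, Rᶜ.Adj (x i) (y i)) := by
  intro k
  induction k with
  | zero => exact fun _ => ⟨Fin.elim0, Fin.elim0, fun i => i.elim0, fun i => i.elim0,
      fun i => i.elim0, fun i => i.elim0, fun i => i.elim0, fun i => i.elim0⟩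
  | succ k ih =>
    intro hk1
    obtain ⟨x, y, hxB, hyB, hxinj, hyinj, hxy, hblue⟩ := ih (Nat.le_of_succ_le hk1)
    have hkn : k < n := hk1
    set M : Finset (Fin N) := (Finset.univ.image x) ∪ (Finset.univ.image y) with hM
    have hMcard : M.card ≤ 2 * k := by
      calc M.card ≤ (Finset.univ.image x).card + (Finset.univ.image y).card :=
            Finset.card_union_le _ _
        _ ≤ k + k := by
            gcongr <;> exact (Finset.card_image_le).trans (by simp)
        _ = 2 * k := by omega
    have hxM : ∀ i, x i ∈ M := fun i => by simp [hM]
    have hyM : ∀ i, y i ∈ M := fun i => by simp [hM]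
    set W : Finset (Fin N) := B \ M with hW
    have hWnx : ∀ w ∈ W, ∀ i, w ≠ x i ∧ w ≠ y i := by
      intro w hw i
      rw [hW, Finset.mem_sdiff] at hw
      exact ⟨fun h => hw.2 (h ▸ hxM i), fun h => hw.2 (h ▸ hyM i)⟩
    have hWB : W ⊆ B := Finset.sdiff_subset
    have hWcard : 2 * n - 2 * k ≤ W.card := by
      have h1 : B.card ≤ (B \ M).card + M.card := Finset.card_le_card_sdiff_add_card
      rw [hW]
      omega
    by_cases hA : ∃ u1 ∈ W, ∃ u2 ∈ W, Rᶜ.Adj u1 u2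
    · -- extend the matching with a new blue edge inside W
      obtain ⟨u1, hu1, u2, hu2, hadj⟩ := hA
      have hu12 : u1 ≠ u2 := hadj.ne
      refine ⟨Fin.snoc x u1, Fin.snoc y u2, ?_, ?_, ?_, ?_, ?_, ?_⟩
      · intro i
        induction i using Fin.lastCases
        · simpa using hWB hu1
        · simpa using hxB _
      · intro i
        induction i using Fin.lastCases
        · simpa using hWB hu2
        · simpa using hyB _
      · intro a b hab
        induction a using Fin.lastCases <;> induction b using Fin.lastCases
        · rfl
        · rw [Fin.snoc_last, Fin.snoc_castSucc] at hab
          exact absurd hab (hWnx u1 hu1 _).1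
        · rw [Fin.snoc_last, Fin.snoc_castSucc] at hab
          exact absurd hab.symm (hWnx u1 hu1 _).1
        · rw [Fin.snoc_castSucc, Fin.snoc_castSucc] at hab
          rw [hxinj hab]
      · intro a b hab
        induction a using Fin.lastCases <;> induction b using Fin.lastCases
        · rfl
        · rw [Fin.snoc_last, Fin.snoc_castSucc] at hab
          exact absurd hab (hWnx u2 hu2 _).2
        · rw [Fin.snoc_last, Fin.snoc_castSucc] at hab
          exact absurd hab.symm (hWnx u2 hu2 _).2
        · rw [Fin.snoc_castSucc, Fin.snoc_castSucc] at hab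
          rw [hyinj hab]
      · intro a b
        induction a using Fin.lastCases <;> induction b using Fin.lastCases
        · simpa using hadj.ne
        · simp only [Fin.snoc_last, Fin.snoc_castSucc]
          exact (hWnx u1 hu1 _).2
        · simp only [Fin.snoc_last, Fin.snoc_castSucc]
          exact fun h => (hWnx u2 hu2 _).1 h.symm
        · simp only [Fin.snoc_castSucc]; exact hxy _ _
      · intro i
        induction i using Fin.lastCases
        · simpa using hadj
        · simpa using hblue _
    · push_neg at hA
      -- W is a red clique
      have hred : ∀ u1 ∈ W, ∀ u2 ∈ W, u1 ≠ u2 → R.Adj u1 u2 := by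
        intro u1 h1 u2 h2 hne
        by_contra hadj
        exact hA u1 h1 u2 h2 ((R.compl_adj u1 u2).mpr ⟨hne, hadj⟩)
      have hW2 : 1 < W.card := by omega
      obtain ⟨u1, hu1, u2, hu2, hu12⟩ := Finset.one_lt_card.mp hW2
      by_cases hEx : ∃ i, (Rᶜ.Adj u1 (x i) ∧ Rᶜ.Adj u2 (y i)) ∨ (Rᶜ.Adj u2 (x i) ∧ Rᶜ.Adj u1 (y i))
      · obtain ⟨i₀, hor⟩ := hEx
        obtain ⟨a, b, ha, hb, hab, hax, hby⟩ :
            ∃ a b, a ∈ W ∧ b ∈ W ∧ a ≠ b ∧ Rᶜ.Adj a (x i₀) ∧ Rᶜ.Adj b (y i₀) := by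
          rcases hor with ⟨h1, h2⟩ | ⟨h1, h2⟩
          · exact ⟨u1, u2, hu1, hu2, hu12, h1, h2⟩
          · exact ⟨u2, u1, hu2, hu1, hu12.symm, h1, h2⟩
        refine ⟨Fin.snoc x (y i₀), Fin.snoc (Function.update y i₀ a) b, ?_, ?_, ?_, ?_, ?_, ?_⟩
        · intro i
          induction i using Fin.lastCases
          · simpa using hyB i₀
          · simpa using hxB _
        · intro i
          induction i using Fin.lastCases
          · simpa using hWB hb
          · rename_i j
            rw [Fin.snoc_castSucc, Function.update_apply]
            by_cases hj : j = i₀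
            · rw [if_pos hj]; exact hWB ha
            · rw [if_neg hj]; exact hyB _
        · intro p q hpq
          induction p using Fin.lastCases <;> induction q using Fin.lastCases
          · rfl
          · rw [Fin.snoc_last, Fin.snoc_castSucc] at hpq
            exact absurd hpq.symm (hxy _ _)
          · rw [Fin.snoc_last, Fin.snoc_castSucc] at hpq
            exact absurd hpq (hxy _ _)
          · rw [Fin.snoc_castSucc, Fin.snoc_castSucc] at hpq
            rw [hxinj hpq]
        · intro p q hpq
          induction p using Fin.lastCases <;> induction q using Fin.lastCases
          · rfl
          · rename_i q'
            rw [Fin.snoc_last, Fin.snoc_castSucc, Function.update_apply] at hpq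
            by_cases hq : q' = i₀
            · rw [if_pos hq] at hpq
              exact absurd hpq.symm hab
            · rw [if_neg hq] at hpq
              exact absurd hpq (hWnx b hb _).2
          · rename_i p'
            rw [Fin.snoc_last, Fin.snoc_castSucc, Function.update_apply] at hpq
            by_cases hp : p' = i₀
            · rw [if_pos hp] at hpq
              exact absurd hpq hab
            · rw [if_neg hp] at hpq
              exact absurd hpq.symm (hWnx b hb _).2
          · rename_i p' q'
            rw [Fin.snoc_castSucc, Fin.snoc_castSucc, Function.update_apply,
              Function.update_apply] at hpq
            by_cases hp : p' = i₀ <;> by_cases hq : q' = i₀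
            · rw [hp, hq]
            · rw [if_pos hp, if_neg hq] at hpq
              exact absurd hpq (hWnx a ha _).2
            · rw [if_neg hp, if_pos hq] at hpq
              exact absurd hpq.symm (hWnx a ha _).2
            · rw [if_neg hp, if_neg hq] at hpq
              rw [hyinj hpq]
        · intro p q
          induction p using Fin.lastCases <;> induction q using Fin.lastCases
          · simp only [Fin.snoc_last]
            exact fun h => (hWnx b hb _).2 h.symm
          · rename_i q'
            simp only [Fin.snoc_last, Fin.snoc_castSucc, Function.update_apply]
            by_cases hq : q' = i₀
            · rw [if_pos hq]
              exact fun h => (hWnx a ha _).2 h.symm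
            · rw [if_neg hq]
              exact fun h => hq (hyinj h).symm
          · simp only [Fin.snoc_last, Fin.snoc_castSucc]
            exact fun h => (hWnx b hb _).1 h.symm
          · rename_i p' q'
            simp only [Fin.snoc_castSucc, Function.update_apply]
            by_cases hq : q' = i₀
            · rw [if_pos hq]
              exact fun h => (hWnx a ha _).1 h.symm
            · rw [if_neg hq]
              exact hxy _ _
        · intro i
          induction i using Fin.lastCases
          · simp only [Fin.snoc_last]
            exact hby.symm
          · rename_i j
            simp only [Fin.snoc_castSucc, Function.update_apply]
            by_cases hj : j = i₀
            · rw [if_pos hj, hj]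
              exact hax.symm
            · rw [if_neg hj]
              exact hblue _
      · -- counting contradiction
        exfalso
        push_neg at hEx
        have hne1 : ∀ i, u1 ≠ x i ∧ u1 ≠ y i := hWnx u1 hu1
        have hne2 : ∀ i, u2 ≠ x i ∧ u2 ≠ y i := hWnx u2 hu2
        have hkey : ∀ i, (R.Adj u1 (x i) ∨ R.Adj u2 (y i)) ∧
            (R.Adj u1 (y i) ∨ R.Adj u2 (x i)) := by
          intro i
          have h := hEx i
          obtain ⟨h1, h2⟩ := h
          constructor
          · by_cases hc : Rᶜ.Adj u1 (x i)
            · right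
              have := h1 hc
              rw [R.compl_adj] at this
              push_neg at this
              exact this (hne2 i).2
            · left
              rw [R.compl_adj] at hc
              push_neg at hc
              exact hc (hne1 i).1
          · by_cases hc : Rᶜ.Adj u2 (x i)
            · left
              have := h2 hc
              rw [R.compl_adj] at this
              push_neg at this
              exact this (hne1 i).2
            · right
              rw [R.compl_adj] at hc
              push_neg at hc
              exact hc (hne2 i).1
        set P : Fin k → Finset (Fin N) := fun i => {x i, y i} with hP
        have hPM : ∀ i, P i ⊆ M := by
          intro i t ht
          rw [hP] at ht
          simp only [Finset.mem_insert, Finset.mem_singleton] at ht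
          rcases ht with rfl | rfl
          · exact hxM i
          · exact hyM i
        have hPdisj : ∀ i j : Fin k, i ≠ j → Disjoint (P i) (P j) := by
          intro i j hij
          rw [Finset.disjoint_left]
          intro t hti htj
          simp only [hP, Finset.mem_insert, Finset.mem_singleton] at hti htj
          rcases hti with rfl | rfl <;> rcases htj with h | h
          · exact hij (hxinj h)
          · exact hxy i j h
          · exact hxy j i h.symm
          · exact hij (hyinj h)
        have hpair : ∀ i, 2 ≤ (R.neighborFinset u1 ∩ P i).card + (R.neighborFinset u2 ∩ P i).card := by
          intro i
          have hxyne : x i ≠ y i := hxy i i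
          have hxP : x i ∈ P i := by simp [hP]
          have hyP : y i ∈ P i := by simp [hP]
          obtain ⟨c1, c2⟩ := hkey i
          have mA1 : ∀ t, R.Adj u1 t → t ∈ R.neighborFinset u1 := fun t h => by
            rw [R.mem_neighborFinset]; exact h
          have mA2 : ∀ t, R.Adj u2 t → t ∈ R.neighborFinset u2 := fun t h => by
            rw [R.mem_neighborFinset]; exact h
          rcases c1 with c1 | c1 <;> rcases c2 with c2 | c2
          · have hsub : ({x i, y i} : Finset (Fin N)) ⊆ R.neighborFinset u1 ∩ P i := by
              intro t ht
              simp only [Finset.mem_insert, Finset.mem_singleton] at ht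
              rcases ht with rfl | rfl
              · exact Finset.mem_inter.mpr ⟨mA1 _ c1, hxP⟩
              · exact Finset.mem_inter.mpr ⟨mA1 _ c2, hyP⟩
            have := Finset.card_le_card hsub
            rw [Finset.card_pair hxyne] at this
            omega
          · have h1 : 1 ≤ (R.neighborFinset u1 ∩ P i).card :=
              Finset.card_pos.mpr ⟨x i, Finset.mem_inter.mpr ⟨mA1 _ c1, hxP⟩⟩
            have h2 : 1 ≤ (R.neighborFinset u2 ∩ P i).card :=
              Finset.card_pos.mpr ⟨x i, Finset.mem_inter.mpr ⟨mA2 _ c2, hxP⟩⟩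
            omega
          · have h1 : 1 ≤ (R.neighborFinset u1 ∩ P i).card :=
              Finset.card_pos.mpr ⟨y i, Finset.mem_inter.mpr ⟨mA1 _ c2, hyP⟩⟩
            have h2 : 1 ≤ (R.neighborFinset u2 ∩ P i).card :=
              Finset.card_pos.mpr ⟨y i, Finset.mem_inter.mpr ⟨mA2 _ c1, hyP⟩⟩
            omega
          · have hsub : ({x i, y i} : Finset (Fin N)) ⊆ R.neighborFinset u2 ∩ P i := by
              intro t ht
              simp only [Finset.mem_insert, Finset.mem_singleton] at ht
              rcases ht with rfl | rfl
              · exact Finset.mem_inter.mpr ⟨mA2 _ c2, hxP⟩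
              · exact Finset.mem_inter.mpr ⟨mA2 _ c1, hyP⟩
            have := Finset.card_le_card hsub
            rw [Finset.card_pair hxyne] at this
            omega
        have hbound : ∀ u ∈ W,
            (Finset.univ.biUnion fun i => R.neighborFinset u ∩ P i).card
              + (W.erase u).card ≤ R.degree u := by
          intro u hu
          have hsub : (Finset.univ.biUnion fun i => R.neighborFinset u ∩ P i) ∪ (W.erase u)
              ⊆ R.neighborFinset u := by
            intro t ht
            rcases Finset.mem_union.mp ht with ht | ht
            · obtain ⟨i, _, hti⟩ := Finset.mem_biUnion.mp ht
              exact (Finset.mem_inter.mp hti).1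
            · have htW := Finset.mem_of_mem_erase ht
              have htu : t ≠ u := Finset.ne_of_mem_erase ht
              rw [R.mem_neighborFinset]
              exact hred u hu t htW (Ne.symm htu)
          have hdisj : Disjoint (Finset.univ.biUnion fun i => R.neighborFinset u ∩ P i)
              (W.erase u) := by
            rw [Finset.disjoint_left]
            intro t ht htW
            obtain ⟨i, _, hti⟩ := Finset.mem_biUnion.mp ht
            have htM := hPM i (Finset.mem_inter.mp hti).2
            have h3 := Finset.mem_of_mem_erase htW
            rw [hW, Finset.mem_sdiff] at h3
            exact h3.2 htM
          calc (Finset.univ.biUnion fun i => R.neighborFinset u ∩ P i).card + (W.erase u).card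
              = ((Finset.univ.biUnion fun i => R.neighborFinset u ∩ P i) ∪ (W.erase u)).card :=
                (Finset.card_union_of_disjoint hdisj).symm
            _ ≤ (R.neighborFinset u).card := Finset.card_le_card hsub
            _ = R.degree u := rfl
        have hsum1 : (Finset.univ.biUnion fun i => R.neighborFinset u1 ∩ P i).card
            = ∑ i, (R.neighborFinset u1 ∩ P i).card := by
          apply Finset.card_biUnion
          intro i _ j _ hij
          exact (hPdisj i j hij).mono Finset.inter_subset_right Finset.inter_subset_right
        have hsum2 : (Finset.univ.biUnion fun i => R.neighborFinset u2 ∩ P i).card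
            = ∑ i, (R.neighborFinset u2 ∩ P i).card := by
          apply Finset.card_biUnion
          intro i _ j _ hij
          exact (hPdisj i j hij).mono Finset.inter_subset_right Finset.inter_subset_right
        have hb1 := hbound u1 hu1
        have hb2 := hbound u2 hu2
        rw [hsum1] at hb1
        rw [hsum2] at hb2
        have hWe1 : (W.erase u1).card = W.card - 1 := Finset.card_erase_of_mem hu1
        have hWe2 : (W.erase u2).card = W.card - 1 := Finset.card_erase_of_mem hu2
        have hsumtot : 2 * k ≤ ∑ i, (R.neighborFinset u1 ∩ P i).card + ∑ i, (R.neighborFinset u2 ∩ P i).card := by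
          rw [← Finset.sum_add_distrib]
          calc (2 * k : ℕ) = ∑ _i : Fin k, 2 := by simp [Finset.sum_const, mul_comm]
            _ ≤ ∑ i, ((R.neighborFinset u1 ∩ P i).card + (R.neighborFinset u2 ∩ P i).card) :=
                Finset.sum_le_sum fun i _ => hpair i
        have hd1 : #(R.neighborFinset u1) ≤ n - 1 := hdeg u1
        have hd2 : #(R.neighborFinset u2) ≤ n - 1 := hdeg u2
        rw [SimpleGraph.degree] at hb1 hb2
        have hn1 : 1 ≤ n := by omega
        omega

lemma fan_of_matching {n N : ℕ} (hn : 1 ≤ n) (R : SimpleGraph (Fin N)) (v : Fin N)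
    (x y : Fin n → Fin N)
    (hvx : ∀ i, Rᶜ.Adj v (x i)) (hvy : ∀ i, Rᶜ.Adj v (y i))
    (hxinj : Function.Injective x) (hyinj : Function.Injective y)
    (hxy : ∀ i j, x i ≠ y j) (hblue : ∀ i, Rᶜ.Adj (x i) (y i)) :
    ContainsCopy Rᶜ (fanGraph n) := by
  have hlt : ∀ a : Fin (2 * n + 1), a.val ≠ 0 → (a.val - 1) / 2 < n := by
    intro a ha
    have := a.isLt
    omega
  set f : Fin (2 * n + 1) → Fin N := fun a =>
    if ha : a.val = 0 then v
    else if (a.val - 1) % 2 = 0 then x ⟨(a.val - 1) / 2, hlt a ha⟩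
    else y ⟨(a.val - 1) / 2, hlt a ha⟩ with hf
  have hinj : Function.Injective f := by
    intro a b hab
    rw [hf] at hab
    simp only at hab
    by_cases ha : a.val = 0 <;> by_cases hb : b.val = 0
    · exact Fin.ext (by omega)
    · rw [dif_pos ha, dif_neg hb] at hab
      split at hab
      · exact absurd hab (hvx _).ne
      · exact absurd hab (hvy _).ne
    · rw [dif_neg ha, dif_pos hb] at hab
      split at hab
      · exact absurd hab.symm (hvx _).ne
      · exact absurd hab.symm (hvy _).ne
    · rw [dif_neg ha, dif_neg hb] at hab
      by_cases hpa : (a.val - 1) % 2 = 0 <;> by_cases hpb : (b.val - 1) % 2 = 0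
      · rw [if_pos hpa, if_pos hpb] at hab
        have := Fin.mk.injEq .. ▸ (hxinj hab)
        have : (a.val - 1) / 2 = (b.val - 1) / 2 := Fin.mk_eq_mk.mp (hxinj hab)
        exact Fin.ext (by omega)
      · rw [if_pos hpa, if_neg hpb] at hab
        exact absurd hab (hxy _ _)
      · rw [if_neg hpa, if_pos hpb] at hab
        exact absurd hab.symm (hxy _ _)
      · rw [if_neg hpa, if_neg hpb] at hab
        have : (a.val - 1) / 2 = (b.val - 1) / 2 := Fin.mk_eq_mk.mp (hyinj hab)
        exact Fin.ext (by omega)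
  refine ⟨⟨f, hinj⟩, ?_⟩
  intro a b hab
  obtain ⟨hne, hcase⟩ := hab
  simp only [Function.Embedding.coeFn_mk]
  have hne' : a.val ≠ b.val := fun h => hne (Fin.ext h)
  by_cases ha : a.val = 0 <;> by_cases hb : b.val = 0
  · omega
  · have hfa : f a = v := by rw [hf]; simp only; rw [dif_pos ha]
    rw [hfa, hf]
    simp only
    rw [dif_neg hb]
    split
    · exact hvx _
    · exact hvy _
  · have hfb : f b = v := by rw [hf]; simp only; rw [dif_pos hb]
    rw [hfb, hf]
    simp only
    rw [dif_neg ha]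
    split
    · exact (hvx _).symm
    · exact (hvy _).symm
  · -- both non-central: must be a matched pair
    have hdiv : (a.val - 1) / 2 = (b.val - 1) / 2 := by
      rcases hcase with h | h | h
      · exact absurd (congrArg Fin.val h) ha
      · exact absurd (congrArg Fin.val h) hb
      · exact h
    have hpar : ((a.val - 1) % 2 = 0 ∧ (b.val - 1) % 2 = 1) ∨
        ((a.val - 1) % 2 = 1 ∧ (b.val - 1) % 2 = 0) := by omega
    rw [hf]
    simp only
    rw [dif_neg ha, dif_neg hb]
    rcases hpar with ⟨h1, h2⟩ | ⟨h1, h2⟩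
    · rw [if_pos h1, if_neg (by omega)]
      have : (⟨(a.val - 1) / 2, hlt a ha⟩ : Fin n) = ⟨(b.val - 1) / 2, hlt b hb⟩ :=
        Fin.ext hdiv
      rw [this]
      exact hblue _
    · rw [if_neg (by omega), if_pos h2]
      have : (⟨(a.val - 1) / 2, hlt a ha⟩ : Fin n) = ⟨(b.val - 1) / 2, hlt b hb⟩ :=
        Fin.ext hdiv
      rw [this]
      exact (hblue _).symm

lemma membership_part (n : ℕ) (hn : 2 ≤ n) (heven : Even n)
    (R : SimpleGraph (Fin (3 * n - 1))) :
    ContainsCopy R (_root_.starGraph n) ∨ ContainsCopy Rᶜ (fanGraph n) := by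
  classical
  by_cases hstar : ContainsCopy R (_root_.starGraph n)
  · exact Or.inl hstar
  right
  have hdeg : ∀ v, R.degree v ≤ n - 1 := by
    intro v
    by_contra h
    push_neg at h
    exact hstar (star_of_degree R (show n ≤ R.degree v by omega))
  have hv₀ : ∃ v, R.degree v ≤ n - 2 := by
    by_contra hall
    push_neg at hall
    have hconst : ∀ v, R.degree v = n - 1 := by
      intro v
      have h1 := hall v
      have h2 := hdeg v
      omega
    have hsum := R.sum_degrees_eq_twice_card_edges
    rw [Finset.sum_congr rfl (fun v _ => hconst v)] at hsum
    rw [Finset.sum_const, Finset.card_univ, Fintype.card_fin, smul_eq_mul] at hsum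
    obtain ⟨m, hm⟩ := heven
    set p := m - 1 with hp
    have hnp : n = 2 * p + 2 := by omega
    have e1 : 3 * n - 1 = 6 * p + 5 := by omega
    have e2 : n - 1 = 2 * p + 1 := by omega
    have key : (6 * p + 5) * (2 * p + 1) = 2 * #R.edgeFinset := by
      rw [← e1, ← e2]; exact hsum
    have hexp : (6 * p + 5) * (2 * p + 1) = 12 * (p * p) + 16 * p + 5 := by ring
    omega
  obtain ⟨v₀, hv₀⟩ := hv₀
  set B := Rᶜ.neighborFinset v₀ with hB
  have hBcard : 2 * n ≤ B.card := by
    have hc : Rᶜ.degree v₀ = Fintype.card (Fin (3 * n - 1)) - 1 - R.degree v₀ :=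
      R.degree_compl v₀
    rw [Fintype.card_fin] at hc
    have : B.card = Rᶜ.degree v₀ := rfl
    omega
  obtain ⟨x, y, hxB, hyB, hxinj, hyinj, hxy, hblue⟩ :=
    matching_exists_s1 R hdeg B hBcard n le_rfl
  have hvx : ∀ i, Rᶜ.Adj v₀ (x i) := fun i => (Rᶜ.mem_neighborFinset v₀ (x i)).mp (hxB i)
  have hvy : ∀ i, Rᶜ.Adj v₀ (y i) := fun i => (Rᶜ.mem_neighborFinset v₀ (y i)).mp (hyB i)
  exact fan_of_matching (by omega) R v₀ x y hvx hvy hxinj hyinj hxy hblue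

/-- Index of the block containing `w` (blocks `[0,n)`, `[n,2n-1)`, `[2n-1,3n-2)`). -/
def blockIdx (n : ℕ) (w : Fin (3 * n - 2)) : ℕ :=
  if w.val < n then 0 else if w.val < 2 * n - 1 then 1 else 2

/-- The extremal red graph on `3n-2` vertices: disjoint cliques of sizes `n, n-1, n-1`. -/
def lowerGraph (n : ℕ) : SimpleGraph (Fin (3 * n - 2)) where
  Adj v w := v ≠ w ∧ blockIdx n v = blockIdx n w
  symm := by constructor; intro v w h; exact ⟨h.1.symm, h.2.symm⟩
  loopless := by constructor; intro v h; exact h.1 rfl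

/-- The offset (first element) of block `j`. -/
def blockOff (n j : ℕ) : ℕ := if j = 0 then 0 else if j = 1 then n else 2 * n - 1

lemma blockIdx_range (n : ℕ) (hn : 2 ≤ n) (w : Fin (3 * n - 2)) :
    blockOff n (blockIdx n w) ≤ w.val ∧
      w.val < blockOff n (blockIdx n w) + n ∧
      (blockIdx n w ≠ 0 → w.val < blockOff n (blockIdx n w) + (n - 1)) := by
  have hw := w.isLt
  unfold blockIdx blockOff
  split_ifs <;> simp_all <;> omega

lemma blockIdx_char (n : ℕ) (hn : 2 ≤ n) (w : Fin (3 * n - 2)) :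
    (blockIdx n w = 0 ↔ w.val < n) ∧ (blockIdx n w = 1 ↔ n ≤ w.val ∧ w.val < 2 * n - 1) ∧
      (blockIdx n w = 2 ↔ 2 * n - 1 ≤ w.val) := by
  unfold blockIdx
  split_ifs <;> simp <;> omega

lemma card_block_le (n : ℕ) (hn : 2 ≤ n) (c : ℕ) :
    #(Finset.univ.filter fun w : Fin (3 * n - 2) => blockIdx n w = c) ≤ n := by
  have := Finset.card_le_card_of_injOn (fun w : Fin (3 * n - 2) => w.val - blockOff n c)
    (s := Finset.univ.filter fun w : Fin (3 * n - 2) => blockIdx n w = c)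
    (t := Finset.range n) ?_ ?_
  · simpa using this
  · intro w hw
    rw [Finset.mem_coe, Finset.mem_filter] at hw
    have h := blockIdx_range n hn w
    rw [hw.2] at h
    have : w.val - blockOff n c < n := by omega
    simpa using this
  · intro w1 hw1 w2 hw2 h
    simp only [Finset.coe_filter, Set.mem_setOf_eq] at hw1 hw2
    have h1 := blockIdx_range n hn w1
    have h2 := blockIdx_range n hn w2
    rw [hw1.2] at h1
    rw [hw2.2] at h2
    have h' : w1.val - blockOff n c = w2.val - blockOff n c := h
    exact Fin.ext (by omega)

lemma le_card_block (n : ℕ) (hn : 2 ≤ n) (v : Fin (3 * n - 2)) :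
    n - 1 ≤ #(Finset.univ.filter fun w : Fin (3 * n - 2) => blockIdx n w = blockIdx n v) := by
  have hm : 0 < 3 * n - 2 := by omega
  have hc3 : blockIdx n v = 0 ∨ blockIdx n v = 1 ∨ blockIdx n v = 2 := by
    unfold blockIdx; split_ifs <;> simp
  have hoff : blockOff n (blockIdx n v) + (n - 1) ≤ 3 * n - 2 := by
    unfold blockOff
    rcases hc3 with h | h | h <;> rw [h] <;> simp <;> omega
  have := Finset.card_le_card_of_injOn
    (fun j : ℕ => (⟨(blockOff n (blockIdx n v) + j) % (3 * n - 2), Nat.mod_lt _ hm⟩ :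
      Fin (3 * n - 2)))
    (s := Finset.range (n - 1))
    (t := Finset.univ.filter fun w : Fin (3 * n - 2) => blockIdx n w = blockIdx n v) ?_ ?_
  · simpa using this
  · intro j hj
    rw [Finset.mem_coe, Finset.mem_range] at hj
    have hlt : blockOff n (blockIdx n v) + j < 3 * n - 2 := by omega
    rw [Finset.mem_coe, Finset.mem_filter]
    refine ⟨Finset.mem_univ _, ?_⟩
    have hch := blockIdx_char n hn ⟨(blockOff n (blockIdx n v) + j) % (3 * n - 2), Nat.mod_lt _ hm⟩
    have hval : ((⟨(blockOff n (blockIdx n v) + j) % (3 * n - 2), Nat.mod_lt _ hm⟩ :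
        Fin (3 * n - 2)) : ℕ) = blockOff n (blockIdx n v) + j := Nat.mod_eq_of_lt hlt
    rw [hval] at hch
    rcases hc3 with h | h | h <;> rw [h] <;> rw [h] at hch
    · exact hch.1.mpr (by have : blockOff n 0 = 0 := rfl; omega)
    · exact hch.2.1.mpr (by have : blockOff n 1 = n := rfl; omega)
    · exact hch.2.2.mpr (by have : blockOff n 2 = 2 * n - 1 := rfl; omega)
  · intro j1 hj1 j2 hj2 h
    simp only [Finset.coe_range, Set.mem_Iio] at hj1 hj2
    have hlt1 : blockOff n (blockIdx n v) + j1 < 3 * n - 2 := by omega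
    have hlt2 : blockOff n (blockIdx n v) + j2 < 3 * n - 2 := by omega
    have h' : (blockOff n (blockIdx n v) + j1) % (3 * n - 2)
        = (blockOff n (blockIdx n v) + j2) % (3 * n - 2) := Fin.mk_eq_mk.mp h
    rw [Nat.mod_eq_of_lt hlt1, Nat.mod_eq_of_lt hlt2] at h'
    omega

lemma no_star_lower (n : ℕ) (hn : 2 ≤ n) : ¬ ContainsCopy (lowerGraph n) (_root_.starGraph n) := by
  rintro ⟨f, hf⟩
  set c := f 0 with hc
  set Bl := Finset.univ.filter fun w : Fin (3 * n - 2) => blockIdx n w = blockIdx n c with hBl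
  have hsub : Finset.univ.image f ⊆ Bl := by
    intro t ht
    obtain ⟨a, _, rfl⟩ := Finset.mem_image.mp ht
    rw [hBl, Finset.mem_filter]
    refine ⟨Finset.mem_univ _, ?_⟩
    by_cases ha : a = 0
    · rw [ha]
    · have hadj : (_root_.starGraph n).Adj 0 a := ⟨Ne.symm ha, Or.inl rfl⟩
      exact ((hf hadj).2).symm
  have h1 : (Finset.univ.image f).card = n + 1 := by
    rw [Finset.card_image_of_injective _ f.injective, Finset.card_univ, Fintype.card_fin]
  have h2 := Finset.card_le_card hsub
  have h3 := card_block_le n hn (blockIdx n c)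
  rw [h1] at h2
  rw [← hBl] at h3
  omega

lemma no_fan_lower (n : ℕ) (hn : 2 ≤ n) : ¬ ContainsCopy (lowerGraph n)ᶜ (fanGraph n) := by
  rintro ⟨f, hf⟩
  set c := f 0 with hc
  set Bl := Finset.univ.filter fun w : Fin (3 * n - 2) => blockIdx n w = blockIdx n c with hBl
  set S := Finset.univ.image f with hS
  set D := Bl.erase c with hD
  have hdisj : Disjoint S D := by
    rw [Finset.disjoint_left]
    intro t ht htD
    obtain ⟨a, _, rfl⟩ := Finset.mem_image.mp ht
    by_cases ha : a = 0
    · rw [ha] at htD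
      exact (Finset.notMem_erase c Bl) (hD ▸ htD)
    · have hadj : (fanGraph n).Adj 0 a := ⟨Ne.symm ha, Or.inl rfl⟩
      have hcomp := hf hadj
      rw [SimpleGraph.compl_adj] at hcomp
      have hblk : blockIdx n (f a) ≠ blockIdx n c := by
        intro h
        exact hcomp.2 ⟨hcomp.1, h.symm⟩
      have := Finset.mem_of_mem_erase (hD ▸ htD)
      rw [hBl, Finset.mem_filter] at this
      exact hblk this.2
  have hScard : S.card = 2 * n + 1 := by
    rw [hS, Finset.card_image_of_injective _ f.injective, Finset.card_univ, Fintype.card_fin]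
  have hDcard : n - 2 ≤ D.card := by
    have h1 := le_card_block n hn c
    rw [hD, Finset.card_erase_of_mem]
    · rw [← hBl] at h1; omega
    · rw [hBl, Finset.mem_filter]; exact ⟨Finset.mem_univ _, rfl⟩
  have htot : (S ∪ D).card ≤ 3 * n - 2 := by
    calc (S ∪ D).card ≤ (Finset.univ : Finset (Fin (3 * n - 2))).card :=
          Finset.card_le_card (Finset.subset_univ _)
      _ = 3 * n - 2 := by rw [Finset.card_univ, Fintype.card_fin]
  rw [Finset.card_union_of_disjoint hdisj, hScard] at htot
  omega

lemma lower_part (n : ℕ) (hn : 2 ≤ n) {N : ℕ} (hN : N < 3 * n - 1) :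
    ¬ ∀ R : SimpleGraph (Fin N),
      ContainsCopy R (_root_.starGraph n) ∨ ContainsCopy Rᶜ (fanGraph n) := by
  intro hall
  have hle : N ≤ 3 * n - 2 := by omega
  set R : SimpleGraph (Fin N) := (lowerGraph n).comap (Fin.castLE hle) with hR
  rcases hall R with ⟨f, hf⟩ | ⟨f, hf⟩
  · refine no_star_lower n hn ⟨f.trans (Fin.castLEEmb hle), ?_⟩
    intro a b hab
    exact hf hab
  · refine no_fan_lower n hn ⟨f.trans (Fin.castLEEmb hle), ?_⟩
    intro a b hab
    have h := hf hab
    rw [SimpleGraph.compl_adj] at h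
    rw [SimpleGraph.compl_adj]
    constructor
    · simp only [Function.Embedding.trans_apply]
      exact fun heq => h.1 (f.injective ((Fin.castLEEmb hle).injective
        (by simpa using heq) : f a = f b) ▸ rfl)
    · exact h.2

end RamseyStarFanAux

/-- For every even `n ≥ 2`, the Ramsey number `R(K_{1,n}, F_n)` equals `3n - 1`. -/
theorem ramsey_star_fan_even (n : ℕ) (hn : 2 ≤ n) (heven : Even n) :
    IsLeast {N : ℕ | ∀ R : SimpleGraph (Fin N),
      ContainsCopy R (starGraph n) ∨ ContainsCopy Rᶜ (fanGraph n)} (3 * n - 1) := by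
  constructor
  · intro R
    exact membership_part n hn heven R
  · intro N hN
    by_contra hlt
    push_neg at hlt
    exact lower_part n hn hlt hN
end

section
/- For every even integer n ≥ 2, every red-blue edge-coloring of the complete graph on 3n − 1 vertices contains a red copy of the star K_{1,n} or a blue copy of the fan F_n. -/
set_option linter.unusedSectionVars false
section Matching
variable {V : Type*} [Fintype V] [DecidableEq V] (G : SimpleGraph V) (S : Finset V)

/-- the two endpoints of the `i`-th edge of a partial matching -/
def mpair {k : ℕ} (M : Fin k → V × V) (i : Fin k) : Finset V := {(M i).1, (M i).2}

/-- `M` is a partial matching of size `k` inside `S` in graph `G` -/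
def IsPM (k : ℕ) (M : Fin k → V × V) : Prop :=
  (∀ i, (M i).1 ∈ S ∧ (M i).2 ∈ S ∧ G.Adj (M i).1 (M i).2) ∧
  ∀ i j, i ≠ j → Disjoint (mpair M i) (mpair M j)

variable {G S}

lemma mem_mpair {k : ℕ} {M : Fin k → V × V} {i : Fin k} {w : V} :
    w ∈ mpair M i ↔ w = (M i).1 ∨ w = (M i).2 := by
  simp [mpair]

lemma card_mpair_le {k : ℕ} (M : Fin k → V × V) (i : Fin k) : (mpair M i).card ≤ 2 := by
  classical
  exact (Finset.card_insert_le _ _).trans (by simp)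

lemma IsPM.snoc {k : ℕ} {M : Fin k → V × V} (h : IsPM G S k M) {u w : V}
    (hu : u ∈ S) (hw : w ∈ S) (ha : G.Adj u w)
    (hu' : ∀ i, u ∉ mpair M i) (hw' : ∀ i, w ∉ mpair M i) :
    IsPM G S (k+1) (Fin.snoc M (u, w)) := by
  have hpair : ∀ i : Fin k, mpair (Fin.snoc M (u, w) : Fin (k+1) → V × V) i.castSucc = mpair M i := by
    intro i; simp [mpair, Fin.snoc_castSucc]
  have hlast : mpair (Fin.snoc M (u, w) : Fin (k+1) → V × V) (Fin.last k) = {u, w} := by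
    simp [mpair, Fin.snoc_last]
  constructor
  · intro i
    refine Fin.lastCases ?_ ?_ i
    · simp [Fin.snoc_last]; exact ⟨hu, hw, ha⟩
    · intro j; simp [Fin.snoc_castSucc]; exact h.1 j
  · intro i j hij
    have hdisj : ∀ i : Fin k, Disjoint ({u, w} : Finset V) (mpair M i) := by
      intro i
      rw [Finset.disjoint_left]
      intro a ha'
      rcases Finset.mem_insert.mp ha' with rfl | ha'
      · exact hu' i
      · rw [Finset.mem_singleton] at ha'; subst ha'; exact hw' i
    rcases Fin.eq_castSucc_or_eq_last i with ⟨i', rfl⟩ | rfl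
    · rcases Fin.eq_castSucc_or_eq_last j with ⟨j', rfl⟩ | rfl
      · rw [hpair, hpair]
        exact h.2 i' j' (fun hc => hij (by rw [hc]))
      · rw [hlast, hpair]; exact (hdisj i').symm
    · rcases Fin.eq_castSucc_or_eq_last j with ⟨j', rfl⟩ | rfl
      · rw [hlast, hpair]; exact hdisj j'
      · exact absurd rfl hij

lemma IsPM.update {k : ℕ} {M : Fin k → V × V} (h : IsPM G S k M) (i : Fin k) {u y : V}
    (hu : u ∈ S) (hy : y ∈ S) (ha : G.Adj u y)
    (hfresh : ∀ j, j ≠ i → u ∉ mpair M j ∧ y ∉ mpair M j) :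
    IsPM G S k (Function.update M i (u, y)) := by
  have hpair : ∀ j, j ≠ i → mpair (Function.update M i (u, y)) j = mpair M j := by
    intro j hj; simp [mpair, Function.update_of_ne hj]
  have hpairi : mpair (Function.update M i (u, y)) i = {u, y} := by
    simp [mpair]
  constructor
  · intro j
    by_cases hj : j = i
    · subst hj; simp [Function.update_self]; exact ⟨hu, hy, ha⟩
    · simp [Function.update_of_ne hj]; exact h.1 j
  · intro j j' hjj'
    have key : ∀ j', j' ≠ i → Disjoint ({u, y} : Finset V) (mpair M j') := by
      intro j' hj'
      rw [Finset.disjoint_left]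
      intro a ha'
      rcases Finset.mem_insert.mp ha' with rfl | ha'
      · exact (hfresh j' hj').1
      · rw [Finset.mem_singleton] at ha'; subst ha'; exact (hfresh j' hj').2
    by_cases hj : j = i
    · subst hj
      rw [hpairi, hpair j' (by rintro rfl; exact hjj' rfl)]
      exact key j' (by rintro rfl; exact hjj' rfl)
    · by_cases hj' : j' = i
      · subst hj'
        rw [hpairi, hpair j hj]
        exact (key j hj).symm
      · rw [hpair j hj, hpair j' hj']
        exact h.2 j j' hjj'
end Matching
section Matching2
open Finset
variable {V : Type*} [Fintype V] [DecidableEq V] {G : SimpleGraph V} {S : Finset V}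

lemma replace_step {k : ℕ} {M : Fin k → V × V} (h : IsPM G S k M) (i : Fin k) {u v x y : V}
    (hu : u ∈ S) (hv : v ∈ S)
    (huT : ∀ j, u ∉ mpair M j) (hvT : ∀ j, v ∉ mpair M j) (huv : u ≠ v)
    (hxy : ((M i).1 = x ∧ (M i).2 = y) ∨ ((M i).1 = y ∧ (M i).2 = x))
    (hay : G.Adj u y) (hax : G.Adj v x) :
    ∃ M' : Fin (k+1) → V × V, IsPM G S (k+1) M' := by
  obtain ⟨h1S, h2S, hadj⟩ := h.1 i
  have hxS : x ∈ S := by rcases hxy with ⟨h1, h2⟩ | ⟨h1, h2⟩ <;> [exact h1 ▸ h1S; exact h2 ▸ h2S]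
  have hyS : y ∈ S := by rcases hxy with ⟨h1, h2⟩ | ⟨h1, h2⟩ <;> [exact h2 ▸ h2S; exact h1 ▸ h1S]
  have hxp : x ∈ mpair M i := by
    rcases hxy with ⟨h1, _⟩ | ⟨_, h2⟩ <;> rw [mem_mpair] <;> [exact Or.inl h1.symm; exact Or.inr h2.symm]
  have hyp : y ∈ mpair M i := by
    rcases hxy with ⟨_, h2⟩ | ⟨h1, _⟩ <;> rw [mem_mpair] <;> [exact Or.inr h2.symm; exact Or.inl h1.symm]
  have hxney : x ≠ y := by
    rcases hxy with ⟨h1, h2⟩ | ⟨h1, h2⟩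
    · rw [← h1, ← h2]; exact hadj.ne
    · rw [← h1, ← h2]; exact hadj.ne.symm
  have hM'' : IsPM G S k (Function.update M i (u, y)) := by
    refine h.update i hu hyS hay ?_
    intro j hj
    refine ⟨huT j, ?_⟩
    exact fun hc => Finset.disjoint_left.mp (h.2 i j (fun hc' => hj (hc'.symm))) hyp hc
  set M'' := Function.update M i (u, y) with hM''def
  have hpair'' : ∀ j, j ≠ i → mpair M'' j = mpair M j := by
    intro j hj; simp [hM''def, mpair, Function.update_of_ne hj]
  have hpairi'' : mpair M'' i = {u, y} := by simp [hM''def, mpair]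
  refine ⟨_, hM''.snoc hv hxS hax ?_ ?_⟩
  · intro j
    by_cases hj : j = i
    · rw [hj, hpairi'']
      simp only [Finset.mem_insert, Finset.mem_singleton]
      push_neg
      exact ⟨huv.symm, fun hc => hvT i (hc ▸ hyp)⟩
    · rw [hpair'' j hj]; exact hvT j
  · intro j
    by_cases hj : j = i
    · rw [hj, hpairi'']
      simp only [Finset.mem_insert, Finset.mem_singleton]
      push_neg
      exact ⟨fun hc => huT i (hc ▸ hxp), hxney⟩
    · rw [hpair'' j hj]
      exact fun hc => Finset.disjoint_left.mp (h.2 i j (fun hc' => hj hc'.symm)) hxp hc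

lemma exists_pm [DecidableRel G.Adj] (n : ℕ) (hc : 2*n ≤ S.card)
    (hdeg : ∀ v ∈ S, S.card ≤ n + (S.filter (fun w => G.Adj v w)).card) :
    ∃ M : Fin n → V × V, IsPM G S n M := by
  suffices h : ∀ k, k ≤ n → ∃ M : Fin k → V × V, IsPM G S k M from h n le_rfl
  intro k
  induction k with
  | zero =>
    intro _
    exact ⟨fun i => i.elim0, fun i => i.elim0, fun i => i.elim0⟩
  | succ k ih =>
    intro hk
    obtain ⟨M, hM⟩ := ih (by omega)
    set T := Finset.univ.biUnion (fun i => mpair M i) with hTdef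
    have hmemT : ∀ w, w ∈ T ↔ ∃ i, w ∈ mpair M i := by
      intro w; simp [hTdef]
    have hTcard : T.card ≤ 2 * k := by
      calc T.card ≤ ∑ i : Fin k, (mpair M i).card := Finset.card_biUnion_le
        _ ≤ ∑ _i : Fin k, 2 := Finset.sum_le_sum (fun i _ => card_mpair_le M i)
        _ = 2 * k := by simp [mul_comm]
    have hfree : 1 < (S \ T).card := by
      have h1 := Finset.le_card_sdiff T S
      omega
    obtain ⟨u, hu, v, hv, huv⟩ := Finset.one_lt_card.mp hfree
    rw [Finset.mem_sdiff] at hu hv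
    have huT : ∀ i, u ∉ mpair M i := fun i hc' => hu.2 ((hmemT u).mpr ⟨i, hc'⟩)
    have hvT : ∀ i, v ∉ mpair M i := fun i hc' => hv.2 ((hmemT v).mpr ⟨i, hc'⟩)
    by_cases hadj : G.Adj u v
    · exact ⟨_, hM.snoc hu.1 hv.1 hadj huT hvT⟩
    set Au := S.filter (fun w => G.Adj u w) with hAu
    set Av := S.filter (fun w => G.Adj v w) with hAv
    by_cases hAuT : ∃ w ∈ Au, w ∉ T
    · obtain ⟨w, hw, hwT⟩ := hAuT
      rw [hAu, Finset.mem_filter] at hw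
      exact ⟨_, hM.snoc hu.1 hw.1 hw.2 huT (fun i hc' => hwT ((hmemT w).mpr ⟨i, hc'⟩))⟩
    by_cases hAvT : ∃ w ∈ Av, w ∉ T
    · obtain ⟨w, hw, hwT⟩ := hAvT
      rw [hAv, Finset.mem_filter] at hw
      exact ⟨_, hM.snoc hv.1 hw.1 hw.2 hvT (fun i hc' => hwT ((hmemT w).mpr ⟨i, hc'⟩))⟩
    push_neg at hAuT hAvT
    -- card computations
    have hcardsplit : ∀ A : Finset V, (∀ w ∈ A, w ∈ T) →
        A.card = ∑ i : Fin k, (A ∩ mpair M i).card := by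
      intro A hA
      have hAeq : A = Finset.univ.biUnion (fun i => A ∩ mpair M i) := by
        ext w
        simp only [Finset.mem_biUnion, Finset.mem_univ, true_and, Finset.mem_inter]
        constructor
        · intro hw
          obtain ⟨i, hi⟩ := (hmemT w).mp (hA w hw)
          exact ⟨i, hw, hi⟩
        · rintro ⟨i, hw, _⟩; exact hw
      have hcb := Finset.card_biUnion (s := (Finset.univ : Finset (Fin k)))
        (t := fun i => A ∩ mpair M i) (fun i _ j _ hij =>
        Finset.disjoint_left.mpr (fun a ha hb =>
          Finset.disjoint_left.mp (hM.2 i j hij) (Finset.mem_inter.mp ha).2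
            (Finset.mem_inter.mp hb).2))
      rw [← hAeq] at hcb
      exact hcb
    have hAucard : S.card ≤ n + Au.card := hdeg u hu.1
    have hAvcard : S.card ≤ n + Av.card := hdeg v hv.1
    obtain ⟨i, hi3⟩ : ∃ i : Fin k, 3 ≤ (Au ∩ mpair M i).card + (Av ∩ mpair M i).card := by
      by_contra hcon
      push_neg at hcon
      have hsum : ∑ i : Fin k, ((Au ∩ mpair M i).card + (Av ∩ mpair M i).card) ≤ 2 * k := by
        calc ∑ i : Fin k, ((Au ∩ mpair M i).card + (Av ∩ mpair M i).card)
            ≤ ∑ _i : Fin k, 2 := Finset.sum_le_sum (fun i _ => by have := hcon i; omega)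
          _ = 2 * k := by simp [mul_comm]
      rw [Finset.sum_add_distrib, ← hcardsplit Au hAuT, ← hcardsplit Av hAvT] at hsum
      omega
    have hple := card_mpair_le M i
    have hAule : (Au ∩ mpair M i).card ≤ 2 :=
      le_trans (Finset.card_le_card Finset.inter_subset_right) hple
    have hAvle : (Av ∩ mpair M i).card ≤ 2 :=
      le_trans (Finset.card_le_card Finset.inter_subset_right) hple
    have hsub2 : ∀ A : Finset V, 2 ≤ (A ∩ mpair M i).card →
        G.Adj (M i).1 (M i).2 → (M i).1 ∈ A ∧ (M i).2 ∈ A := by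
      intro A hA2 _
      have heq : A ∩ mpair M i = mpair M i :=
        Finset.eq_of_subset_of_card_le Finset.inter_subset_right (le_trans hple hA2)
      constructor
      · have h1 : (M i).1 ∈ mpair M i := mem_mpair.mpr (Or.inl rfl)
        rw [← heq] at h1
        exact (Finset.mem_inter.mp h1).1
      · have h1 : (M i).2 ∈ mpair M i := mem_mpair.mpr (Or.inr rfl)
        rw [← heq] at h1
        exact (Finset.mem_inter.mp h1).1
    have hadjM := (hM.1 i).2.2
    have hone : ∀ A : Finset V, 1 ≤ (A ∩ mpair M i).card →
        (M i).1 ∈ A ∨ (M i).2 ∈ A := by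
      intro A hA1
      obtain ⟨w, hw⟩ := Finset.card_pos.mp hA1
      rw [Finset.mem_inter, mem_mpair] at hw
      rcases hw.2 with rfl | rfl
      · exact Or.inl hw.1
      · exact Or.inr hw.1
    have hmemAu : ∀ w, w ∈ Au ↔ w ∈ S ∧ G.Adj u w := by intro w; simp [hAu]
    have hmemAv : ∀ w, w ∈ Av ↔ w ∈ S ∧ G.Adj v w := by intro w; simp [hAv]
    rcases (by omega : 2 ≤ (Au ∩ mpair M i).card ∨ 2 ≤ (Av ∩ mpair M i).card) with h2 | h2
    · -- u adjacent to both endpoints; v adjacent to at least one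
      obtain ⟨hu1, hu2⟩ := hsub2 Au h2 hadjM
      have hv1 : (M i).1 ∈ Av ∨ (M i).2 ∈ Av := hone Av (by omega)
      rcases hv1 with hv1 | hv1
      · exact replace_step hM i hu.1 hv.1 huT hvT huv (Or.inl ⟨rfl, rfl⟩)
          ((hmemAu _).mp hu2).2 ((hmemAv _).mp hv1).2
      · exact replace_step hM i hu.1 hv.1 huT hvT huv (Or.inr ⟨rfl, rfl⟩)
          ((hmemAu _).mp hu1).2 ((hmemAv _).mp hv1).2
    · obtain ⟨hv1, hv2⟩ := hsub2 Av h2 hadjM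
      have hu1 : (M i).1 ∈ Au ∨ (M i).2 ∈ Au := hone Au (by omega)
      rcases hu1 with hu1 | hu1
      · exact replace_step hM i hv.1 hu.1 hvT huT huv.symm (Or.inl ⟨rfl, rfl⟩)
          ((hmemAv _).mp hv2).2 ((hmemAu _).mp hu1).2
      · exact replace_step hM i hv.1 hu.1 hvT huT huv.symm (Or.inr ⟨rfl, rfl⟩)
          ((hmemAv _).mp hv1).2 ((hmemAu _).mp hu1).2
end Matching2
/-- For every even `n ≥ 2`, every red-blue coloring of `K_{3n-1}` contains a red
`K_{1,n}` or a blue `F_n`. -/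
theorem star_fan_upper_even (n : ℕ) (hn : 2 ≤ n) (heven : Even n)
    (R : SimpleGraph (Fin (3 * n - 1))) :
    ContainsCopy R (starGraph n) ∨ ContainsCopy Rᶜ (fanGraph n) := by
  classical
  have hcardV : Fintype.card (Fin (3 * n - 1)) = (3 * n - 1) := Fintype.card_fin (3 * n - 1)
  by_cases hstar : ∃ v : Fin (3 * n - 1), n ≤ R.degree v
  · -- red star
    left
    obtain ⟨v, hv⟩ := hstar
    obtain ⟨s, hs_sub, hs_card⟩ := Finset.exists_subset_card_eq (s := R.neighborFinset v) hv
    let e := Finset.equivFinOfCardEq hs_card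
    have hadjn : ∀ i : Fin n, R.Adj v ((e.symm i : {x // x ∈ s}) : Fin (3 * n - 1)) := by
      intro i
      exact (SimpleGraph.mem_neighborFinset R v _).mp (hs_sub (e.symm i).2)
    let f : Fin (n+1) → Fin (3 * n - 1) := fun j => Fin.cases v (fun i => ((e.symm i : {x // x ∈ s}) : Fin (3 * n - 1))) j
    have hf0 : f 0 = v := rfl
    have hfs : ∀ i : Fin n, f i.succ = ((e.symm i : {x // x ∈ s}) : Fin (3 * n - 1)) := fun i => rfl
    have hinj : Function.Injective f := by
      intro a b hab
      rcases Fin.eq_zero_or_eq_succ a with rfl | ⟨a', rfl⟩ <;>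
        rcases Fin.eq_zero_or_eq_succ b with rfl | ⟨b', rfl⟩
      · rfl
      · rw [hf0, hfs] at hab; exact absurd hab (hadjn b').ne
      · rw [hf0, hfs] at hab; exact absurd hab.symm (hadjn a').ne
      · rw [hfs, hfs] at hab
        have := e.symm.injective (Subtype.coe_injective hab)
        rw [this]
    refine ⟨⟨f, hinj⟩, ?_⟩
    intro a b hab
    obtain ⟨hne, hcase⟩ := hab
    rcases hcase with rfl | rfl
    · rcases Fin.eq_zero_or_eq_succ b with rfl | ⟨b', rfl⟩
      · exact absurd rfl hne
      · simpa [hf0, hfs] using hadjn b'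
    · rcases Fin.eq_zero_or_eq_succ a with rfl | ⟨a', rfl⟩
      · exact absurd rfl hne
      · simp only [Function.Embedding.coeFn_mk, hf0, hfs]
        exact (hadjn a').symm
  · -- blue fan
    right
    push_neg at hstar
    -- find a vertex of red degree ≤ n - 2 using parity
    obtain ⟨c, hc⟩ : ∃ c : Fin (3 * n - 1), R.degree c + 2 ≤ n := by
      by_contra hcon
      push_neg at hcon
      have hall : ∀ c : Fin (3 * n - 1), R.degree c = n - 1 := by
        intro c
        have h1 := hstar c
        have h2 := hcon c
        omega
      have hsum := R.sum_degrees_eq_twice_card_edges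
      rw [Finset.sum_congr rfl (fun v _ => hall v), Finset.sum_const, Finset.card_univ,
        hcardV, smul_eq_mul] at hsum
      have hev : Even ((3 * n - 1) * (n - 1)) := ⟨R.edgeFinset.card, by omega⟩
      obtain ⟨m, hm⟩ := heven
      rcases Nat.even_mul.mp hev with h | h <;> obtain ⟨t, ht⟩ := h <;> omega
    -- the blue neighborhood of c
    set S : Finset (Fin (3 * n - 1)) := (Finset.univ.erase c) \ R.neighborFinset c with hSdef
    have hmemS : ∀ w, w ∈ S ↔ w ≠ c ∧ ¬ R.Adj c w := by
      intro w
      simp [hSdef, Finset.mem_sdiff, Finset.mem_erase, SimpleGraph.mem_neighborFinset]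
    have hcS : c ∉ S := fun h => ((hmemS c).mp h).1 rfl
    have hSblue : ∀ w ∈ S, Rᶜ.Adj c w := by
      intro w hw
      obtain ⟨h1, h2⟩ := (hmemS w).mp hw
      exact ⟨h1.symm, h2⟩
    have herase : ∀ v : Fin (3 * n - 1), (Finset.univ.erase v).card = (3 * n - 1) - 1 := by
      intro v
      rw [Finset.card_erase_of_mem (Finset.mem_univ v), Finset.card_univ, hcardV]
    have hbdeg : ∀ v : Fin (3 * n - 1), ((Finset.univ.erase v) \ R.neighborFinset v).card = (3 * n - 1) - 1 - R.degree v := by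
      intro v
      rw [Finset.card_sdiff_of_subset, herase]
      · rfl
      · intro w hw
        rw [SimpleGraph.mem_neighborFinset] at hw
        exact Finset.mem_erase.mpr ⟨hw.ne', Finset.mem_univ w⟩
    have hScard : 2 * n ≤ S.card := by
      have := hbdeg c
      rw [← hSdef] at this
      omega
    have hdeg : ∀ v ∈ S, S.card ≤ n + (S.filter (fun w => Rᶜ.Adj v w)).card := by
      intro v hv
      set B : Finset (Fin (3 * n - 1)) := (Finset.univ.erase v) \ R.neighborFinset v with hBdef
      have hBcard : 2 * n - 1 ≤ B.card := by
        have h1 := hbdeg v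
        have h2 := hstar v
        rw [← hBdef] at h1
        omega
      have hfB : S.filter (fun w => Rᶜ.Adj v w) = S ∩ B := by
        ext w
        simp only [Finset.mem_filter, Finset.mem_inter, hBdef, Finset.mem_sdiff,
          Finset.mem_erase, Finset.mem_univ, and_true, true_and,
          SimpleGraph.mem_neighborFinset, SimpleGraph.compl_adj]
        constructor
        · rintro ⟨hw, h1, h2⟩; exact ⟨hw, h1.symm, h2⟩
        · rintro ⟨hw, h1, h2⟩; exact ⟨hw, h1.symm, h2⟩
      have hiu := Finset.card_inter_add_card_union S B
      have hle : (S ∪ B).card ≤ (3 * n - 1) := le_trans (Finset.card_le_univ _) (le_of_eq hcardV)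
      rw [hfB]
      omega
    obtain ⟨M, hM⟩ := exists_pm (G := Rᶜ) (S := S) n hScard hdeg
    -- build the fan embedding
    have hn0 : 0 < n := by omega
    set vert : ℕ → Fin (3 * n - 1) := fun m =>
      if h : m / 2 < n then
        (if m % 2 = 0 then (M ⟨m/2, h⟩).1 else (M ⟨m/2, h⟩).2) else c with hvert
    have hvert1 : ∀ (m : ℕ) (h : m/2 < n), m % 2 = 0 → vert m = (M ⟨m/2, h⟩).1 := by
      intro m h hm; simp [hvert, h, hm]
    have hvert2 : ∀ (m : ℕ) (h : m/2 < n), m % 2 = 1 → vert m = (M ⟨m/2, h⟩).2 := by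
      intro m h hm; simp [hvert, h, hm]
    have hvmem : ∀ (m : ℕ) (h : m/2 < n), vert m ∈ mpair M ⟨m/2, h⟩ ∧ vert m ∈ S := by
      intro m h
      obtain ⟨h1, h2, _⟩ := hM.1 ⟨m/2, h⟩
      rcases Nat.mod_two_eq_zero_or_one m with hm | hm
      · rw [hvert1 m h hm]; exact ⟨mem_mpair.mpr (Or.inl rfl), h1⟩
      · rw [hvert2 m h hm]; exact ⟨mem_mpair.mpr (Or.inr rfl), h2⟩
    have hvinj : ∀ m m', m < 2*n → m' < 2*n → vert m = vert m' → m = m' := by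
      intro m m' hm hm' hveq
      have h2 : m / 2 < n := by omega
      have h2' : m' / 2 < n := by omega
      by_cases hq : m / 2 = m' / 2
      · rcases Nat.mod_two_eq_zero_or_one m with hp | hp <;>
          rcases Nat.mod_two_eq_zero_or_one m' with hp' | hp'
        · omega
        · exfalso
          rw [hvert1 m h2 hp, hvert2 m' h2' hp'] at hveq
          have : (⟨m/2, h2⟩ : Fin n) = ⟨m'/2, h2'⟩ := by exact Fin.ext hq
          rw [this] at hveq
          exact ((hM.1 ⟨m'/2, h2'⟩).2.2).ne hveq
        · exfalso
          rw [hvert2 m h2 hp, hvert1 m' h2' hp'] at hveq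
          have : (⟨m/2, h2⟩ : Fin n) = ⟨m'/2, h2'⟩ := by exact Fin.ext hq
          rw [this] at hveq
          exact ((hM.1 ⟨m'/2, h2'⟩).2.2).ne hveq.symm
        · omega
      · exfalso
        have hne : (⟨m/2, h2⟩ : Fin n) ≠ ⟨m'/2, h2'⟩ := by
          intro hcon; exact hq (congrArg Fin.val hcon)
        have hd := hM.2 _ _ hne
        exact Finset.disjoint_left.mp hd (hvmem m h2).1 (hveq ▸ (hvmem m' h2').1)
    set f : Fin (2*n+1) → Fin (3 * n - 1) := fun j => if (j : ℕ) = 0 then c else vert ((j : ℕ) - 1) with hf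
    have hfval : ∀ (j : Fin (2*n+1)), (j:ℕ) ≠ 0 → f j = vert ((j:ℕ) - 1) := by
      intro j hj; simp only [hf]; exact if_neg hj
    have hf0 : ∀ (j : Fin (2*n+1)), (j:ℕ) = 0 → f j = c := by
      intro j hj; simp only [hf]; exact if_pos hj
    have hfS : ∀ (j : Fin (2*n+1)), (j:ℕ) ≠ 0 → f j ∈ S := by
      intro j hj
      rw [hfval j hj]
      have hlt : ((j:ℕ) - 1)/2 < n := by have := j.isLt; omega
      exact (hvmem _ hlt).2
    have hinj : Function.Injective f := by
      intro a b hab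
      by_cases ha0 : (a:ℕ) = 0 <;> by_cases hb0 : (b:ℕ) = 0
      · exact Fin.ext (by omega)
      · rw [hf0 a ha0] at hab; exact absurd (hab ▸ hfS b hb0) hcS
      · rw [hf0 b hb0] at hab; exact absurd (hab.symm ▸ hfS a ha0) hcS
      · rw [hfval a ha0, hfval b hb0] at hab
        have ha := a.isLt; have hb := b.isLt
        have := hvinj ((a:ℕ)-1) ((b:ℕ)-1) (by omega) (by omega) hab
        exact Fin.ext (by omega)
    refine ⟨⟨f, hinj⟩, ?_⟩
    intro a b hab
    obtain ⟨hne, hcase⟩ := hab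
    simp only [Function.Embedding.coeFn_mk]
    have hvne : (a:ℕ) ≠ (b:ℕ) := fun h => hne (Fin.ext h)
    by_cases ha0 : (a:ℕ) = 0
    · have hb0 : (b:ℕ) ≠ 0 := by omega
      rw [hf0 a ha0]
      exact hSblue _ (hfS b hb0)
    · by_cases hb0 : (b:ℕ) = 0
      · rw [hf0 b hb0]
        exact (hSblue _ (hfS a ha0)).symm
      · have heq : ((a:ℕ) - 1)/2 = ((b:ℕ) - 1)/2 := by
          rcases hcase with h | h | h
          · exact absurd (congrArg Fin.val h) ha0
          · exact absurd (congrArg Fin.val h) hb0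
          · exact h
        rw [hfval a ha0, hfval b hb0]
        have ha := a.isLt; have hb := b.isLt
        have h2 : ((a:ℕ) - 1)/2 < n := by omega
        have h2' : ((b:ℕ) - 1)/2 < n := by omega
        have hadjM := (hM.1 ⟨((a:ℕ)-1)/2, h2⟩).2.2
        have hfin : (⟨((b:ℕ)-1)/2, h2'⟩ : Fin n) = ⟨((a:ℕ)-1)/2, h2⟩ := Fin.ext heq.symm
        rcases Nat.mod_two_eq_zero_or_one ((a:ℕ)-1) with hp | hp <;>
          rcases Nat.mod_two_eq_zero_or_one ((b:ℕ)-1) with hp' | hp'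
        · exact absurd rfl (by omega : ¬ (0:ℕ) = 0)
        · rw [hvert1 _ h2 hp, hvert2 _ h2' hp', hfin]
          exact hadjM
        · rw [hvert2 _ h2 hp, hvert1 _ h2' hp', hfin]
          exact hadjM.symm
        · exact absurd rfl (by omega : ¬ (0:ℕ) = 0)
end

section
/- For every integer n ≥ 1, setting ε = 0 if n is odd and ε = 1 if n is even, there exists a red-blue edge-coloring of the complete graph on 3n − 1 − ε vertices that contains neither a red copy of the star K_{1,n} nor a blue copy of the fan F_n. (Such a coloring is obtained by taking a red clique on n vertices joined entirely by blue edges to a clique H on 2n − 1 − ε vertices in which every vertex has exactly n − 1 red neighbors within H.) -/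
private lemma mod_val {m c a : ℕ} (hm : 0 < m) (hc : c < m) (ha : a < m) :
    (a + m - c) % m = if c ≤ a then a - c else a + m - c := by
  split_ifs with h
  · have h1 : a + m - c = (a - c) + m := by omega
    rw [h1, Nat.add_mod_right, Nat.mod_eq_of_lt (by omega)]
  · exact Nat.mod_eq_of_lt (by omega)

private lemma mod_inj {m c a b : ℕ} (hc : c < m) (ha : a < m) (hb : b < m)
    (h : (a + m - c) % m = (b + m - c) % m) : a = b := by
  rw [mod_val (by omega) hc ha, mod_val (by omega) hc hb] at h
  split_ifs at h <;> omega

private def myGraph (n m N : ℕ) : SimpleGraph (Fin N) where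
  Adj v w := v ≠ w ∧ ((v.val < n ∧ w.val < n) ∨
    (n ≤ v.val ∧ n ≤ w.val ∧
      2 * min (max v.val w.val - min v.val w.val)
        (m - (max v.val w.val - min v.val w.val)) ≤ n - 1))
  symm := by
    constructor
    intro v w h
    refine ⟨h.1.symm, ?_⟩
    have h2 := h.2
    omega
  loopless := by constructor; intro v h; exact h.1 rfl

private lemma no_red_star (n m N : ℕ) (hn : 1 ≤ n) (hN : N = n + m)
    (hm : (n % 2 = 1 ∧ m = 2*n-1) ∨ (n % 2 = 0 ∧ m = 2*n-2)) :
    ¬ ContainsCopy (myGraph n m N) (starGraph n) := by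
  rintro ⟨F, hF⟩
  have hadj : ∀ i : Fin n, (myGraph n m N).Adj (F 0) (F i.succ) := by
    intro i
    exact hF ⟨(Fin.succ_ne_zero i).symm, Or.inl rfl⟩
  rcases lt_or_ge (F 0).val n with hc | hc
  · -- center in A : all n+1 vertices land in A, pigeonhole
    obtain ⟨a, -, b, -, hab, heq⟩ :=
      Finset.exists_ne_map_eq_of_card_lt_of_maps_to
        (s := (Finset.univ : Finset (Fin (n+1)))) (t := Finset.range n)
        (f := fun j => (F j).val)
        (by rw [Finset.card_range, Finset.card_univ, Fintype.card_fin]; omega)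
        (fun j _ => by
          refine Finset.mem_range.mpr ?_
          show (F j).val < n
          induction j using Fin.cases with
          | zero => exact hc
          | succ i =>
            have h := (hadj i).2
            omega)
    exact hab (F.injective (Fin.val_injective heq))
  · -- center in H
    have hA : ∀ i : Fin n, n ≤ (F i.succ).val := by
      intro i
      have h := (hadj i).2
      omega
    have hc' : (F 0).val - n < m := by have := (F 0).isLt; omega
    obtain ⟨a, -, b, -, hab, heq⟩ :=
      Finset.exists_ne_map_eq_of_card_lt_of_maps_to
        (s := (Finset.univ : Finset (Fin n)))
        (t := Finset.Ico 1 ((n-1)/2 + 1) ∪ Finset.Ico (m - (n-1)/2) m)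
        (f := fun i => ((F i.succ).val - n + m - ((F 0).val - n)) % m)
        (by
          have h1 := Finset.card_union_le (Finset.Ico 1 ((n-1)/2 + 1))
            (Finset.Ico (m - (n-1)/2) m)
          rw [Nat.card_Ico, Nat.card_Ico] at h1
          rw [Finset.card_univ, Fintype.card_fin]
          omega)
        (fun i _ => by
          have h := (hadj i).2
          have hne : F 0 ≠ F i.succ := (hadj i).1
          have hain : n ≤ (F i.succ).val := hA i
          have ha' : (F i.succ).val - n < m := by have := (F i.succ).isLt; omega
          have hane : (F i.succ).val ≠ (F 0).val := fun hh =>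
            hne (Fin.val_injective hh).symm
          show ((F i.succ).val - n + m - ((F 0).val - n)) % m ∈
            Finset.Ico 1 ((n-1)/2 + 1) ∪ Finset.Ico (m - (n-1)/2) m
          rw [mod_val (by omega) hc' ha']
          simp only [Finset.mem_union, Finset.mem_Ico]
          split_ifs <;> omega)
    have hvv : (F a.succ).val - n = (F b.succ).val - n :=
      mod_inj hc' (by have := (F a.succ).isLt; omega) (by have := (F b.succ).isLt; omega) heq
    have := hA a
    have := hA b
    exact hab (Fin.succ_injective _ (F.injective (Fin.val_injective (by omega))))

private def pIdx (n : ℕ) (i : Fin n) : Fin (2*n+1) := ⟨2*i.val+1, by have := i.isLt; omega⟩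
private def qIdx (n : ℕ) (i : Fin n) : Fin (2*n+1) := ⟨2*i.val+2, by have := i.isLt; omega⟩

private lemma pIdx_ne_zero (n : ℕ) (i : Fin n) : pIdx n i ≠ 0 := by
  intro h
  have h2 : (pIdx n i).val = (0 : Fin (2*n+1)).val := congrArg Fin.val h
  simp [pIdx] at h2

private lemma qIdx_ne_zero (n : ℕ) (i : Fin n) : qIdx n i ≠ 0 := by
  intro h
  have h2 : (qIdx n i).val = (0 : Fin (2*n+1)).val := congrArg Fin.val h
  simp [qIdx] at h2

private lemma no_blue_fan (n m N : ℕ) (hn : 1 ≤ n) (hN : N = n + m)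
    (hm : (n % 2 = 1 ∧ m = 2*n-1) ∨ (n % 2 = 0 ∧ m = 2*n-2)) :
    ¬ ContainsCopy (myGraph n m N)ᶜ (fanGraph n) := by
  rintro ⟨F, hF⟩
  -- the center is adjacent (in blue) to everything
  have hnd : ∀ j : Fin (2*n+1), j ≠ 0 →
      ¬ (((F 0).val < n ∧ (F j).val < n) ∨
        (n ≤ (F 0).val ∧ n ≤ (F j).val ∧
          2 * min (max (F 0).val (F j).val - min (F 0).val (F j).val)
            (m - (max (F 0).val (F j).val - min (F 0).val (F j).val)) ≤ n - 1)) := by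
    intro j hj hd
    have h0 := (SimpleGraph.compl_adj _ _ _).mp (hF (show (fanGraph n).Adj 0 j from ⟨hj.symm, Or.inl rfl⟩))
    exact h0.2 ⟨h0.1, hd⟩
  rcases lt_or_ge (F 0).val n with hc | hc
  · -- center in A: all 2n other images are in H, |H| = m < 2n
    have hHj : ∀ j : Fin (2*n+1), j ≠ 0 → n ≤ (F j).val := by
      intro j hj
      have := hnd j hj
      omega
    obtain ⟨a, ha, b, hb, hab, heq⟩ :=
      Finset.exists_ne_map_eq_of_card_lt_of_maps_to
        (s := (Finset.univ : Finset (Fin (2*n+1))).erase 0) (t := Finset.range m)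
        (f := fun j => (F j).val - n)
        (by rw [Finset.card_erase_of_mem (Finset.mem_univ _), Finset.card_range,
              Finset.card_univ, Fintype.card_fin]; omega)
        (fun j hj => Finset.mem_range.mpr (by
          have h1 := hHj j (Finset.ne_of_mem_erase hj)
          have h2 := (F j).isLt
          show (F j).val - n < m
          omega))
    have h1 := hHj a (Finset.ne_of_mem_erase ha)
    have h2 := hHj b (Finset.ne_of_mem_erase hb)
    exact hab (F.injective (Fin.val_injective (by omega)))
  · -- center in H
    have hc' : (F 0).val - n < m := by have := (F 0).isLt; omega
    -- from each matching edge, pick the endpoint lying in H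
    have hx : ∀ i : Fin n, ∃ v : Fin N, n ≤ v.val ∧
        (v = F (pIdx n i) ∨ v = F (qIdx n i)) ∧
        ¬ (2 * min (max (F 0).val v.val - min (F 0).val v.val)
            (m - (max (F 0).val v.val - min (F 0).val v.val)) ≤ n - 1) ∧
        v.val ≠ (F 0).val := by
      intro i
      have hfan : (fanGraph n).Adj (pIdx n i) (qIdx n i) := by
        refine ⟨?_, Or.inr (Or.inr ?_)⟩
        · intro hh
          have := congrArg Fin.val hh
          simp [pIdx, qIdx] at this
        · show (2*i.val+1 - 1)/2 = (2*i.val+2 - 1)/2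
          omega
      have hfpq := (SimpleGraph.compl_adj _ _ _).mp (hF hfan)
      have hnotboth : ¬((F (pIdx n i)).val < n ∧ (F (qIdx n i)).val < n) := by
        intro hh
        exact hfpq.2 ⟨hfpq.1, Or.inl hh⟩
      rcases le_or_gt n (F (pIdx n i)).val with hge | hlt
      · refine ⟨F (pIdx n i), hge, Or.inl rfl, ?_, ?_⟩
        · have h3 := hnd (pIdx n i) (pIdx_ne_zero n i)
          omega
        · intro hh
          exact pIdx_ne_zero n i (F.injective (Fin.val_injective hh))
      · have hge : n ≤ (F (qIdx n i)).val := by omega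
        refine ⟨F (qIdx n i), hge, Or.inr rfl, ?_, ?_⟩
        · have h3 := hnd (qIdx n i) (qIdx_ne_zero n i)
          omega
        · intro hh
          exact qIdx_ne_zero n i (F.injective (Fin.val_injective hh))
    choose x hx1 hx2 hx3 hx4 using hx
    obtain ⟨a, -, b, -, hab, heq⟩ :=
      Finset.exists_ne_map_eq_of_card_lt_of_maps_to
        (s := (Finset.univ : Finset (Fin n)))
        (t := Finset.Ico ((n-1)/2 + 1) (m - (n-1)/2))
        (f := fun i => ((x i).val - n + m - ((F 0).val - n)) % m)
        (by rw [Nat.card_Ico, Finset.card_univ, Fintype.card_fin]; omega)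
        (fun i _ => by
          have h1 := hx1 i
          have h3 := hx3 i
          have h4 := hx4 i
          have ha' : (x i).val - n < m := by have := (x i).isLt; omega
          show ((x i).val - n + m - ((F 0).val - n)) % m ∈
            Finset.Ico ((n-1)/2 + 1) (m - (n-1)/2)
          rw [mod_val (by omega) hc' ha', Finset.mem_Ico]
          split_ifs <;> omega)
    have h1a := hx1 a
    have h1b := hx1 b
    have hvv : (x a).val - n = (x b).val - n :=
      mod_inj hc' (by have := (x a).isLt; omega) (by have := (x b).isLt; omega) heq
    have hxx : x a = x b := Fin.val_injective (by omega)
    rcases hx2 a with h2a | h2a <;> rcases hx2 b with h2b | h2b <;>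
      · rw [h2a, h2b] at hxx
        have hj := F.injective hxx
        have hjv := congrArg Fin.val hj
        simp [pIdx, qIdx] at hjv
        exact hab (Fin.val_injective (by omega))

/-- For every `n ≥ 1`, with `ε = 0` if `n` is odd and `ε = 1` if `n` is even,
there is a red-blue coloring of the complete graph on `3n - 1 - ε` vertices with
no red `K_{1,n}` and no blue `F_n`. -/
theorem star_fan_lower (n : ℕ) (hn : 1 ≤ n) :
    ∃ R : SimpleGraph (Fin (3 * n - 1 - if Odd n then 0 else 1)),
      ¬ ContainsCopy R (starGraph n) ∧ ¬ ContainsCopy Rᶜ (fanGraph n) := by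
  by_cases hodd : Odd n
  · rw [if_pos hodd]
    have h1 : n % 2 = 1 := Nat.odd_iff.mp hodd
    exact ⟨myGraph n (2*n-1) _,
      no_red_star n (2*n-1) _ hn (by omega) (Or.inl ⟨h1, rfl⟩),
      no_blue_fan n (2*n-1) _ hn (by omega) (Or.inl ⟨h1, rfl⟩)⟩
  · rw [if_neg hodd]
    have h1 : n % 2 = 0 := Nat.even_iff.mp (Nat.not_odd_iff_even.mp hodd)
    exact ⟨myGraph n (2*n-2) _,
      no_red_star n (2*n-2) _ hn (by omega) (Or.inr ⟨h1, rfl⟩),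
      no_blue_fan n (2*n-2) _ hn (by omega) (Or.inr ⟨h1, rfl⟩)⟩
end

section
/- For every odd integer n ≥ 1, there exists a red-blue edge-coloring of the complete graph on 4n + 1 vertices with no monochromatic copy of the fan F_n; consequently R_2(F_n) ≥ 4n + 2 for all odd n ≥ 1. -/
set_option maxHeartbeats 1000000

def blueRel (n : ℕ) (u v : ℕ) : Prop :=
  (u < 2*n ∧ 2*n ≤ v) ∨ (v < 2*n ∧ 2*n ≤ u) ∨
  (u = 2*n ∧ 2*n+1 ≤ v ∧ v ≤ 3*n-1) ∨ (v = 2*n ∧ 2*n+1 ≤ u ∧ u ≤ 3*n-1) ∨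
  (u = 3*n ∧ 3*n+1 ≤ v ∧ v ≤ 4*n-1) ∨ (v = 3*n ∧ 3*n+1 ≤ u ∧ u ≤ 4*n-1) ∨
  (u = 4*n-1 ∧ v = 4*n) ∨ (v = 4*n-1 ∧ u = 4*n)

namespace blueRel

variable {n u v : ℕ}

lemma symm (h : blueRel n u v) : blueRel n v u := by unfold blueRel at *; tauto

lemma nb1 (h : ¬ blueRel n u v) (hv : u < 2*n) : v < 2*n := by
  by_contra hc; exact h (Or.inl ⟨hv, by omega⟩)

lemma nb2 (h : ¬ blueRel n u v) (hv : 2*n ≤ u) : 2*n ≤ v := by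
  by_contra hc; exact h (Or.inr (Or.inl ⟨by omega, hv⟩))

lemma nb3 (h : ¬ blueRel n u v) (hv : u = 2*n) : ¬(2*n+1 ≤ v ∧ v ≤ 3*n-1) :=
  fun hc => h (Or.inr (Or.inr (Or.inl ⟨hv, hc.1, hc.2⟩)))

lemma nb4 (h : ¬ blueRel n u v) (hv1 : 2*n+1 ≤ u) (hv2 : u ≤ 3*n-1) : v ≠ 2*n :=
  fun hc => h (Or.inr (Or.inr (Or.inr (Or.inl ⟨hc, hv1, hv2⟩))))

lemma nb5 (h : ¬ blueRel n u v) (hv : u = 3*n) : ¬(3*n+1 ≤ v ∧ v ≤ 4*n-1) :=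
  fun hc => h (Or.inr (Or.inr (Or.inr (Or.inr (Or.inl ⟨hv, hc.1, hc.2⟩)))))

lemma nb6 (h : ¬ blueRel n u v) (hv1 : 3*n+1 ≤ u) (hv2 : u ≤ 4*n-1) : v ≠ 3*n :=
  fun hc => h (Or.inr (Or.inr (Or.inr (Or.inr (Or.inr (Or.inl ⟨hc, hv1, hv2⟩))))))

lemma nb7 (h : ¬ blueRel n u v) (hv : u = 4*n-1) : v ≠ 4*n :=
  fun hc => h (Or.inr (Or.inr (Or.inr (Or.inr (Or.inr (Or.inr (Or.inl ⟨hv, hc⟩)))))))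

lemma nb8 (h : ¬ blueRel n u v) (hv : u = 4*n) : v ≠ 4*n-1 :=
  fun hc => h (Or.inr (Or.inr (Or.inr (Or.inr (Or.inr (Or.inr (Or.inr ⟨hc, hv⟩)))))))

end blueRel

def bigRed (n : ℕ) : SimpleGraph (Fin (4*n+1)) where
  Adj u v := u ≠ v ∧ ¬ blueRel n u.val v.val
  symm := by constructor; exact fun u v ⟨h1, h2⟩ => ⟨h1.symm, fun hb => h2 hb.symm⟩
  loopless := by constructor; exact fun v h => h.1 rfl

lemma bigRed_adj_val {n : ℕ} {u v : Fin (4*n+1)} (h : (bigRed n).Adj u v) :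
    u.val ≠ v.val ∧ ¬ blueRel n u.val v.val :=
  ⟨fun hh => h.1 (Fin.ext hh), h.2⟩

lemma bigRed_compl_adj_val {n : ℕ} {u v : Fin (4*n+1)} (h : ((bigRed n)ᶜ).Adj u v) :
    u.val ≠ v.val ∧ blueRel n u.val v.val := by
  obtain ⟨hne, hn2⟩ := h
  refine ⟨fun hh => hne (Fin.ext hh), ?_⟩
  by_contra hb
  exact hn2 ⟨hne, hb⟩

section Lemmas

variable {q n : ℕ} {G : SimpleGraph (Fin q)}

lemma fan_center_adj (n : ℕ) (j : Fin (2*n+1)) (hj : j ≠ 0) : (fanGraph n).Adj 0 j :=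
  ⟨fun h => hj h.symm, Or.inl rfl⟩

lemma fan_pair_adj (n k : ℕ) (hk : k < n) :
    (fanGraph n).Adj ⟨2*k+1, by omega⟩ ⟨2*k+2, by omega⟩ := by
  refine ⟨Fin.ne_of_val_ne (show 2*k+1 ≠ 2*k+2 by omega), Or.inr (Or.inr ?_)⟩
  show (2*k+1-1)/2 = (2*k+2-1)/2
  omega

lemma nb_adj (f : Fin (2*n+1) ↪ Fin q)
    (hom : ∀ ⦃a b⦄, (fanGraph n).Adj a b → G.Adj (f a) (f b))
    (i : Fin (2*n)) : G.Adj (f 0) (f ⟨i.val+1, by omega⟩) :=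
  hom (fan_center_adj n _ (Fin.ne_of_val_ne (by simp)))

lemma no_fan_small (hn : 1 ≤ n)
    (f : Fin (2*n+1) ↪ Fin q)
    (hom : ∀ ⦃a b⦄, (fanGraph n).Adj a b → G.Adj (f a) (f b))
    (ψ : Fin q → ℕ)
    (hbd : ∀ u, G.Adj (f 0) u → ψ u < 2*n - 1)
    (hinj : ∀ u w, G.Adj (f 0) u → G.Adj (f 0) w → ψ u = ψ w → u = w) : False := by
  have key := nb_adj f hom
  have hcard : (Finset.univ : Finset (Fin (2*n))).card ≤ (Finset.range (2*n-1)).card := by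
    apply Finset.card_le_card_of_injOn (fun i => ψ (f ⟨i.val+1, by omega⟩))
    · intro i _
      exact Finset.mem_range.2 (hbd _ (key i))
    · intro i _ j _ h
      have h2 := hinj _ _ (key i) (key j) h
      have h3 := f.injective h2
      have h4 := congrArg Fin.val h3
      simp only at h4
      exact Fin.ext (by omega)
  simp only [Finset.card_univ, Fintype.card_fin, Finset.card_range] at hcard
  omega

theorem bigRed_no_red (n : ℕ) (hn4 : 4 ≤ n) : ¬ ContainsCopy (bigRed n) (fanGraph n) := by
  rintro ⟨f, hom⟩
  have hn : 1 ≤ n := by omega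
  have hvlt : (f 0).val < 4*n+1 := (f 0).isLt
  by_cases h1 : (f 0).val < 2*n
  · refine no_fan_small hn f hom (fun u => if u.val < (f 0).val then u.val else u.val - 1) ?_ ?_
    · intro u hadj
      obtain ⟨hne, hnb⟩ := bigRed_adj_val hadj
      have e1 := blueRel.nb1 hnb h1
      split_ifs <;> omega
    · intro u w hu hw heq
      obtain ⟨hneu, hnbu⟩ := bigRed_adj_val hu
      obtain ⟨hnew, hnbw⟩ := bigRed_adj_val hw
      have e1 := blueRel.nb1 hnbu h1
      have e2 := blueRel.nb1 hnbw h1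
      refine Fin.ext ?_
      split_ifs at heq <;> omega
  · by_cases h2 : (f 0).val = 2*n
    · refine no_fan_small hn f hom (fun u => u.val - 3*n) ?_ ?_
      · intro u hadj
        obtain ⟨hne, hnb⟩ := bigRed_adj_val hadj
        have e1 := blueRel.nb2 hnb (by omega)
        have e2 := blueRel.nb3 hnb h2
        omega
      · intro u w hu hw heq
        obtain ⟨hneu, hnbu⟩ := bigRed_adj_val hu
        obtain ⟨hnew, hnbw⟩ := bigRed_adj_val hw
        have e1 := blueRel.nb2 hnbu (by omega)
        have e2 := blueRel.nb3 hnbu h2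
        have e3 := blueRel.nb2 hnbw (by omega)
        have e4 := blueRel.nb3 hnbw h2
        exact Fin.ext (by omega)
    · by_cases h3 : (f 0).val < 3*n
      · refine no_fan_small hn f hom
          (fun u => if u.val < (f 0).val then u.val - (2*n+1) else u.val - (2*n+2)) ?_ ?_
        · intro u hadj
          obtain ⟨hne, hnb⟩ := bigRed_adj_val hadj
          have e1 := blueRel.nb2 hnb (by omega)
          have e2 := blueRel.nb4 hnb (by omega) (by omega)
          split_ifs <;> omega
        · intro u w hu hw heq
          obtain ⟨hneu, hnbu⟩ := bigRed_adj_val hu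
          obtain ⟨hnew, hnbw⟩ := bigRed_adj_val hw
          have e1 := blueRel.nb2 hnbu (by omega)
          have e2 := blueRel.nb4 hnbu (by omega) (by omega)
          have e3 := blueRel.nb2 hnbw (by omega)
          have e4 := blueRel.nb4 hnbw (by omega) (by omega)
          refine Fin.ext ?_
          split_ifs at heq <;> omega
      · by_cases h4 : (f 0).val = 3*n
        · refine no_fan_small hn f hom (fun u => if u.val = 4*n then n else u.val - 2*n) ?_ ?_
          · intro u hadj
            obtain ⟨hne, hnb⟩ := bigRed_adj_val hadj
            have e1 := blueRel.nb2 hnb (by omega)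
            have e2 := blueRel.nb5 hnb h4
            split_ifs <;> omega
          · intro u w hu hw heq
            obtain ⟨hneu, hnbu⟩ := bigRed_adj_val hu
            obtain ⟨hnew, hnbw⟩ := bigRed_adj_val hw
            have e1 := blueRel.nb2 hnbu (by omega)
            have e2 := blueRel.nb5 hnbu h4
            have e3 := blueRel.nb2 hnbw (by omega)
            have e4 := blueRel.nb5 hnbw h4
            refine Fin.ext ?_
            split_ifs at heq <;> omega
        · by_cases h5 : (f 0).val < 4*n
          · refine no_fan_small hn f hom
              (fun u => if u.val < 3*n then u.val - 2*n else
                 if u.val < (f 0).val then u.val - (2*n+1) else u.val - (2*n+2)) ?_ ?_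
            · intro u hadj
              obtain ⟨hne, hnb⟩ := bigRed_adj_val hadj
              have e1 := blueRel.nb2 hnb (by omega)
              have e2 := blueRel.nb6 hnb (by omega) (by omega)
              split_ifs <;> omega
            · intro u w hu hw heq
              obtain ⟨hneu, hnbu⟩ := bigRed_adj_val hu
              obtain ⟨hnew, hnbw⟩ := bigRed_adj_val hw
              have e1 := blueRel.nb2 hnbu (by omega)
              have e2 := blueRel.nb6 hnbu (by omega) (by omega)
              have e3 := blueRel.nb2 hnbw (by omega)
              have e4 := blueRel.nb6 hnbw (by omega) (by omega)
              refine Fin.ext ?_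
              split_ifs at heq <;> omega
          · have h6 : (f 0).val = 4*n := by omega
            refine no_fan_small hn f hom (fun u => u.val - 2*n) ?_ ?_
            · intro u hadj
              obtain ⟨hne, hnb⟩ := bigRed_adj_val hadj
              have e1 := blueRel.nb2 hnb (by omega)
              have e2 := blueRel.nb8 hnb h6
              omega
            · intro u w hu hw heq
              obtain ⟨hneu, hnbu⟩ := bigRed_adj_val hu
              obtain ⟨hnew, hnbw⟩ := bigRed_adj_val hw
              have e1 := blueRel.nb2 hnbu (by omega)
              have e3 := blueRel.nb2 hnbw (by omega)
              exact Fin.ext (by omega)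

end Lemmas

namespace blueRel

variable {n vv uu : ℕ}

lemma b1 (h : blueRel n vv uu) (hn : 4 ≤ n) (hv : vv < 2*n) : 2*n ≤ uu := by
  rcases h with h|h|h|h|h|h|h|h <;> omega

lemma b2 (h : blueRel n vv uu) (hn : 4 ≤ n) (hv : vv = 2*n) :
    uu < 2*n ∨ (2*n+1 ≤ uu ∧ uu ≤ 3*n-1) := by
  rcases h with h|h|h|h|h|h|h|h <;> omega

lemma b3 (h : blueRel n vv uu) (hn : 4 ≤ n) (hv1 : 2*n+1 ≤ vv) (hv2 : vv ≤ 3*n-1) :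
    uu < 2*n ∨ uu = 2*n := by
  rcases h with h|h|h|h|h|h|h|h <;> omega

lemma b4 (h : blueRel n vv uu) (hn : 4 ≤ n) (hv : vv = 3*n) :
    uu < 2*n ∨ (3*n+1 ≤ uu ∧ uu ≤ 4*n-1) := by
  rcases h with h|h|h|h|h|h|h|h <;> omega

lemma b5 (h : blueRel n vv uu) (hn : 4 ≤ n) (hv1 : 3*n+1 ≤ vv) (hv2 : vv ≤ 4*n-2) :
    uu < 2*n ∨ uu = 3*n := by
  rcases h with h|h|h|h|h|h|h|h <;> omega

lemma b6 (h : blueRel n vv uu) (hn : 4 ≤ n) (hv : vv = 4*n-1) :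
    uu < 2*n ∨ uu = 3*n ∨ uu = 4*n := by
  rcases h with h|h|h|h|h|h|h|h <;> omega

lemma b7 (h : blueRel n vv uu) (hn : 4 ≤ n) (hv : vv = 4*n) :
    uu < 2*n ∨ uu = 4*n-1 := by
  rcases h with h|h|h|h|h|h|h|h <;> omega

end blueRel

section BlueSide

variable {q n : ℕ} {G : SimpleGraph (Fin q)}

lemma no_fan_cover (hn : 1 ≤ n)
    (f : Fin (2*n+1) ↪ Fin q)
    (hom : ∀ ⦃a b⦄, (fanGraph n).Adj a b → G.Adj (f a) (f b))
    (ψ : Fin q → ℕ)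
    (hcov : ∀ u w, G.Adj (f 0) u → G.Adj (f 0) w → G.Adj u w → ψ u < n - 1 ∨ ψ w < n - 1)
    (hinj : ∀ u w, G.Adj (f 0) u → G.Adj (f 0) w → ψ u < n - 1 → ψ w < n - 1 →
       ψ u = ψ w → u = w) : False := by
  have key := nb_adj f hom
  have pairadj : ∀ k : Fin n, G.Adj (f ⟨2*k.val+1, by omega⟩) (f ⟨2*k.val+2, by omega⟩) :=
    fun k => hom (fan_pair_adj n k.val k.isLt)
  have keyA : ∀ k : Fin n, G.Adj (f 0) (f ⟨2*k.val+1, by omega⟩) := by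
    intro k
    have h2 := key ⟨2*k.val, by omega⟩
    have e : (⟨2*k.val+1, by omega⟩ : Fin (2*n+1)) = ⟨(2*k.val)+1, by omega⟩ := rfl
    rwa [e]
  have keyB : ∀ k : Fin n, G.Adj (f 0) (f ⟨2*k.val+2, by omega⟩) := by
    intro k
    have h2 := key ⟨2*k.val+1, by omega⟩
    have e : (⟨2*k.val+2, by omega⟩ : Fin (2*n+1)) = ⟨(2*k.val+1)+1, by omega⟩ := rfl
    rwa [e]
  set g : Fin n → Fin q := fun k =>
    if ψ (f ⟨2*k.val+1, by omega⟩) < n - 1 then f ⟨2*k.val+1, by omega⟩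
    else f ⟨2*k.val+2, by omega⟩ with hg
  have hgZ : ∀ k, ψ (g k) < n - 1 := by
    intro k
    rw [hg]
    by_cases h : ψ (f ⟨2*k.val+1, by omega⟩) < n - 1
    · simp [h]
    · simp only [h, if_false]
      rcases hcov _ _ (keyA k) (keyB k) (pairadj k) with h1 | h2
      · exact absurd h1 h
      · exact h2
  have hcard : (Finset.univ : Finset (Fin n)).card ≤ (Finset.range (n-1)).card := by
    apply Finset.card_le_card_of_injOn (fun k => ψ (g k))
    · intro k _
      exact Finset.mem_range.2 (hgZ k)
    · intro i _ j _ h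
      have hadji : G.Adj (f 0) (g i) := by
        rw [hg]; by_cases h' : ψ (f ⟨2*i.val+1, by omega⟩) < n - 1 <;> simp [h', keyA, keyB]
      have hadjj : G.Adj (f 0) (g j) := by
        rw [hg]; by_cases h' : ψ (f ⟨2*j.val+1, by omega⟩) < n - 1 <;> simp [h', keyA, keyB]
      have h2 := hinj _ _ hadji hadjj (hgZ i) (hgZ j) h
      rw [hg] at h2
      have : i.val = j.val := by
        by_cases hi : ψ (f ⟨2*i.val+1, by omega⟩) < n - 1 <;>
        by_cases hj : ψ (f ⟨2*j.val+1, by omega⟩) < n - 1 <;>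
        simp only [hi, hj, if_true, if_false] at h2 <;>
        · have := congrArg Fin.val (f.injective h2); simp only at this; omega
      exact Fin.ext this
  simp only [Finset.card_univ, Fintype.card_fin, Finset.card_range] at hcard
  omega

lemma no_fan_iso (hn : 1 ≤ n)
    (f : Fin (2*n+1) ↪ Fin q)
    (hom : ∀ ⦃a b⦄, (fanGraph n).Adj a b → G.Adj (f a) (f b))
    (ψ : Fin q → ℕ)
    (hbd : ∀ u, G.Adj (f 0) u → ψ u < 2*n)
    (hinj : ∀ u w, G.Adj (f 0) u → G.Adj (f 0) w → ψ u = ψ w → u = w)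
    (u0 : Fin q) (hu0 : G.Adj (f 0) u0)
    (hiso : ∀ w, G.Adj (f 0) w → ¬ G.Adj u0 w) : False := by
  have key := nb_adj f hom
  have hex : ∃ i : Fin (2*n), f ⟨i.val+1, by omega⟩ = u0 := by
    by_contra hno
    push_neg at hno
    have hcard : (Finset.univ : Finset (Fin (2*n+1))).card ≤ (Finset.range (2*n)).card := by
      apply Finset.card_le_card_of_injOn
        (fun j => if j.val = 0 then ψ u0 else ψ (f j))
      · intro j _
        by_cases h : j.val = 0
        · simp only [h, if_pos]
          exact Finset.mem_range.2 (hbd _ hu0)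
        · simp only [h, if_neg, if_false]
          refine Finset.mem_range.2 (hbd _ ?_)
          have h2 := key ⟨j.val - 1, by omega⟩
          have e : (⟨(j.val - 1) + 1, by omega⟩ : Fin (2*n+1)) = j := Fin.ext (by simp; omega)
          rwa [e] at h2
      · intro a _ b _ hab
        have adjf : ∀ (j : Fin (2*n+1)), j.val ≠ 0 → G.Adj (f 0) (f j) := by
          intro j hj
          have h2 := key ⟨j.val - 1, by omega⟩
          have e : (⟨(j.val - 1) + 1, by omega⟩ : Fin (2*n+1)) = j := Fin.ext (by simp; omega)
          rwa [e] at h2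
        by_cases ha : a.val = 0 <;> by_cases hb : b.val = 0 <;>
          simp only [ha, hb, if_pos, if_neg, if_false, if_true] at hab
        · exact Fin.ext (by omega)
        · exfalso
          have := hinj _ _ hu0 (adjf b hb) hab
          have e : (⟨(b.val - 1) + 1, by omega⟩ : Fin (2*n+1)) = b := Fin.ext (by simp; omega)
          exact hno ⟨b.val - 1, by omega⟩ (by rw [e]; exact this.symm)
        · exfalso
          have := hinj _ _ (adjf a ha) hu0 hab
          have e : (⟨(a.val - 1) + 1, by omega⟩ : Fin (2*n+1)) = a := Fin.ext (by simp; omega)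
          exact hno ⟨a.val - 1, by omega⟩ (by rw [e]; exact this)
        · exact f.injective (hinj _ _ (adjf a ha) (adjf b hb) hab)
    simp only [Finset.card_univ, Fintype.card_fin, Finset.card_range] at hcard
    omega
  obtain ⟨i, hi⟩ := hex
  have hk : i.val / 2 < n := by omega
  have hpadj := hom (fan_pair_adj n (i.val/2) hk)
  rcases Nat.even_or_odd i.val with he | ho
  · -- i even : u0 = f ⟨2*(i/2)+1⟩, partner ⟨2*(i/2)+2⟩
    obtain ⟨c, hc⟩ := he
    have e1 : (⟨2*(i.val/2)+1, by omega⟩ : Fin (2*n+1)) = ⟨i.val+1, by omega⟩ :=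
      Fin.ext (by simp; omega)
    rw [e1, hi] at hpadj
    have hctr := key ⟨2*(i.val/2)+1, by omega⟩
    have e2 : (⟨2*(i.val/2)+1+1, by omega⟩ : Fin (2*n+1)) = ⟨2*(i.val/2)+2, by omega⟩ :=
      Fin.ext (by simp)
    rw [e2] at hctr
    exact hiso _ hctr hpadj
  · obtain ⟨c, hc⟩ := ho
    have e1 : (⟨2*(i.val/2)+2, by omega⟩ : Fin (2*n+1)) = ⟨i.val+1, by omega⟩ :=
      Fin.ext (by simp; omega)
    rw [e1, hi] at hpadj
    have hctr := key ⟨2*(i.val/2), by omega⟩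
    have e2 : (⟨2*(i.val/2)+1, by omega⟩ : Fin (2*n+1)) = ⟨2*(i.val/2)+1, by omega⟩ := rfl
    rw [e2] at hctr
    exact hiso _ hctr hpadj.symm


theorem bigRed_no_blue (n : ℕ) (hn4 : 4 ≤ n) : ¬ ContainsCopy (bigRed n)ᶜ (fanGraph n) := by
  rintro ⟨f, hom⟩
  have hn : 1 ≤ n := by omega
  have hvlt : (f 0).val < 4*n+1 := (f 0).isLt
  by_cases h1 : (f 0).val < 2*n
  · refine no_fan_cover hn f hom
      (fun u => if u.val = 2*n then 0 else if u.val = 3*n then 1 else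
        if u.val = 4*n-1 then 2 else n) ?_ ?_
    · intro u w hu hw huw
      obtain ⟨hneu, hbu⟩ := bigRed_compl_adj_val hu
      obtain ⟨hnew, hbw⟩ := bigRed_compl_adj_val hw
      obtain ⟨hneuw, hbuw⟩ := bigRed_compl_adj_val huw
      have Hu := blueRel.b1 hbu hn4 h1
      have Hw := blueRel.b1 hbw hn4 h1
      rcases hbuw with h|h|h|h|h|h|h|h <;> split_ifs <;> omega
    · intro u w hu hw hpu hpw heq
      refine Fin.ext ?_
      split_ifs at hpu hpw heq <;> omega
  · by_cases h2 : (f 0).val = 2*n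
    · refine no_fan_cover hn f hom
        (fun u => if 2*n+1 ≤ u.val ∧ u.val ≤ 3*n-1 then u.val - (2*n+1) else n) ?_ ?_
      · intro u w hu hw huw
        obtain ⟨hneu, hbu⟩ := bigRed_compl_adj_val hu
        obtain ⟨hnew, hbw⟩ := bigRed_compl_adj_val hw
        obtain ⟨hneuw, hbuw⟩ := bigRed_compl_adj_val huw
        have Hu := blueRel.b2 hbu hn4 h2
        have Hw := blueRel.b2 hbw hn4 h2
        rcases hbuw with h|h|h|h|h|h|h|h <;> split_ifs <;> omega
      · intro u w hu hw hpu hpw heq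
        refine Fin.ext ?_
        split_ifs at hpu hpw heq <;> omega
    · by_cases h3 : (f 0).val < 3*n
      · refine no_fan_cover hn f hom (fun u => if u.val = 2*n then 0 else n) ?_ ?_
        · intro u w hu hw huw
          obtain ⟨hneu, hbu⟩ := bigRed_compl_adj_val hu
          obtain ⟨hnew, hbw⟩ := bigRed_compl_adj_val hw
          obtain ⟨hneuw, hbuw⟩ := bigRed_compl_adj_val huw
          have Hu := blueRel.b3 hbu hn4 (by omega) (by omega)
          have Hw := blueRel.b3 hbw hn4 (by omega) (by omega)
          rcases hbuw with h|h|h|h|h|h|h|h <;> split_ifs <;> omega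
        · intro u w hu hw hpu hpw heq
          refine Fin.ext ?_
          split_ifs at hpu hpw heq <;> omega
      · by_cases h4 : (f 0).val = 3*n
        · refine no_fan_cover hn f hom
            (fun u => if 3*n+1 ≤ u.val ∧ u.val ≤ 4*n-1 then u.val - (3*n+1) else n) ?_ ?_
          · intro u w hu hw huw
            obtain ⟨hneu, hbu⟩ := bigRed_compl_adj_val hu
            obtain ⟨hnew, hbw⟩ := bigRed_compl_adj_val hw
            obtain ⟨hneuw, hbuw⟩ := bigRed_compl_adj_val huw
            have Hu := blueRel.b4 hbu hn4 h4
            have Hw := blueRel.b4 hbw hn4 h4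
            rcases hbuw with h|h|h|h|h|h|h|h <;> split_ifs <;> omega
          · intro u w hu hw hpu hpw heq
            refine Fin.ext ?_
            split_ifs at hpu hpw heq <;> omega
        · by_cases h5 : (f 0).val ≤ 4*n-2
          · refine no_fan_cover hn f hom (fun u => if u.val = 3*n then 0 else n) ?_ ?_
            · intro u w hu hw huw
              obtain ⟨hneu, hbu⟩ := bigRed_compl_adj_val hu
              obtain ⟨hnew, hbw⟩ := bigRed_compl_adj_val hw
              obtain ⟨hneuw, hbuw⟩ := bigRed_compl_adj_val huw
              have Hu := blueRel.b5 hbu hn4 (by omega) (by omega)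
              have Hw := blueRel.b5 hbw hn4 (by omega) (by omega)
              rcases hbuw with h|h|h|h|h|h|h|h <;> split_ifs <;> omega
            · intro u w hu hw hpu hpw heq
              refine Fin.ext ?_
              split_ifs at hpu hpw heq <;> omega
          · by_cases h6 : (f 0).val = 4*n-1
            · refine no_fan_cover hn f hom
                (fun u => if u.val = 3*n then 0 else if u.val = 4*n then 1 else n) ?_ ?_
              · intro u w hu hw huw
                obtain ⟨hneu, hbu⟩ := bigRed_compl_adj_val hu
                obtain ⟨hnew, hbw⟩ := bigRed_compl_adj_val hw
                obtain ⟨hneuw, hbuw⟩ := bigRed_compl_adj_val huw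
                have Hu := blueRel.b6 hbu hn4 h6
                have Hw := blueRel.b6 hbw hn4 h6
                rcases hbuw with h|h|h|h|h|h|h|h <;> split_ifs <;> omega
              · intro u w hu hw hpu hpw heq
                refine Fin.ext ?_
                split_ifs at hpu hpw heq <;> omega
            · have h7 : (f 0).val = 4*n := by omega
              refine no_fan_cover hn f hom (fun u => if u.val = 4*n-1 then 0 else n) ?_ ?_
              · intro u w hu hw huw
                obtain ⟨hneu, hbu⟩ := bigRed_compl_adj_val hu
                obtain ⟨hnew, hbw⟩ := bigRed_compl_adj_val hw
                obtain ⟨hneuw, hbuw⟩ := bigRed_compl_adj_val huw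
                have Hu := blueRel.b7 hbu hn4 h7
                have Hw := blueRel.b7 hbw hn4 h7
                rcases hbuw with h|h|h|h|h|h|h|h <;> split_ifs <;> omega
              · intro u w hu hw hpu hpw heq
                refine Fin.ext ?_
                split_ifs at hpu hpw heq <;> omega

end BlueSide

def m3 : Fin 13 → Fin 13 → Bool :=
  ![![false, false, true, false, true, false, true, false, true, false, true, true, false],
    ![false, false, true, false, false, false, true, true, true, false, true, false, true],
    ![true, true, false, false, false, false, false, false, true, true, false, true, true],
    ![false, false, false, false, true, true, true, true, true, false, true, false, false],
    ![true, false, false, true, false, true, false, false, false, true, false, true, true],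
    ![false, false, false, true, true, false, true, true, false, true, true, false, false],
    ![true, true, false, true, false, true, false, false, false, true, false, true, false],
    ![false, true, false, true, false, true, false, false, false, true, false, true, true],
    ![true, true, true, true, false, false, false, false, false, false, false, true, true],
    ![false, false, true, false, true, true, true, true, false, false, true, false, false],
    ![true, true, false, true, false, true, false, false, false, true, false, false, true],
    ![true, false, true, false, true, false, true, true, true, false, false, false, false],
    ![false, true, true, false, true, false, false, true, true, false, true, false, false]]

lemma m3_symm : ∀ u v, m3 u v = m3 v u := by decide

def red3 : SimpleGraph (Fin 13) where
  Adj u v := m3 u v = true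
  symm := by constructor; intro u v h; rw [m3_symm]; exact h
  loopless := by constructor; intro v; show ¬ (m3 v v = true); revert v; decide

instance : DecidableRel red3.Adj := fun u v => inferInstanceAs (Decidable (m3 u v = true))
instance : DecidableRel (red3ᶜ.Adj) :=
  fun u v => inferInstanceAs (Decidable (u ≠ v ∧ ¬ red3.Adj u v))

theorem red3_no_red : ¬ ContainsCopy red3 (fanGraph 3) := by
  rintro ⟨f, hom⟩
  obtain ⟨m, hm⟩ : ∃ m : Fin 13, f 0 = m := ⟨f 0, rfl⟩
  fin_cases m
  · refine no_fan_cover (by norm_num) f hom (fun u => if u = (2 : Fin 13) then 0 else if u = (11 : Fin 13) then 1 else 3) ?_ ?_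
    · intro u w hu hw huw
      rw [hm] at hu hw
      revert hu hw huw
      revert u w
      decide
    · intro u w hu hw hpu hpw heq
      rw [hm] at hu hw
      revert hu hw hpu hpw heq
      revert u w
      decide
  · refine no_fan_cover (by norm_num) f hom (fun u => if u = (2 : Fin 13) then 0 else if u = (12 : Fin 13) then 1 else 3) ?_ ?_
    · intro u w hu hw huw
      rw [hm] at hu hw
      revert hu hw huw
      revert u w
      decide
    · intro u w hu hw hpu hpw heq
      rw [hm] at hu hw
      revert hu hw hpu hpw heq
      revert u w
      decide
  · refine no_fan_iso (by norm_num) f hom (fun u => if u = (0 : Fin 13) then 0 else if u = (1 : Fin 13) then 1 else if u = (8 : Fin 13) then 2 else if u = (9 : Fin 13) then 3 else if u = (11 : Fin 13) then 4 else 5) ?_ ?_ (9 : Fin 13) ?_ ?_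
    · intro u hu
      rw [hm] at hu
      revert hu; revert u; decide
    · intro u w hu hw heq
      rw [hm] at hu hw
      revert hu hw heq; revert u w; decide
    · rw [hm]; decide
    · intro w hw
      rw [hm] at hw
      revert hw; revert w; decide
  · refine no_fan_cover (by norm_num) f hom (fun u => if u = (5 : Fin 13) then 0 else 3) ?_ ?_
    · intro u w hu hw huw
      rw [hm] at hu hw
      revert hu hw huw
      revert u w
      decide
    · intro u w hu hw hpu hpw heq
      rw [hm] at hu hw
      revert hu hw hpu hpw heq
      revert u w
      decide
  · refine no_fan_cover (by norm_num) f hom (fun u => if u = (0 : Fin 13) then 0 else if u = (5 : Fin 13) then 1 else 3) ?_ ?_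
    · intro u w hu hw huw
      rw [hm] at hu hw
      revert hu hw huw
      revert u w
      decide
    · intro u w hu hw hpu hpw heq
      rw [hm] at hu hw
      revert hu hw hpu hpw heq
      revert u w
      decide
  · refine no_fan_cover (by norm_num) f hom (fun u => if u = (3 : Fin 13) then 0 else if u = (9 : Fin 13) then 1 else 3) ?_ ?_
    · intro u w hu hw huw
      rw [hm] at hu hw
      revert hu hw huw
      revert u w
      decide
    · intro u w hu hw hpu hpw heq
      rw [hm] at hu hw
      revert hu hw hpu hpw heq
      revert u w
      decide
  · refine no_fan_cover (by norm_num) f hom (fun u => if u = (0 : Fin 13) then 0 else if u = (5 : Fin 13) then 1 else 3) ?_ ?_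
    · intro u w hu hw huw
      rw [hm] at hu hw
      revert hu hw huw
      revert u w
      decide
    · intro u w hu hw hpu hpw heq
      rw [hm] at hu hw
      revert hu hw hpu hpw heq
      revert u w
      decide
  · refine no_fan_cover (by norm_num) f hom (fun u => if u = (1 : Fin 13) then 0 else if u = (5 : Fin 13) then 1 else 3) ?_ ?_
    · intro u w hu hw huw
      rw [hm] at hu hw
      revert hu hw huw
      revert u w
      decide
    · intro u w hu hw hpu hpw heq
      rw [hm] at hu hw
      revert hu hw hpu hpw heq
      revert u w
      decide
  · refine no_fan_iso (by norm_num) f hom (fun u => if u = (0 : Fin 13) then 0 else if u = (1 : Fin 13) then 1 else if u = (2 : Fin 13) then 2 else if u = (3 : Fin 13) then 3 else if u = (11 : Fin 13) then 4 else 5) ?_ ?_ (3 : Fin 13) ?_ ?_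
    · intro u hu
      rw [hm] at hu
      revert hu; revert u; decide
    · intro u w hu hw heq
      rw [hm] at hu hw
      revert hu hw heq; revert u w; decide
    · rw [hm]; decide
    · intro w hw
      rw [hm] at hw
      revert hw; revert w; decide
  · refine no_fan_cover (by norm_num) f hom (fun u => if u = (5 : Fin 13) then 0 else 3) ?_ ?_
    · intro u w hu hw huw
      rw [hm] at hu hw
      revert hu hw huw
      revert u w
      decide
    · intro u w hu hw hpu hpw heq
      rw [hm] at hu hw
      revert hu hw hpu hpw heq
      revert u w
      decide
  · refine no_fan_cover (by norm_num) f hom (fun u => if u = (1 : Fin 13) then 0 else if u = (5 : Fin 13) then 1 else 3) ?_ ?_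
    · intro u w hu hw huw
      rw [hm] at hu hw
      revert hu hw huw
      revert u w
      decide
    · intro u w hu hw hpu hpw heq
      rw [hm] at hu hw
      revert hu hw hpu hpw heq
      revert u w
      decide
  · refine no_fan_cover (by norm_num) f hom (fun u => if u = (0 : Fin 13) then 0 else if u = (2 : Fin 13) then 1 else 3) ?_ ?_
    · intro u w hu hw huw
      rw [hm] at hu hw
      revert hu hw huw
      revert u w
      decide
    · intro u w hu hw hpu hpw heq
      rw [hm] at hu hw
      revert hu hw hpu hpw heq
      revert u w
      decide
  · refine no_fan_cover (by norm_num) f hom (fun u => if u = (1 : Fin 13) then 0 else if u = (2 : Fin 13) then 1 else 3) ?_ ?_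
    · intro u w hu hw huw
      rw [hm] at hu hw
      revert hu hw huw
      revert u w
      decide
    · intro u w hu hw hpu hpw heq
      rw [hm] at hu hw
      revert hu hw hpu hpw heq
      revert u w
      decide

theorem red3_no_blue : ¬ ContainsCopy red3ᶜ (fanGraph 3) := by
  rintro ⟨f, hom⟩
  obtain ⟨m, hm⟩ : ∃ m : Fin 13, f 0 = m := ⟨f 0, rfl⟩
  fin_cases m
  · refine no_fan_iso (by norm_num) f hom (fun u => if u = (1 : Fin 13) then 0 else if u = (3 : Fin 13) then 1 else if u = (5 : Fin 13) then 2 else if u = (7 : Fin 13) then 3 else if u = (9 : Fin 13) then 4 else 5) ?_ ?_ (7 : Fin 13) ?_ ?_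
    · intro u hu
      rw [hm] at hu
      revert hu; revert u; decide
    · intro u w hu hw heq
      rw [hm] at hu hw
      revert hu hw heq; revert u w; decide
    · rw [hm]; decide
    · intro w hw
      rw [hm] at hw
      revert hw; revert w; decide
  · refine no_fan_iso (by norm_num) f hom (fun u => if u = (0 : Fin 13) then 0 else if u = (3 : Fin 13) then 1 else if u = (4 : Fin 13) then 2 else if u = (5 : Fin 13) then 3 else if u = (9 : Fin 13) then 4 else 5) ?_ ?_ (4 : Fin 13) ?_ ?_
    · intro u hu
      rw [hm] at hu
      revert hu; revert u; decide
    · intro u w hu hw heq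
      rw [hm] at hu hw
      revert hu hw heq; revert u w; decide
    · rw [hm]; decide
    · intro w hw
      rw [hm] at hw
      revert hw; revert w; decide
  · refine no_fan_iso (by norm_num) f hom (fun u => if u = (3 : Fin 13) then 0 else if u = (4 : Fin 13) then 1 else if u = (5 : Fin 13) then 2 else if u = (6 : Fin 13) then 3 else if u = (7 : Fin 13) then 4 else 5) ?_ ?_ (3 : Fin 13) ?_ ?_
    · intro u hu
      rw [hm] at hu
      revert hu; revert u; decide
    · intro u w hu hw heq
      rw [hm] at hu hw
      revert hu hw heq; revert u w; decide
    · rw [hm]; decide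
    · intro w hw
      rw [hm] at hw
      revert hw; revert w; decide
  · refine no_fan_iso (by norm_num) f hom (fun u => if u = (0 : Fin 13) then 0 else if u = (1 : Fin 13) then 1 else if u = (2 : Fin 13) then 2 else if u = (9 : Fin 13) then 3 else if u = (11 : Fin 13) then 4 else 5) ?_ ?_ (2 : Fin 13) ?_ ?_
    · intro u hu
      rw [hm] at hu
      revert hu; revert u; decide
    · intro u w hu hw heq
      rw [hm] at hu hw
      revert hu hw heq; revert u w; decide
    · rw [hm]; decide
    · intro w hw
      rw [hm] at hw
      revert hw; revert w; decide
  · refine no_fan_iso (by norm_num) f hom (fun u => if u = (1 : Fin 13) then 0 else if u = (2 : Fin 13) then 1 else if u = (6 : Fin 13) then 2 else if u = (7 : Fin 13) then 3 else if u = (8 : Fin 13) then 4 else 5) ?_ ?_ (1 : Fin 13) ?_ ?_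
    · intro u hu
      rw [hm] at hu
      revert hu; revert u; decide
    · intro u w hu hw heq
      rw [hm] at hu hw
      revert hu hw heq; revert u w; decide
    · rw [hm]; decide
    · intro w hw
      rw [hm] at hw
      revert hw; revert w; decide
  · refine no_fan_cover (by norm_num) f hom (fun u => if u = (0 : Fin 13) then 0 else if u = (11 : Fin 13) then 1 else 3) ?_ ?_
    · intro u w hu hw huw
      rw [hm] at hu hw
      revert hu hw huw
      revert u w
      decide
    · intro u w hu hw hpu hpw heq
      rw [hm] at hu hw
      revert hu hw hpu hpw heq
      revert u w
      decide
  · refine no_fan_iso (by norm_num) f hom (fun u => if u = (2 : Fin 13) then 0 else if u = (4 : Fin 13) then 1 else if u = (7 : Fin 13) then 2 else if u = (8 : Fin 13) then 3 else if u = (10 : Fin 13) then 4 else 5) ?_ ?_ (12 : Fin 13) ?_ ?_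
    · intro u hu
      rw [hm] at hu
      revert hu; revert u; decide
    · intro u w hu hw heq
      rw [hm] at hu hw
      revert hu hw heq; revert u w; decide
    · rw [hm]; decide
    · intro w hw
      rw [hm] at hw
      revert hw; revert w; decide
  · refine no_fan_iso (by norm_num) f hom (fun u => if u = (0 : Fin 13) then 0 else if u = (2 : Fin 13) then 1 else if u = (4 : Fin 13) then 2 else if u = (6 : Fin 13) then 3 else if u = (8 : Fin 13) then 4 else 5) ?_ ?_ (0 : Fin 13) ?_ ?_
    · intro u hu
      rw [hm] at hu
      revert hu; revert u; decide
    · intro u w hu hw heq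
      rw [hm] at hu hw
      revert hu hw heq; revert u w; decide
    · rw [hm]; decide
    · intro w hw
      rw [hm] at hw
      revert hw; revert w; decide
  · refine no_fan_iso (by norm_num) f hom (fun u => if u = (4 : Fin 13) then 0 else if u = (5 : Fin 13) then 1 else if u = (6 : Fin 13) then 2 else if u = (7 : Fin 13) then 3 else if u = (9 : Fin 13) then 4 else 5) ?_ ?_ (5 : Fin 13) ?_ ?_
    · intro u hu
      rw [hm] at hu
      revert hu; revert u; decide
    · intro u w hu hw heq
      rw [hm] at hu hw
      revert hu hw heq; revert u w; decide
    · rw [hm]; decide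
    · intro w hw
      rw [hm] at hw
      revert hw; revert w; decide
  · refine no_fan_iso (by norm_num) f hom (fun u => if u = (0 : Fin 13) then 0 else if u = (1 : Fin 13) then 1 else if u = (3 : Fin 13) then 2 else if u = (8 : Fin 13) then 3 else if u = (11 : Fin 13) then 4 else 5) ?_ ?_ (8 : Fin 13) ?_ ?_
    · intro u hu
      rw [hm] at hu
      revert hu; revert u; decide
    · intro u w hu hw heq
      rw [hm] at hu hw
      revert hu hw heq; revert u w; decide
    · rw [hm]; decide
    · intro w hw
      rw [hm] at hw
      revert hw; revert w; decide
  · refine no_fan_iso (by norm_num) f hom (fun u => if u = (2 : Fin 13) then 0 else if u = (4 : Fin 13) then 1 else if u = (6 : Fin 13) then 2 else if u = (7 : Fin 13) then 3 else if u = (8 : Fin 13) then 4 else 5) ?_ ?_ (11 : Fin 13) ?_ ?_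
    · intro u hu
      rw [hm] at hu
      revert hu; revert u; decide
    · intro u w hu hw heq
      rw [hm] at hu hw
      revert hu hw heq; revert u w; decide
    · rw [hm]; decide
    · intro w hw
      rw [hm] at hw
      revert hw; revert w; decide
  · refine no_fan_iso (by norm_num) f hom (fun u => if u = (1 : Fin 13) then 0 else if u = (3 : Fin 13) then 1 else if u = (5 : Fin 13) then 2 else if u = (9 : Fin 13) then 3 else if u = (10 : Fin 13) then 4 else 5) ?_ ?_ (10 : Fin 13) ?_ ?_
    · intro u hu
      rw [hm] at hu
      revert hu; revert u; decide
    · intro u w hu hw heq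
      rw [hm] at hu hw
      revert hu hw heq; revert u w; decide
    · rw [hm]; decide
    · intro w hw
      rw [hm] at hw
      revert hw; revert w; decide
  · refine no_fan_iso (by norm_num) f hom (fun u => if u = (0 : Fin 13) then 0 else if u = (3 : Fin 13) then 1 else if u = (5 : Fin 13) then 2 else if u = (6 : Fin 13) then 3 else if u = (9 : Fin 13) then 4 else 5) ?_ ?_ (6 : Fin 13) ?_ ?_
    · intro u hu
      rw [hm] at hu
      revert hu; revert u; decide
    · intro u w hu hw heq
      rw [hm] at hu hw
      revert hu hw heq; revert u w; decide
    · rw [hm]; decide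
    · intro w hw
      rw [hm] at hw
      revert hw; revert w; decide
/- ## n = 1 : the pentagon -/

def pent : SimpleGraph (Fin 5) where
  Adj u v := (u.val + 1) % 5 = v.val ∨ (v.val + 1) % 5 = u.val
  symm := by constructor; intro u v h; tauto
  loopless := by constructor; intro v h; rcases h with h | h <;> omega

instance : DecidableRel pent.Adj :=
  fun u v => inferInstanceAs (Decidable (_ ∨ _))
instance : DecidableRel (pentᶜ.Adj) :=
  fun u v => inferInstanceAs (Decidable (u ≠ v ∧ ¬ pent.Adj u v))

theorem pent_no_red : ¬ ContainsCopy pent (fanGraph 1) := by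
  rintro ⟨f, hom⟩
  refine no_fan_cover le_rfl f hom (fun _ => 0) ?_ ?_
  · intro u w hu hw huw
    exact absurd huw ((by decide :
      ∀ c u w : Fin 5, pent.Adj c u → pent.Adj c w → ¬ pent.Adj u w) (f 0) u w hu hw)
  · intro u w _ _ hpu _ _
    exact absurd hpu (by omega)

theorem pent_no_blue : ¬ ContainsCopy pentᶜ (fanGraph 1) := by
  rintro ⟨f, hom⟩
  refine no_fan_cover le_rfl f hom (fun _ => 0) ?_ ?_
  · intro u w hu hw huw
    exact absurd huw ((by decide :
      ∀ c u w : Fin 5, pentᶜ.Adj c u → pentᶜ.Adj c w → ¬ pentᶜ.Adj u w) (f 0) u w hu hw)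
  · intro u w _ _ hpu _ _
    exact absurd hpu (by omega)

/- ## assembling -/

lemma copy_of_comap {α β γ : Type*} (φ : α ↪ β) (G : SimpleGraph β) (H : SimpleGraph γ)
    (h : ContainsCopy (G.comap φ) H) : ContainsCopy G H := by
  obtain ⟨f, hf⟩ := h
  exact ⟨f.trans φ, fun a b hab => hf hab⟩

lemma copy_of_comap_compl {α β γ : Type*} (φ : α ↪ β) (G : SimpleGraph β) (H : SimpleGraph γ)
    (h : ContainsCopy (G.comap φ)ᶜ H) : ContainsCopy Gᶜ H := by
  obtain ⟨f, hf⟩ := h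
  refine ⟨f.trans φ, fun a b hab => ?_⟩
  obtain ⟨hne, hnadj⟩ := hf hab
  exact ⟨fun hc => hne (φ.injective hc), hnadj⟩

/-- For every odd `n ≥ 1` there is a red-blue coloring of `K_{4n+1}` with no
monochromatic `F_n`; consequently `R₂(F_n) ≥ 4n + 2` for all odd `n ≥ 1`. -/
theorem fan_diag_lower (n : ℕ) (hn : 1 ≤ n) (hodd : Odd n) :
    (∃ R : SimpleGraph (Fin (4 * n + 1)),
      ¬ ContainsCopy R (fanGraph n) ∧ ¬ ContainsCopy Rᶜ (fanGraph n)) ∧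
    ∀ N : ℕ, IsLeast {M : ℕ | ∀ R : SimpleGraph (Fin M),
      ContainsCopy R (fanGraph n) ∨ ContainsCopy Rᶜ (fanGraph n)} N →
      4 * n + 2 ≤ N := by
  have main : ∃ R : SimpleGraph (Fin (4 * n + 1)),
      ¬ ContainsCopy R (fanGraph n) ∧ ¬ ContainsCopy Rᶜ (fanGraph n) := by
    rcases Nat.lt_or_ge n 4 with h4 | h4
    · interval_cases n
      · exact ⟨pent, pent_no_red, pent_no_blue⟩
      · exact absurd hodd (by decide)
      · exact ⟨red3, red3_no_red, red3_no_blue⟩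
    · exact ⟨bigRed n, bigRed_no_red n h4, bigRed_no_blue n h4⟩
  refine ⟨main, ?_⟩
  rintro N ⟨hmem, -⟩
  by_contra hN
  push_neg at hN
  have hle : N ≤ 4 * n + 1 := by omega
  obtain ⟨R, hR, hRc⟩ := main
  rcases hmem (R.comap (Fin.castLE hle)) with h | h
  · exact hR (copy_of_comap ⟨Fin.castLE hle, Fin.castLE_injective hle⟩ R _ h)
  · exact hRc (copy_of_comap_compl ⟨Fin.castLE hle, Fin.castLE_injective hle⟩ R _ h)
end

section
/- Let G be a complete graph on 14 vertices whose edges are red-blue colored with no monochromatic copy of the fan F_3. Then the coloring contains no monochromatic copy of K_4 + 2K_1 (the join of a complete graph on 4 vertices with an edgeless graph on 2 vertices). -/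
/-- The graph `K₄ + 2K₁`: vertices `0,1,2,3` form a clique and the two further
vertices `4,5` are nonadjacent to each other but adjacent to all of `0,1,2,3`. -/
def K4plus2K1 : SimpleGraph (Fin 6) where
  Adj v w := v ≠ w ∧ (v.val < 4 ∨ w.val < 4)
  symm := by constructor; intro v w h; exact ⟨h.1.symm, h.2.symm⟩
  loopless := by constructor; intro v h; exact h.1 rfl

private lemma mkFan (G : SimpleGraph (Fin 14)) (z p1 p2 p3 p4 p5 p6 : Fin 14)
    (h1 : G.Adj z p1) (h2 : G.Adj z p2) (h3 : G.Adj z p3) (h4 : G.Adj z p4)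
    (h5 : G.Adj z p5) (h6 : G.Adj z p6)
    (e1 : G.Adj p1 p2) (e2 : G.Adj p3 p4) (e3 : G.Adj p5 p6)
    (d13 : p1 ≠ p3) (d14 : p1 ≠ p4) (d15 : p1 ≠ p5) (d16 : p1 ≠ p6)
    (d23 : p2 ≠ p3) (d24 : p2 ≠ p4) (d25 : p2 ≠ p5) (d26 : p2 ≠ p6)
    (d35 : p3 ≠ p5) (d36 : p3 ≠ p6) (d45 : p4 ≠ p5) (d46 : p4 ≠ p6) :
    ContainsCopy G (fanGraph 3) := by
  have n1 : z ≠ p1 := h1.ne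
  have n2 : z ≠ p2 := h2.ne
  have n3 : z ≠ p3 := h3.ne
  have n4 : z ≠ p4 := h4.ne
  have n5 : z ≠ p5 := h5.ne
  have n6 : z ≠ p6 := h6.ne
  have n1' := n1.symm; have n2' := n2.symm; have n3' := n3.symm
  have n4' := n4.symm; have n5' := n5.symm; have n6' := n6.symm
  have d12 : p1 ≠ p2 := e1.ne
  have d34 : p3 ≠ p4 := e2.ne
  have d56 : p5 ≠ p6 := e3.ne
  have d12' := d12.symm; have d34' := d34.symm; have d56' := d56.symm
  have d13' := d13.symm; have d14' := d14.symm; have d15' := d15.symm; have d16' := d16.symm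
  have d23' := d23.symm; have d24' := d24.symm; have d25' := d25.symm; have d26' := d26.symm
  have d35' := d35.symm; have d36' := d36.symm; have d45' := d45.symm; have d46' := d46.symm
  refine ⟨⟨![z, p1, p2, p3, p4, p5, p6], ?_⟩, ?_⟩
  · intro i j hij
    fin_cases i <;> fin_cases j <;>
      first
        | rfl
        | exact absurd hij (by assumption)
  · intro a b hab
    fin_cases a <;> fin_cases b <;>
      first
        | exact absurd hab (by unfold fanGraph; decide)
        | exact h1 | exact h2 | exact h3 | exact h4 | exact h5 | exact h6
        | exact h1.symm | exact h2.symm | exact h3.symm | exact h4.symm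
        | exact h5.symm | exact h6.symm
        | exact e1 | exact e2 | exact e3
        | exact e1.symm | exact e2.symm | exact e3.symm

private lemma pickmem {α : Type*} {s : Finset α} {n : ℕ} (hn : 0 < n)
    (h : n ≤ s.card) : ∃ a, a ∈ s :=
  Finset.card_pos.mp (lt_of_lt_of_le hn h)

private lemma three_le_card {α : Type*} [DecidableEq α] {s : Finset α} {a b c : α}
    (ha : a ∈ s) (hb : b ∈ s) (hc : c ∈ s)
    (hab : a ≠ b) (hac : a ≠ c) (hbc : b ≠ c) : 3 ≤ s.card := by
  have hsub : ({a, b, c} : Finset α) ⊆ s := by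
    intro x hx
    simp only [Finset.mem_insert, Finset.mem_singleton] at hx
    rcases hx with rfl | rfl | rfl <;> assumption
  have hcard : ({a, b, c} : Finset α).card = 3 := by
    rw [Finset.card_insert_of_notMem (by simp [hab, hac]),
      Finset.card_insert_of_notMem (by simp [hbc]), Finset.card_singleton]
  calc 3 = ({a, b, c} : Finset α).card := hcard.symm
    _ ≤ s.card := Finset.card_le_card hsub

private lemma ex3 {α : Type*} [DecidableEq α] {s : Finset α} (h : 3 ≤ s.card) :
    ∃ a ∈ s, ∃ b ∈ s, ∃ c ∈ s, a ≠ b ∧ a ≠ c ∧ b ≠ c := by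
  obtain ⟨a, ha⟩ := pickmem (by norm_num) h
  have h2 : 1 < (s.erase a).card := by
    have := Finset.card_erase_of_mem ha; omega
  obtain ⟨b, hb, c, hc, hbc⟩ := Finset.one_lt_card.mp h2
  exact ⟨a, ha, b, (Finset.mem_erase.mp hb).2, c, (Finset.mem_erase.mp hc).2,
    ((Finset.mem_erase.mp hb).1).symm, ((Finset.mem_erase.mp hc).1).symm, hbc⟩

set_option synthInstance.maxSize 2000 in
private lemma hselFin : ∀ i j : Fin 6, i ≠ j → i.val < 4 → ∃ k1 k2 k3 k4 : Fin 6,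
    (k1 ≠ i ∧ k1 ≠ j ∧ k2 ≠ i ∧ k2 ≠ j ∧ k3 ≠ i ∧ k3 ≠ j ∧ k4 ≠ i ∧ k4 ≠ j) ∧
    (k1 ≠ k2 ∧ k1 ≠ k3 ∧ k1 ≠ k4 ∧ k2 ≠ k3 ∧ k2 ≠ k4 ∧ k3 ≠ k4) ∧
    ((k1.val < 4 ∨ k2.val < 4) ∧ (k3.val < 4 ∨ k4.val < 4)) := by decide

private lemma master (G : SimpleGraph (Fin 14))
    (hF : ¬ ContainsCopy G (fanGraph 3)) (hFc : ¬ ContainsCopy Gᶜ (fanGraph 3)) :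
    ¬ ContainsCopy G K4plus2K1 := by
  letI : DecidableRel G.Adj := Classical.decRel _
  rintro ⟨f, hf⟩
  have hK : ∀ i j : Fin 6, i ≠ j → (i.val < 4 ∨ j.val < 4) → G.Adj (f i) (f j) :=
    fun i j hne hlt => hf (show K4plus2K1.Adj i j from ⟨hne, hlt⟩)
  have fne : ∀ {a b : Fin 6}, a ≠ b → f a ≠ f b := fun h hh => h (f.injective hh)
  set O : Finset (Fin 14) := (Finset.univ.image f)ᶜ with hO_def
  have hOf : ∀ v ∈ O, ∀ i, v ≠ f i := by
    intro v hv i h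
    rw [hO_def, Finset.mem_compl] at hv
    exact hv (Finset.mem_image.mpr ⟨i, Finset.mem_univ i, h.symm⟩)
  have hOcard : O.card = 8 := by
    rw [hO_def, Finset.card_compl, Finset.card_image_of_injective _ f.injective]
    simp
  -- Lemma A
  have hA : ∀ v ∈ O, ∀ i j : Fin 6, i ≠ j → i.val < 4 →
      G.Adj (f i) v → G.Adj (f j) v → False := by
    intro v hv i j hij hi4 havi havj
    obtain ⟨k1, k2, k3, k4, ⟨m1i, m1j, m2i, m2j, m3i, m3j, m4i, m4j⟩,
      ⟨m12, m13, m14, m23, m24, m34⟩, ⟨mo1, mo2⟩⟩ := hselFin i j hij hi4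
    apply hF
    exact mkFan G (f i) v (f j) (f k1) (f k2) (f k3) (f k4)
      havi (hK i j hij (Or.inl hi4))
      (hK i k1 (fun h => m1i h.symm) (Or.inl hi4))
      (hK i k2 (fun h => m2i h.symm) (Or.inl hi4))
      (hK i k3 (fun h => m3i h.symm) (Or.inl hi4))
      (hK i k4 (fun h => m4i h.symm) (Or.inl hi4))
      havj.symm (hK k1 k2 m12 mo1) (hK k3 k4 m34 mo2)
      (hOf v hv k1) (hOf v hv k2) (hOf v hv k3) (hOf v hv k4)
      (fne (fun h => m1j h.symm)) (fne (fun h => m2j h.symm))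
      (fne (fun h => m3j h.symm)) (fne (fun h => m4j h.symm))
      (fne m13) (fne m14) (fne m23) (fne m24)
  -- blue neighborhoods inside O
  set NB : Fin 14 → Finset (Fin 14) :=
    fun u => (O.erase u).filter (fun w => ¬ G.Adj u w) with hNB_def
  have hNBmem : ∀ u w : Fin 14, w ∈ NB u ↔ w ∈ O ∧ w ≠ u ∧ ¬ G.Adj u w := by
    intro u w
    rw [hNB_def]
    simp only [Finset.mem_filter, Finset.mem_erase]
    exact ⟨fun h => ⟨h.1.2, h.1.1, h.2⟩, fun h => ⟨⟨h.2.1, h.1⟩, h.2.2⟩⟩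
  have hNBsymm : ∀ u, u ∈ O → ∀ w, w ∈ NB u → u ∈ NB w := by
    intro u hu w hw
    rw [hNBmem] at hw ⊢
    exact ⟨hu, hw.2.1.symm, fun h => hw.2.2 h.symm⟩
  -- red S-neighborhood index sets
  set r : Fin 14 → Finset (Fin 6) :=
    fun v => Finset.univ.filter (fun k => G.Adj (f k) v) with hr_def
  have hrmem : ∀ v k, k ∈ r v ↔ G.Adj (f k) v := by
    intro v k; rw [hr_def]; simp
  have hfour : ∀ v ∈ O, ∀ k k' : Fin 6, k ∈ r v → k' ∈ r v → k ≠ k' → 4 ≤ k.val := by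
    intro v hv k k' hk hk' hkk
    by_contra h4
    exact hA v hv k k' hkk (by omega) ((hrmem v k).mp hk) ((hrmem v k').mp hk')
  have hrcard : ∀ v ∈ O, (r v).card ≤ 2 ∧ (2 ≤ (r v).card → r v ⊆ {4, 5}) := by
    intro v hv
    have hsub : 2 ≤ (r v).card → r v ⊆ ({4, 5} : Finset (Fin 6)) := by
      intro h2 k hk
      have h1 : 1 ≤ ((r v).erase k).card := by
        have := Finset.card_erase_of_mem hk; omega
      obtain ⟨k', hk'⟩ := pickmem Nat.one_pos h1
      have hk'm := Finset.mem_erase.mp hk'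
      have h4 := hfour v hv k k' hk hk'm.2 (fun h => hk'm.1 h.symm)
      clear hk hk' hk'm
      fin_cases k <;> revert h4 <;> decide
    constructor
    · by_contra hc
      push_neg at hc
      have h1 := Finset.card_le_card (hsub (by omega))
      have h2 : ({4, 5} : Finset (Fin 6)).card = 2 := by decide
      omega
    · exact hsub
  have hrunion : ∀ v ∈ O, ∀ w ∈ O, ((r v) ∪ (r w)).card ≤ 3 := by
    intro v hv w hw
    obtain ⟨hv2, hvsub⟩ := hrcard v hv
    obtain ⟨hw2, hwsub⟩ := hrcard w hw
    have hle := Finset.card_union_le (r v) (r w)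
    by_cases hcv : (r v).card ≤ 1
    · omega
    · by_cases hcw : (r w).card ≤ 1
      · omega
      · have hsub : (r v) ∪ (r w) ⊆ ({4, 5} : Finset (Fin 6)) := by
          intro k hk
          rcases Finset.mem_union.mp hk with h | h
          · exact hvsub (by omega) h
          · exact hwsub (by omega) h
        have h1 := Finset.card_le_card hsub
        have h2 : ({4, 5} : Finset (Fin 6)).card = 2 := by decide
        omega
  -- BIG: at most 2 blue neighbors inside O
  have hBIG : ∀ u ∈ O, (NB u).card ≤ 2 := by
    intro u hu
    by_contra hgt
    push_neg at hgt
    obtain ⟨w1, hw1, w2, hw2, w3, hw3, h12, h13, h23⟩ := ex3 (show 3 ≤ (NB u).card by omega)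
    have hw1m := (hNBmem u w1).mp hw1
    have hw2m := (hNBmem u w2).mp hw2
    have hw3m := (hNBmem u w3).mp hw3
    have hach : ∀ w ∈ O, 3 ≤ (Finset.univ.filter
        (fun k : Fin 6 => ¬ G.Adj (f k) u ∧ ¬ G.Adj (f k) w)).card := by
      intro w hw
      have hEq : (Finset.univ.filter
          (fun k : Fin 6 => ¬ G.Adj (f k) u ∧ ¬ G.Adj (f k) w)) = ((r u) ∪ (r w))ᶜ := by
        ext k
        simp only [Finset.mem_filter, Finset.mem_univ, true_and, Finset.mem_compl,
          Finset.mem_union, hrmem]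
        exact not_or.symm
      rw [hEq, Finset.card_compl]
      have := hrunion u hu w hw
      simp only [Fintype.card_fin]
      omega
    obtain ⟨s1, hs1⟩ := pickmem (show (0:ℕ) < 3 by norm_num) (hach w1 hw1m.1)
    have hA2 : 1 ≤ ((Finset.univ.filter
        (fun k : Fin 6 => ¬ G.Adj (f k) u ∧ ¬ G.Adj (f k) w2)).erase s1).card := by
      have h1 := hach w2 hw2m.1
      have h2 := Finset.pred_card_le_card_erase (s := Finset.univ.filter
        (fun k : Fin 6 => ¬ G.Adj (f k) u ∧ ¬ G.Adj (f k) w2)) (a := s1)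
      omega
    obtain ⟨s2, hs2⟩ := pickmem Nat.one_pos hA2
    have hA3 : 1 ≤ (((Finset.univ.filter
        (fun k : Fin 6 => ¬ G.Adj (f k) u ∧ ¬ G.Adj (f k) w3)).erase s1).erase s2).card := by
      have h1 := hach w3 hw3m.1
      have h2 := Finset.pred_card_le_card_erase (s := Finset.univ.filter
        (fun k : Fin 6 => ¬ G.Adj (f k) u ∧ ¬ G.Adj (f k) w3)) (a := s1)
      have h3 := Finset.pred_card_le_card_erase (s := (Finset.univ.filter
        (fun k : Fin 6 => ¬ G.Adj (f k) u ∧ ¬ G.Adj (f k) w3)).erase s1) (a := s2)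
      omega
    obtain ⟨s3, hs3⟩ := pickmem Nat.one_pos hA3
    have hs1p : ¬ G.Adj (f s1) u ∧ ¬ G.Adj (f s1) w1 := (Finset.mem_filter.mp hs1).2
    have hs2e := Finset.mem_erase.mp hs2
    have hs2p : ¬ G.Adj (f s2) u ∧ ¬ G.Adj (f s2) w2 := (Finset.mem_filter.mp hs2e.2).2
    have hs3e := Finset.mem_erase.mp hs3
    have hs3e2 := Finset.mem_erase.mp hs3e.2
    have hs3p : ¬ G.Adj (f s3) u ∧ ¬ G.Adj (f s3) w3 := (Finset.mem_filter.mp hs3e2.2).2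
    have hs12 : s1 ≠ s2 := fun h => hs2e.1 h.symm
    have hs13 : s1 ≠ s3 := fun h => hs3e2.1 h.symm
    have hs23 : s2 ≠ s3 := fun h => hs3e.1 h.symm
    apply hFc
    exact mkFan Gᶜ u (f s1) w1 (f s2) w2 (f s3) w3
      ⟨hOf u hu s1, fun h => hs1p.1 h.symm⟩
      ⟨hw1m.2.1.symm, hw1m.2.2⟩
      ⟨hOf u hu s2, fun h => hs2p.1 h.symm⟩
      ⟨hw2m.2.1.symm, hw2m.2.2⟩
      ⟨hOf u hu s3, fun h => hs3p.1 h.symm⟩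
      ⟨hw3m.2.1.symm, hw3m.2.2⟩
      ⟨(hOf w1 hw1m.1 s1).symm, hs1p.2⟩
      ⟨(hOf w2 hw2m.1 s2).symm, hs2p.2⟩
      ⟨(hOf w3 hw3m.1 s3).symm, hs3p.2⟩
      (fne hs12) ((hOf w2 hw2m.1 s1).symm) (fne hs13) ((hOf w3 hw3m.1 s1).symm)
      (hOf w1 hw1m.1 s2) h12 (hOf w1 hw1m.1 s3) h13
      (fne hs23) ((hOf w3 hw3m.1 s2).symm) (hOf w2 hw2m.1 s3) h23
  -- DEG: at least 2 blue neighbors inside O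
  have hDEG : ∀ u ∈ O, 2 ≤ (NB u).card := by
    intro u hu
    by_contra hlt
    push_neg at hlt
    have hpart := Finset.card_filter_add_card_filter_not
      (s := O.erase u) (p := fun w => G.Adj u w)
    have herase : (O.erase u).card = 7 := by
      rw [Finset.card_erase_of_mem hu, hOcard]
    have hNBalt : (NB u).card = ((O.erase u).filter (fun w => ¬ G.Adj u w)).card := by
      rw [hNB_def]
    have hNR6 : 6 ≤ ((O.erase u).filter (fun w => G.Adj u w)).card := by omega
    obtain ⟨t, htsub, htcard⟩ := Finset.exists_subset_card_eq hNR6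
    have htO : ∀ w ∈ t, w ∈ O := by
      intro w hw
      exact Finset.mem_of_mem_erase (Finset.mem_of_mem_filter w (htsub hw))
    have htAdj : ∀ w ∈ t, G.Adj u w := by
      intro w hw; exact (Finset.mem_filter.mp (htsub hw)).2
    have hblue3 : ∀ w ∈ t, ∀ x y z : Fin 14, x ∈ O → y ∈ O → z ∈ O →
        x ≠ w → y ≠ w → z ≠ w → x ≠ y → x ≠ z → y ≠ z →
        ¬ G.Adj w x → ¬ G.Adj w y → ¬ G.Adj w z → False := by
      intro w hw x y z hx hy hz hxw hyw hzw hxy hxz hyz hax hay haz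
      have h3 : 3 ≤ (NB w).card :=
        three_le_card ((hNBmem w x).mpr ⟨hx, hxw, hax⟩) ((hNBmem w y).mpr ⟨hy, hyw, hay⟩)
          ((hNBmem w z).mpr ⟨hz, hzw, haz⟩) hxy hxz hyz
      have := hBIG w (htO w hw)
      omega
    obtain ⟨w1, hw1⟩ := pickmem (show (0:ℕ) < 6 by norm_num) (show 6 ≤ t.card by omega)
    have hred1 : 0 < ((t.erase w1).filter (fun z => G.Adj w1 z)).card := by
      have hp := Finset.card_filter_add_card_filter_not
        (s := t.erase w1) (p := fun z => G.Adj w1 z)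
      have hb : ((t.erase w1).filter (fun z => ¬ G.Adj w1 z)).card ≤ 2 := by
        have hsub2 : ((t.erase w1).filter (fun z => ¬ G.Adj w1 z)) ⊆ NB w1 := by
          intro z hz
          have hz1 := Finset.mem_filter.mp hz
          have hz2 := Finset.mem_erase.mp hz1.1
          exact (hNBmem w1 z).mpr ⟨htO z hz2.2, hz2.1, hz1.2⟩
        exact le_trans (Finset.card_le_card hsub2) (hBIG w1 (htO w1 hw1))
      have he : (t.erase w1).card = 5 := by rw [Finset.card_erase_of_mem hw1, htcard]
      omega
    obtain ⟨w2, hw2⟩ := Finset.card_pos.mp hred1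
    have hw2f := Finset.mem_filter.mp hw2
    have hw2e := Finset.mem_erase.mp hw2f.1
    have ha12 : G.Adj w1 w2 := hw2f.2
    have hw2t : w2 ∈ t := hw2e.2
    have n12 : w1 ≠ w2 := fun h => hw2e.1 h.symm
    have ht'card : ((t.erase w1).erase w2).card = 4 := by
      rw [Finset.card_erase_of_mem (Finset.mem_erase.mpr ⟨hw2e.1, hw2t⟩),
        Finset.card_erase_of_mem hw1, htcard]
    have ht'sub : ((t.erase w1).erase w2) ⊆ t := fun z hz =>
      Finset.mem_of_mem_erase (Finset.mem_of_mem_erase hz)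
    have ht'ne : ∀ z ∈ (t.erase w1).erase w2, z ≠ w1 ∧ z ≠ w2 := by
      intro z hz
      exact ⟨(Finset.mem_erase.mp (Finset.mem_of_mem_erase hz)).1,
        (Finset.mem_erase.mp hz).1⟩
    by_cases hre : ∃ p ∈ (t.erase w1).erase w2, ∃ q ∈ (t.erase w1).erase w2, p ≠ q ∧ G.Adj p q
    · obtain ⟨w3, hw3, w4, hw4, n34, ha34⟩ := hre
      have hw3t : w3 ∈ t := ht'sub hw3
      have hw4t : w4 ∈ t := ht'sub hw4
      have n13 : w1 ≠ w3 := ((ht'ne w3 hw3).1).symm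
      have n14 : w1 ≠ w4 := ((ht'ne w4 hw4).1).symm
      have n23 : w2 ≠ w3 := ((ht'ne w3 hw3).2).symm
      have n24 : w2 ≠ w4 := ((ht'ne w4 hw4).2).symm
      have ht''card : ((((t.erase w1).erase w2).erase w3).erase w4).card = 2 := by
        rw [Finset.card_erase_of_mem (Finset.mem_erase.mpr ⟨fun h => n34 h.symm, hw4⟩),
          Finset.card_erase_of_mem hw3, ht'card]
      obtain ⟨w5, w6, n56, ht''eq⟩ := Finset.card_eq_two.mp ht''card
      have hw5'' : w5 ∈ (((t.erase w1).erase w2).erase w3).erase w4 := by rw [ht''eq]; simp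
      have hw6'' : w6 ∈ (((t.erase w1).erase w2).erase w3).erase w4 := by rw [ht''eq]; simp
      have ht''sub : ((((t.erase w1).erase w2).erase w3).erase w4) ⊆ (t.erase w1).erase w2 :=
        fun z hz => Finset.mem_of_mem_erase (Finset.mem_of_mem_erase hz)
      have ht''ne : ∀ z ∈ (((t.erase w1).erase w2).erase w3).erase w4, z ≠ w3 ∧ z ≠ w4 := by
        intro z hz
        exact ⟨(Finset.mem_erase.mp (Finset.mem_of_mem_erase hz)).1,
          (Finset.mem_erase.mp hz).1⟩
      have hw5t : w5 ∈ t := ht'sub (ht''sub hw5'')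
      have hw6t : w6 ∈ t := ht'sub (ht''sub hw6'')
      have n15 : w1 ≠ w5 := ((ht'ne w5 (ht''sub hw5'')).1).symm
      have n25 : w2 ≠ w5 := ((ht'ne w5 (ht''sub hw5'')).2).symm
      have n35 : w3 ≠ w5 := ((ht''ne w5 hw5'').1).symm
      have n45 : w4 ≠ w5 := ((ht''ne w5 hw5'').2).symm
      have n16 : w1 ≠ w6 := ((ht'ne w6 (ht''sub hw6'')).1).symm
      have n26 : w2 ≠ w6 := ((ht'ne w6 (ht''sub hw6'')).2).symm
      have n36 : w3 ≠ w6 := ((ht''ne w6 hw6'').1).symm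
      have n46 : w4 ≠ w6 := ((ht''ne w6 hw6'').2).symm
      by_cases h56 : G.Adj w5 w6
      · apply hF
        exact mkFan G u w1 w2 w3 w4 w5 w6
          (htAdj w1 hw1) (htAdj w2 hw2t) (htAdj w3 hw3t) (htAdj w4 hw4t)
          (htAdj w5 hw5t) (htAdj w6 hw6t)
          ha12 ha34 h56
          n13 n14 n15 n16 n23 n24 n25 n26 n35 n36 n45 n46
      · have hcov5 : (G.Adj w5 w1 ∧ G.Adj w5 w2) ∨ (G.Adj w5 w3 ∧ G.Adj w5 w4) := by
          by_cases q1 : G.Adj w5 w1 <;> by_cases q2 : G.Adj w5 w2 <;>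
            by_cases q3 : G.Adj w5 w3 <;> by_cases q4 : G.Adj w5 w4 <;>
            first
              | exact Or.inl ⟨q1, q2⟩
              | exact Or.inr ⟨q3, q4⟩
              | exact (hblue3 w5 hw5t w1 w3 w6 (htO w1 hw1) (htO w3 hw3t) (htO w6 hw6t)
                  n15 n35 (fun h => n56 h.symm) n13 n16 n36 q1 q3 h56).elim
              | exact (hblue3 w5 hw5t w1 w4 w6 (htO w1 hw1) (htO w4 hw4t) (htO w6 hw6t)
                  n15 n45 (fun h => n56 h.symm) n14 n16 n46 q1 q4 h56).elim
              | exact (hblue3 w5 hw5t w2 w3 w6 (htO w2 hw2t) (htO w3 hw3t) (htO w6 hw6t)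
                  n25 n35 (fun h => n56 h.symm) n23 n26 n36 q2 q3 h56).elim
              | exact (hblue3 w5 hw5t w2 w4 w6 (htO w2 hw2t) (htO w4 hw4t) (htO w6 hw6t)
                  n25 n45 (fun h => n56 h.symm) n24 n26 n46 q2 q4 h56).elim
        have h65 : ¬ G.Adj w6 w5 := fun h => h56 h.symm
        rcases hcov5 with ⟨c1, c2⟩ | ⟨c3, c4⟩
        · have h6 : G.Adj w6 w1 ∨ G.Adj w6 w2 := by
            by_contra hq
            push_neg at hq
            exact hblue3 w6 hw6t w1 w2 w5 (htO w1 hw1) (htO w2 hw2t) (htO w5 hw5t)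
              n16 n26 n56 n12 n15 n25 hq.1 hq.2 h65
          rcases h6 with h6 | h6
          · apply hF
            exact mkFan G u w5 w2 w6 w1 w3 w4
              (htAdj w5 hw5t) (htAdj w2 hw2t) (htAdj w6 hw6t) (htAdj w1 hw1)
              (htAdj w3 hw3t) (htAdj w4 hw4t)
              c2 h6 ha34
              n56 n15.symm n35.symm n45.symm
              n26 n12.symm n23 n24
              n36.symm n46.symm n13 n14
          · apply hF
            exact mkFan G u w5 w1 w6 w2 w3 w4
              (htAdj w5 hw5t) (htAdj w1 hw1) (htAdj w6 hw6t) (htAdj w2 hw2t)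
              (htAdj w3 hw3t) (htAdj w4 hw4t)
              c1 h6 ha34
              n56 n25.symm n35.symm n45.symm
              n16 n12 n13 n14
              n36.symm n46.symm n23 n24
        · have h6 : G.Adj w6 w3 ∨ G.Adj w6 w4 := by
            by_contra hq
            push_neg at hq
            exact hblue3 w6 hw6t w3 w4 w5 (htO w3 hw3t) (htO w4 hw4t) (htO w5 hw5t)
              n36 n46 n56 n34 n35 n45 hq.1 hq.2 h65
          rcases h6 with h6 | h6
          · apply hF
            exact mkFan G u w5 w4 w6 w3 w1 w2
              (htAdj w5 hw5t) (htAdj w4 hw4t) (htAdj w6 hw6t) (htAdj w3 hw3t)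
              (htAdj w1 hw1) (htAdj w2 hw2t)
              c4 h6 ha12
              n56 n35.symm n15.symm n25.symm
              n46 n34.symm n14.symm n24.symm
              n16.symm n26.symm n13.symm n23.symm
          · apply hF
            exact mkFan G u w5 w3 w6 w4 w1 w2
              (htAdj w5 hw5t) (htAdj w3 hw3t) (htAdj w6 hw6t) (htAdj w4 hw4t)
              (htAdj w1 hw1) (htAdj w2 hw2t)
              c3 h6 ha12
              n56 n45.symm n15.symm n25.symm
              n36 n34 n13.symm n23.symm
              n16.symm n26.symm n14.symm n24.symm
    · push_neg at hre
      obtain ⟨p, hp⟩ := Finset.card_pos.mp (show 0 < ((t.erase w1).erase w2).card by omega)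
      have h3 : 3 ≤ (((t.erase w1).erase w2).erase p).card := by
        have := Finset.card_erase_of_mem hp
        omega
      obtain ⟨x, hx, y, hy, z, hz, hxy, hxz, hyz⟩ := ex3 h3
      have hxe := Finset.mem_erase.mp hx
      have hye := Finset.mem_erase.mp hy
      have hze := Finset.mem_erase.mp hz
      exact hblue3 p (ht'sub hp) x y z (htO x (ht'sub hxe.2)) (htO y (ht'sub hye.2))
        (htO z (ht'sub hze.2)) hxe.1 hye.1 hze.1 hxy hxz hyz
        (hre p hp x hxe.2 (fun h => hxe.1 h.symm))
        (hre p hp y hye.2 (fun h => hye.1 h.symm))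
        (hre p hp z hze.2 (fun h => hze.1 h.symm))
  -- Red fibers
  set Red : Fin 6 → Finset (Fin 14) := fun k => O.filter (fun v => G.Adj (f k) v) with hRed_def
  have hRed2 : ∀ k : Fin 6, 2 ≤ (Red k).card := by
    intro k
    by_contra hlt
    push_neg at hlt
    have hRk1 : (Red k).card ≤ 1 := by omega
    have hRksub : Red k ⊆ O := by rw [hRed_def]; exact Finset.filter_subset _ _
    have hO'card : 7 ≤ (O \ Red k).card := by
      rw [Finset.card_sdiff_of_subset hRksub, hOcard]
      omega
    have hO'sub : (O \ Red k) ⊆ O := Finset.sdiff_subset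
    have hO'p : ∀ w ∈ (O \ Red k), ¬ G.Adj (f k) w := by
      intro w hw h
      have hm := Finset.mem_sdiff.mp hw
      exact hm.2 (by rw [hRed_def]; exact Finset.mem_filter.mpr ⟨hm.1, h⟩)
    have hspoke : ∀ w ∈ (O \ Red k), Gᶜ.Adj (f k) w := by
      intro w hw
      exact ⟨(hOf w (hO'sub hw) k).symm, hO'p w hw⟩
    have hb' : ∀ w ∈ (O \ Red k), ∃ z, z ∈ NB w ∧ z ∈ (O \ Red k) := by
      intro w hw
      have h2 := hDEG w (hO'sub hw)
      have hsub2 : NB w \ (O \ Red k) ⊆ Red k := by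
        intro z hz
        have hz1 := Finset.mem_sdiff.mp hz
        have hz2 := (hNBmem w z).mp hz1.1
        by_contra hzr
        exact hz1.2 (Finset.mem_sdiff.mpr ⟨hz2.1, hzr⟩)
      have hcard2 := Finset.card_sdiff_add_card_inter (NB w) (O \ Red k)
      have hle2 := Finset.card_le_card hsub2
      have : 0 < (NB w ∩ (O \ Red k)).card := by omega
      obtain ⟨z, hzm⟩ := Finset.card_pos.mp this
      exact ⟨z, (Finset.mem_inter.mp hzm).1, (Finset.mem_inter.mp hzm).2⟩
    obtain ⟨a1, ha1⟩ := Finset.card_pos.mp (show 0 < (O \ Red k).card by omega)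
    obtain ⟨b1, hb1NB, hb1O'⟩ := hb' a1 ha1
    have hb1m := (hNBmem a1 b1).mp hb1NB
    have hna1b1 : a1 ≠ b1 := hb1m.2.1.symm
    have hTsub : ((O \ Red k).erase a1).erase b1 ⊆ (O \ Red k) := fun z hz =>
      Finset.mem_of_mem_erase (Finset.mem_of_mem_erase hz)
    have hTcard : 5 ≤ (((O \ Red k).erase a1).erase b1).card := by
      have e1 := Finset.pred_card_le_card_erase (s := O \ Red k) (a := a1)
      have e2 := Finset.pred_card_le_card_erase (s := (O \ Red k).erase a1) (a := b1)
      omega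
    have hTne : ∀ z ∈ ((O \ Red k).erase a1).erase b1, z ≠ a1 ∧ z ≠ b1 := by
      intro z hz
      exact ⟨(Finset.mem_erase.mp (Finset.mem_of_mem_erase hz)).1,
        (Finset.mem_erase.mp hz).1⟩
    have he2 : ∃ a2 ∈ ((O \ Red k).erase a1).erase b1,
        ∃ b2, b2 ∈ NB a2 ∧ b2 ∈ ((O \ Red k).erase a1).erase b1 := by
      by_contra hno
      push_neg at hno
      have hsubT : (((O \ Red k).erase a1).erase b1) ⊆ NB a1 ∪ NB b1 := by
        intro w hw
        obtain ⟨z, hzNB, hzO'⟩ := hb' w (hTsub hw)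
        by_cases hzT : z ∈ ((O \ Red k).erase a1).erase b1
        · exact absurd hzT (hno w hw z hzNB)
        · have hz2 : z = a1 ∨ z = b1 := by
            by_contra hzz
            push_neg at hzz
            exact hzT (Finset.mem_erase.mpr ⟨hzz.2, Finset.mem_erase.mpr ⟨hzz.1, hzO'⟩⟩)
          have hwO : w ∈ O := hO'sub (hTsub hw)
          rcases hz2 with rfl | rfl
          · exact Finset.mem_union_left _ (hNBsymm w hwO _ hzNB)
          · exact Finset.mem_union_right _ (hNBsymm w hwO _ hzNB)
      have hc1 := Finset.card_le_card hsubT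
      have hc2 := Finset.card_union_le (NB a1) (NB b1)
      have hc3 := hBIG a1 (hO'sub ha1)
      have hc4 := hBIG b1 (hO'sub hb1O')
      omega
    obtain ⟨a2, ha2T, b2, hb2NB, hb2T⟩ := he2
    have hb2m := (hNBmem a2 b2).mp hb2NB
    have hna2b2 : a2 ≠ b2 := hb2m.2.1.symm
    have ha2T' := hTne a2 ha2T
    have hb2T' := hTne b2 hb2T
    have hIsub : ((((O \ Red k).erase a1).erase b1).erase a2).erase b2 ⊆
        ((O \ Red k).erase a1).erase b1 := fun z hz =>
      Finset.mem_of_mem_erase (Finset.mem_of_mem_erase hz)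
    have hIcard : 3 ≤ (((((O \ Red k).erase a1).erase b1).erase a2).erase b2).card := by
      have e1 := Finset.pred_card_le_card_erase (s := ((O \ Red k).erase a1).erase b1) (a := a2)
      have e2 := Finset.pred_card_le_card_erase
        (s := (((O \ Red k).erase a1).erase b1).erase a2) (a := b2)
      omega
    have hIne : ∀ z ∈ ((((O \ Red k).erase a1).erase b1).erase a2).erase b2,
        z ≠ a2 ∧ z ≠ b2 := by
      intro z hz
      exact ⟨(Finset.mem_erase.mp (Finset.mem_of_mem_erase hz)).1,
        (Finset.mem_erase.mp hz).1⟩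
    by_cases hIe : ∃ p ∈ ((((O \ Red k).erase a1).erase b1).erase a2).erase b2,
        ∃ q ∈ ((((O \ Red k).erase a1).erase b1).erase a2).erase b2, p ≠ q ∧ ¬ G.Adj p q
    · obtain ⟨p, hp, q, hq, hpq, hnapq⟩ := hIe
      apply hFc
      exact mkFan Gᶜ (f k) a1 b1 a2 b2 p q
        (hspoke a1 ha1) (hspoke b1 hb1O') (hspoke a2 (hTsub ha2T)) (hspoke b2 (hTsub hb2T))
        (hspoke p (hTsub (hIsub hp))) (hspoke q (hTsub (hIsub hq)))
        ⟨hna1b1, hb1m.2.2⟩ ⟨hna2b2, hb2m.2.2⟩ ⟨hpq, hnapq⟩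
        (ha2T'.1.symm) (hb2T'.1.symm)
        ((hTne p (hIsub hp)).1.symm) ((hTne q (hIsub hq)).1.symm)
        (ha2T'.2.symm) (hb2T'.2.symm)
        ((hTne p (hIsub hp)).2.symm) ((hTne q (hIsub hq)).2.symm)
        ((hIne p hp).1.symm) ((hIne q hq).1.symm)
        ((hIne p hp).2.symm) ((hIne q hq).2.symm)
    · push_neg at hIe
      have hIO : ∀ i ∈ ((((O \ Red k).erase a1).erase b1).erase a2).erase b2, i ∈ O :=
        fun i hi => hO'sub (hTsub (hIsub hi))
      have hcov : ((((O \ Red k).erase a1).erase b1).erase a2).erase b2 ⊆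
          ((NB a1 ∩ ((((O \ Red k).erase a1).erase b1).erase a2).erase b2) ∪
           (NB b1 ∩ ((((O \ Red k).erase a1).erase b1).erase a2).erase b2)) ∪
          ((NB a2 ∩ ((((O \ Red k).erase a1).erase b1).erase a2).erase b2) ∪
           (NB b2 ∩ ((((O \ Red k).erase a1).erase b1).erase a2).erase b2)) := by
        intro i hi
        obtain ⟨z, hzNB, hzO'⟩ := hb' i (hTsub (hIsub hi))
        have hzm := (hNBmem i z).mp hzNB
        by_cases hzI : z ∈ ((((O \ Red k).erase a1).erase b1).erase a2).erase b2
        · exact absurd (hIe i hi z hzI (fun h => hzm.2.1 h.symm)) (fun h => hzm.2.2 h)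
        · have hz4 : z = a1 ∨ z = b1 ∨ z = a2 ∨ z = b2 := by
            by_contra hzz
            push_neg at hzz
            exact hzI (Finset.mem_erase.mpr ⟨hzz.2.2.2, Finset.mem_erase.mpr ⟨hzz.2.2.1,
              Finset.mem_erase.mpr ⟨hzz.2.1, Finset.mem_erase.mpr ⟨hzz.1, hzO'⟩⟩⟩⟩)
          have hiO : i ∈ O := hIO i hi
          rcases hz4 with rfl | rfl | rfl | rfl
          · exact Finset.mem_union_left _ (Finset.mem_union_left _
              (Finset.mem_inter.mpr ⟨hNBsymm i hiO _ hzNB, hi⟩))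
          · exact Finset.mem_union_left _ (Finset.mem_union_right _
              (Finset.mem_inter.mpr ⟨hNBsymm i hiO _ hzNB, hi⟩))
          · exact Finset.mem_union_right _ (Finset.mem_union_left _
              (Finset.mem_inter.mpr ⟨hNBsymm i hiO _ hzNB, hi⟩))
          · exact Finset.mem_union_right _ (Finset.mem_union_right _
              (Finset.mem_inter.mpr ⟨hNBsymm i hiO _ hzNB, hi⟩))
      have hcap : ∀ zz w : Fin 14, w ∈ NB zz →
          w ∉ ((((O \ Red k).erase a1).erase b1).erase a2).erase b2 →
          (NB zz ∩ ((((O \ Red k).erase a1).erase b1).erase a2).erase b2).card ≤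
            (NB zz).card - 1 := by
        intro zz w hw hwI
        have hsub2 : NB zz ∩ ((((O \ Red k).erase a1).erase b1).erase a2).erase b2 ⊆
            (NB zz).erase w := by
          intro x hx
          have hxm := Finset.mem_inter.mp hx
          exact Finset.mem_erase.mpr ⟨fun h => hwI (h ▸ hxm.2), hxm.1⟩
        have := Finset.card_le_card hsub2
        rw [Finset.card_erase_of_mem hw] at this
        exact this
      have ha1nI : a1 ∉ ((((O \ Red k).erase a1).erase b1).erase a2).erase b2 :=
        fun h => (hTne a1 (hIsub h)).1 rfl
      have hb1nI : b1 ∉ ((((O \ Red k).erase a1).erase b1).erase a2).erase b2 :=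
        fun h => (hTne b1 (hIsub h)).2 rfl
      have ha2nI : a2 ∉ ((((O \ Red k).erase a1).erase b1).erase a2).erase b2 :=
        fun h => (hIne a2 h).1 rfl
      have hb2nI : b2 ∉ ((((O \ Red k).erase a1).erase b1).erase a2).erase b2 :=
        fun h => (hIne b2 h).2 rfl
      have hS1 : (NB a1 ∩ ((((O \ Red k).erase a1).erase b1).erase a2).erase b2).card ≤ 1 := by
        have h1 := hcap a1 b1 hb1NB hb1nI
        have h2 := hBIG a1 (hO'sub ha1)
        omega
      have hS2 : (NB b1 ∩ ((((O \ Red k).erase a1).erase b1).erase a2).erase b2).card ≤ 1 := by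
        have h1 := hcap b1 a1 (hNBsymm a1 (hO'sub ha1) b1 hb1NB) ha1nI
        have h2 := hBIG b1 (hO'sub hb1O')
        omega
      have hS3 : (NB a2 ∩ ((((O \ Red k).erase a1).erase b1).erase a2).erase b2).card ≤ 1 := by
        have h1 := hcap a2 b2 hb2NB hb2nI
        have h2 := hBIG a2 (hO'sub (hTsub ha2T))
        omega
      have hS4 : (NB b2 ∩ ((((O \ Red k).erase a1).erase b1).erase a2).erase b2).card ≤ 1 := by
        have h1 := hcap b2 a2 (hNBsymm a2 (hO'sub (hTsub ha2T)) b2 hb2NB) ha2nI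
        have h2 := hBIG b2 (hO'sub (hTsub hb2T))
        omega
      have hget : ∀ Sa Sb : Finset (Fin 14), Sa.card ≤ 1 → Sb.card ≤ 1 →
          2 ≤ (Sa ∪ Sb).card → ∃ i ∈ Sa, ∃ i' ∈ Sb, i ≠ i' := by
        intro Sa Sb ha hb hab
        have hUle := Finset.card_union_le Sa Sb
        obtain ⟨i, hi⟩ := Finset.card_pos.mp (show 0 < Sa.card by omega)
        obtain ⟨i', hi'⟩ := Finset.card_pos.mp (show 0 < Sb.card by omega)
        refine ⟨i, hi, i', hi', ?_⟩
        rintro rfl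
        have hsub3 : Sa ∪ Sb ⊆ {i} := by
          intro x hx
          rcases Finset.mem_union.mp hx with h | h
          · exact Finset.mem_singleton.mpr (Finset.card_le_one.mp ha x h i hi)
          · exact Finset.mem_singleton.mpr (Finset.card_le_one.mp hb x h i hi')
        have := Finset.card_le_card hsub3
        simp at this
        omega
      have hsum3 : 3 ≤ (((((O \ Red k).erase a1).erase b1).erase a2).erase b2).card := hIcard
      have hc1 := Finset.card_le_card hcov
      have hc2 := Finset.card_union_le
        ((NB a1 ∩ ((((O \ Red k).erase a1).erase b1).erase a2).erase b2) ∪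
         (NB b1 ∩ ((((O \ Red k).erase a1).erase b1).erase a2).erase b2))
        ((NB a2 ∩ ((((O \ Red k).erase a1).erase b1).erase a2).erase b2) ∪
         (NB b2 ∩ ((((O \ Red k).erase a1).erase b1).erase a2).erase b2))
      have hFin : 2 ≤ ((NB a1 ∩ ((((O \ Red k).erase a1).erase b1).erase a2).erase b2) ∪
            (NB b1 ∩ ((((O \ Red k).erase a1).erase b1).erase a2).erase b2)).card ∨
          2 ≤ ((NB a2 ∩ ((((O \ Red k).erase a1).erase b1).erase a2).erase b2) ∪
            (NB b2 ∩ ((((O \ Red k).erase a1).erase b1).erase a2).erase b2)).card := by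
        omega
      rcases hFin with hFin | hFin
      · obtain ⟨i, hi, i', hi', hii⟩ := hget _ _ hS1 hS2 hFin
        have hiNB := Finset.mem_inter.mp hi
        have hi'NB := Finset.mem_inter.mp hi'
        have him := (hNBmem a1 i).mp hiNB.1
        have hi'm := (hNBmem b1 i').mp hi'NB.1
        apply hFc
        exact mkFan Gᶜ (f k) i a1 i' b1 a2 b2
          (hspoke i (hTsub (hIsub hiNB.2))) (hspoke a1 ha1)
          (hspoke i' (hTsub (hIsub hi'NB.2))) (hspoke b1 hb1O')
          (hspoke a2 (hTsub ha2T)) (hspoke b2 (hTsub hb2T))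
          ⟨him.2.1, fun h => him.2.2 h.symm⟩
          ⟨hi'm.2.1, fun h => hi'm.2.2 h.symm⟩
          ⟨hna2b2, hb2m.2.2⟩
          hii ((hTne i (hIsub hiNB.2)).2) ((hIne i hiNB.2).1) ((hIne i hiNB.2).2)
          ((hTne i' (hIsub hi'NB.2)).1.symm) hna1b1
          (ha2T'.1.symm) (hb2T'.1.symm)
          ((hIne i' hi'NB.2).1) ((hIne i' hi'NB.2).2)
          (ha2T'.2.symm) (hb2T'.2.symm)
      · obtain ⟨i, hi, i', hi', hii⟩ := hget _ _ hS3 hS4 hFin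
        have hiNB := Finset.mem_inter.mp hi
        have hi'NB := Finset.mem_inter.mp hi'
        have him := (hNBmem a2 i).mp hiNB.1
        have hi'm := (hNBmem b2 i').mp hi'NB.1
        apply hFc
        exact mkFan Gᶜ (f k) i a2 i' b2 a1 b1
          (hspoke i (hTsub (hIsub hiNB.2))) (hspoke a2 (hTsub ha2T))
          (hspoke i' (hTsub (hIsub hi'NB.2))) (hspoke b2 (hTsub hb2T))
          (hspoke a1 ha1) (hspoke b1 hb1O')
          ⟨him.2.1, fun h => him.2.2 h.symm⟩
          ⟨hi'm.2.1, fun h => hi'm.2.2 h.symm⟩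
          ⟨hna1b1, hb1m.2.2⟩
          hii ((hIne i hiNB.2).2) ((hTne i (hIsub hiNB.2)).1) ((hTne i (hIsub hiNB.2)).2)
          ((hIne i' hi'NB.2).1.symm) hna2b2
          (ha2T'.1) (ha2T'.2)
          ((hTne i' (hIsub hi'NB.2)).1) ((hTne i' (hIsub hi'NB.2)).2)
          (hb2T'.1) (hb2T'.2)
  -- final counting
  have hdisj : ∀ i ∈ ({0, 1, 2, 3, 4} : Finset (Fin 6)),
      ∀ j ∈ ({0, 1, 2, 3, 4} : Finset (Fin 6)), i ≠ j → Disjoint (Red i) (Red j) := by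
    intro i hi j hj hij
    rw [Finset.disjoint_left]
    intro v hvi hvj
    have hvim : v ∈ O ∧ G.Adj (f i) v := by
      rw [hRed_def] at hvi; exact Finset.mem_filter.mp hvi
    have hvjm : v ∈ O ∧ G.Adj (f j) v := by
      rw [hRed_def] at hvj; exact Finset.mem_filter.mp hvj
    have hi' : i = 0 ∨ i = 1 ∨ i = 2 ∨ i = 3 ∨ i = 4 := by
      simpa using hi
    have hj' : j = 0 ∨ j = 1 ∨ j = 2 ∨ j = 3 ∨ j = 4 := by
      simpa using hj
    have hij4 : i.val < 4 ∨ j.val < 4 := by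
      rcases hi' with rfl | rfl | rfl | rfl | rfl <;>
        rcases hj' with rfl | rfl | rfl | rfl | rfl <;>
        first
          | exact absurd rfl hij
          | exact Or.inl (by decide)
          | exact Or.inr (by decide)
    rcases hij4 with h4 | h4
    · exact hA v hvim.1 i j hij h4 hvim.2 hvjm.2
    · exact hA v hvim.1 j i hij.symm h4 hvjm.2 hvim.2
  have hcardb : (({0, 1, 2, 3, 4} : Finset (Fin 6)).biUnion Red).card =
      ∑ k ∈ ({0, 1, 2, 3, 4} : Finset (Fin 6)), (Red k).card :=
    Finset.card_biUnion hdisj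
  have hsubO : (({0, 1, 2, 3, 4} : Finset (Fin 6)).biUnion Red) ⊆ O := by
    intro v hv
    obtain ⟨k, _, hk⟩ := Finset.mem_biUnion.mp hv
    rw [hRed_def] at hk
    exact Finset.mem_of_mem_filter v hk
  have h10 : 10 ≤ ∑ k ∈ ({0, 1, 2, 3, 4} : Finset (Fin 6)), (Red k).card := by
    have hs := Finset.card_nsmul_le_sum ({0, 1, 2, 3, 4} : Finset (Fin 6))
      (fun k => (Red k).card) 2 (fun k _ => hRed2 k)
    have hKcard : ({0, 1, 2, 3, 4} : Finset (Fin 6)).card = 5 := by decide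
    rw [hKcard] at hs
    simpa using hs
  have hle := Finset.card_le_card hsubO
  rw [hcardb, hOcard] at hle
  omega

/-- A red-blue coloring of `K₁₄` with no monochromatic `F₃` contains no
monochromatic copy of `K₄ + 2K₁`. -/
theorem no_mono_K4_2K1 (R : SimpleGraph (Fin 14))
    (hred : ¬ ContainsCopy R (fanGraph 3)) (hblue : ¬ ContainsCopy Rᶜ (fanGraph 3)) :
    ¬ ContainsCopy R K4plus2K1 ∧ ¬ ContainsCopy Rᶜ K4plus2K1 := by
  constructor
  · exact master R hred hblue
  · apply master Rᶜ hblue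
    rw [compl_compl]
    exact hred
end
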